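/- arXiv:2205.12513 — 12 statements merged into one kernel-verified Lean document; each statement's English description precedes it below -/
import Mathlib

section
/- For every Λ > 0 the function c_{0,Λ} : ℝ → (0, ∞) is infinitely differentiable (C^∞) on ℝ, and consequently each function c_{i,Λ} for i = 1, …, N is a positive C^∞ function on ℝ. -/
open Filter Real Set

theorem stmt1
    (N : ℕ) (hN : 1 ≤ N)
    (z lam μhat : ℕ → ℝ) (μtilde0 : ℝ)
    (hz0 : z 0 = 0)
    (hzne : ∀ i, 1 ≤ i → i ≤ N → z i ≠ 0)
    (hmix : ∃ i j, 1 ≤ i ∧ i ≤ N ∧ 1 ≤ j ∧ j ≤ N ∧ z i * z j < 0)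
    (hlam : ∀ i, i ≤ N → 0 < lam i)
    (hμt : 0 < μtilde0)
    (hμhat : ∀ i, i ≤ N → 0 < μhat i)
    (μbar : ℕ → ℝ) (hμbar : ∀ i, μbar i = μhat i - lam i / lam 0 * μhat 0)
    (Λ : ℝ) (hΛ : 0 < Λ)
    (c0 : ℝ → ℝ) (hc0pos : ∀ φ, 0 < c0 φ)
    (hc0eq : ∀ φ : ℝ, Real.log (c0 φ)
        + Λ * lam 0 * ∑ j ∈ Finset.range (N+1),
            lam j * (c0 φ) ^ (lam j / lam 0) * Real.exp (μbar j - z j * φ)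
      = Λ * lam 0 * μtilde0 + μhat 0)
    :
    (∀ n : ℕ, ContDiff ℝ n c0) ∧
    (∀ i, 1 ≤ i → i ≤ N →
      (∀ φ : ℝ, 0 < (c0 φ) ^ (lam i / lam 0) * Real.exp (μbar i - z i * φ)) ∧
      (∀ n : ℕ, ContDiff ℝ n (fun φ : ℝ => (c0 φ) ^ (lam i / lam 0) * Real.exp (μbar i - z i * φ)))) := by
  have hn1 : ((⊤ : ℕ∞) : WithTop ℕ∞) ≠ 0 := by
    simp
  set K : ℝ := Λ * lam 0 with hK
  have hKpos : 0 < K := mul_pos hΛ (hlam 0 (Nat.zero_le N))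
  set M : ℝ := Λ * lam 0 * μtilde0 + μhat 0 with hM
  set g : ℝ × ℝ → ℝ := fun p => Real.log p.2
      + K * ∑ j ∈ Finset.range (N+1),
          lam j * p.2 ^ (lam j / lam 0) * Real.exp (μbar j - z j * p.1) with hg_def
  have hlam' : ∀ j ∈ Finset.range (N+1), 0 < lam j := fun j hj =>
    hlam j (Nat.lt_succ_iff.mp (Finset.mem_range.mp hj))
  have haj : ∀ j ∈ Finset.range (N+1), 0 < lam j / lam 0 := fun j hj =>
    div_pos (hlam' j hj) (hlam 0 (Nat.zero_le N))
  -- smoothness of g where second coordinate is positive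
  have hg : ∀ p : ℝ × ℝ, 0 < p.2 → ContDiffAt ℝ ((⊤ : ℕ∞) : WithTop ℕ∞) g p := by
    intro p hp
    apply ContDiffAt.add
    · exact (Real.contDiffAt_log.mpr hp.ne').comp p contDiffAt_snd
    · apply ContDiffAt.mul contDiffAt_const
      apply ContDiffAt.sum
      intro j hj
      exact ((contDiffAt_const.mul (contDiffAt_snd.rpow_const_of_ne hp.ne')).mul
        ((contDiffAt_const.sub (contDiffAt_const.mul contDiffAt_fst)).exp))
  -- g satisfied by c0
  have hgc0 : ∀ φ : ℝ, g (φ, c0 φ) = M := fun φ => hc0eq φ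
  -- strict monotonicity of g in the second variable
  have hmono : ∀ φ : ℝ, StrictMonoOn (fun t => g (φ, t)) (Set.Ioi (0:ℝ)) := by
    intro φ s hs t ht hst
    simp only [g]
    apply add_lt_add_of_lt_of_le (Real.log_lt_log hs hst)
    apply mul_le_mul_of_nonneg_left _ hKpos.le
    apply Finset.sum_le_sum
    intro j hj
    apply mul_le_mul_of_nonneg_right _ (Real.exp_pos _).le
    exact mul_le_mul_of_nonneg_left
      (Real.rpow_le_rpow (le_of_lt hs) hst.le (haj j hj).le) (hlam' j hj).le
  -- positivity of the partial derivative in the second variable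
  have hpartial : ∀ p : ℝ × ℝ, (hp : 0 < p.2) →
      0 < (fderiv ℝ g p) (0, 1) := by
    intro p hp
    have hdiff : HasFDerivAt g (fderiv ℝ g p) p :=
      ((hg p hp).differentiableAt hn1).hasFDerivAt
    set D : ℝ := p.2⁻¹ + K * ∑ j ∈ Finset.range (N+1),
        lam j * (lam j / lam 0 * p.2 ^ (lam j / lam 0 - 1)) * Real.exp (μbar j - z j * p.1)
      with hD
    have hh : HasDerivAt (fun t : ℝ => g (p.1, t)) D p.2 := by
      show HasDerivAt (fun t : ℝ => Real.log t + K * ∑ j ∈ Finset.range (N+1),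
          lam j * t ^ (lam j / lam 0) * Real.exp (μbar j - z j * p.1)) D p.2
      apply HasDerivAt.add (Real.hasDerivAt_log hp.ne')
      apply HasDerivAt.const_mul
      apply HasDerivAt.fun_sum
      intro j hj
      exact ((Real.hasDerivAt_rpow_const (Or.inl hp.ne')).const_mul (lam j)).mul_const _
    have hcurve : HasDerivAt (fun t : ℝ => (p.1, t)) ((0:ℝ), (1:ℝ)) p.2 :=
      HasDerivAt.prodMk (hasDerivAt_const p.2 p.1) (hasDerivAt_id p.2)
    have hcomp : HasDerivAt (fun t : ℝ => g (p.1, t)) ((fderiv ℝ g p) (0, 1)) p.2 :=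
      by have := HasFDerivAt.comp_hasDerivAt (l := g) p.2 hdiff hcurve; exact this
    have hDeq : (fderiv ℝ g p) (0, 1) = D := hcomp.unique hh
    rw [hDeq]
    apply add_pos_of_pos_of_nonneg (inv_pos.mpr hp)
    apply mul_nonneg hKpos.le
    apply Finset.sum_nonneg
    intro j hj
    exact mul_nonneg (mul_nonneg (hlam' j hj).le
      (mul_nonneg (haj j hj).le (Real.rpow_pos_of_pos hp _).le)) (Real.exp_pos _).le
  -- main claim: c0 is C^∞ at every point
  have hmain : ∀ φ0 : ℝ, ContDiffAt ℝ ((⊤ : ℕ∞) : WithTop ℕ∞) c0 φ0 := by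
    intro φ0
    set p0 : ℝ × ℝ := (φ0, c0 φ0) with hp0
    have hp0pos : 0 < p0.2 := hc0pos φ0
    set L : ℝ × ℝ →L[ℝ] ℝ := fderiv ℝ g p0 with hL
    have hLderiv : HasFDerivAt g L p0 := ((hg p0 hp0pos).differentiableAt hn1).hasFDerivAt
    set b : ℝ := L (0, 1) with hb
    have hbpos : 0 < b := hpartial p0 hp0pos
    set Φ : ℝ × ℝ → ℝ × ℝ := fun p => (p.1, g p) with hΦdef
    set A : ℝ × ℝ →L[ℝ] ℝ × ℝ := (ContinuousLinearMap.fst ℝ ℝ ℝ).prod L with hA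
    set T : ℝ × ℝ →L[ℝ] ℝ × ℝ := (ContinuousLinearMap.fst ℝ ℝ ℝ).prod
        (b⁻¹ • ((ContinuousLinearMap.snd ℝ ℝ ℝ) -
          L.comp ((ContinuousLinearMap.fst ℝ ℝ ℝ).prod 0))) with hT
    have hLlin : ∀ u v : ℝ, L (u, v) = L (u, 0) + v * b := by
      intro u v
      have : (u, v) = (u, (0:ℝ)) + v • ((0:ℝ), (1:ℝ)) := by
        simp [Prod.ext_iff]
      rw [this, map_add, map_smul]
      simp [hb, smul_eq_mul]
    have hleft : Function.LeftInverse T A := by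
      intro x
      obtain ⟨u, v⟩ := x
      simp only [hA, hT, ContinuousLinearMap.prod_apply, ContinuousLinearMap.coe_fst',
        ContinuousLinearMap.smul_apply, ContinuousLinearMap.sub_apply,
        ContinuousLinearMap.coe_snd', ContinuousLinearMap.comp_apply,
        ContinuousLinearMap.zero_apply]
      refine Prod.ext rfl ?_
      simp only [hLlin u v]
      simp only [smul_eq_mul]
      field_simp
      ring
    have hright : Function.RightInverse T A := by
      intro y
      obtain ⟨u, w⟩ := y
      simp only [hA, hT, ContinuousLinearMap.prod_apply, ContinuousLinearMap.coe_fst',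
        ContinuousLinearMap.smul_apply, ContinuousLinearMap.sub_apply,
        ContinuousLinearMap.coe_snd', ContinuousLinearMap.comp_apply,
        ContinuousLinearMap.zero_apply]
      refine Prod.ext rfl ?_
      rw [hLlin u _]
      simp only [smul_eq_mul]
      field_simp
      ring
    set e : (ℝ × ℝ) ≃L[ℝ] (ℝ × ℝ) := ContinuousLinearEquiv.equivOfInverse A T hleft hright
      with he
    have hecoe : (e : ℝ × ℝ →L[ℝ] ℝ × ℝ) = A := rfl
    have hΦderiv : HasFDerivAt Φ (e : ℝ × ℝ →L[ℝ] ℝ × ℝ) p0 := by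
      rw [hecoe, hA]
      exact HasFDerivAt.prodMk (hasFDerivAt_fst) hLderiv
    have hΦsmooth : ContDiffAt ℝ ((⊤ : ℕ∞) : WithTop ℕ∞) Φ p0 :=
      ContDiffAt.prodMk contDiffAt_fst (hg p0 hp0pos)
    set inv : ℝ × ℝ → ℝ × ℝ := hΦsmooth.localInverse hΦderiv hn1 with hinv
    have hs : HasStrictFDerivAt Φ (e : ℝ × ℝ →L[ℝ] ℝ × ℝ) p0 :=
      hΦsmooth.hasStrictFDerivAt' hΦderiv hn1
    have hinv_eq : inv = HasStrictFDerivAt.localInverse Φ e p0 hs := rfl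
    have hinvsmooth : ContDiffAt ℝ ((⊤ : ℕ∞) : WithTop ℕ∞) inv (Φ p0) :=
      hΦsmooth.to_localInverse hΦderiv hn1
    have happ : inv (Φ p0) = p0 := hΦsmooth.localInverse_apply_image hΦderiv hn1
    have hri : ∀ᶠ y in nhds (Φ p0), Φ (inv y) = y := by
      rw [hinv_eq]; exact hs.eventually_right_inverse
    have hcont : ContinuousAt inv (Φ p0) := by
      rw [hinv_eq]; exact hs.localInverse_continuousAt
    have hΦp0 : Φ p0 = (φ0, M) := by
      simp only [Φ, p0]
      exact Prod.ext rfl (hgc0 φ0)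
    -- the curve φ ↦ (φ, M) tends to Φ p0
    have hcurve : Tendsto (fun φ : ℝ => (φ, M)) (nhds φ0) (nhds (Φ p0)) := by
      rw [hΦp0]
      exact (continuous_id.prodMk continuous_const).tendsto φ0
    have hri' : ∀ᶠ φ in nhds φ0, Φ (inv (φ, M)) = (φ, M) := hcurve.eventually hri
    have hcont' : ContinuousAt inv (φ0, M) := hΦp0 ▸ hcont
    have happ' : inv (φ0, M) = p0 := hΦp0 ▸ happ
    have hpos' : ∀ᶠ φ in nhds φ0, 0 < (inv (φ, M)).2 := by
      have hin : ContinuousAt (fun φ : ℝ => ((φ, M) : ℝ × ℝ)) φ0 :=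
        (continuous_id.prodMk continuous_const).continuousAt
      have hc1 : ContinuousAt (fun φ : ℝ => inv (φ, M)) φ0 := ContinuousAt.comp hcont' hin
      have h2 : ContinuousAt (fun φ : ℝ => (inv (φ, M)).2) φ0 := hc1.snd
      apply h2.eventually
      show ∀ᶠ y in nhds ((inv (φ0, M)).2), 0 < y
      rw [happ']
      exact eventually_gt_nhds (hc0pos φ0)
    have hEq : (fun φ : ℝ => (inv (φ, M)).2) =ᶠ[nhds φ0] c0 := by
      filter_upwards [hri', hpos'] with φ h1 h2
      have hfst : (inv (φ, M)).1 = φ := congrArg Prod.fst h1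
      have hsnd : g (inv (φ, M)) = M := congrArg Prod.snd h1
      have hpair : inv (φ, M) = (φ, (inv (φ, M)).2) := Prod.ext hfst rfl
      have hgval : g (φ, (inv (φ, M)).2) = M := by rw [← hpair]; exact hsnd
      exact ((hmono φ).injOn (Set.mem_Ioi.mpr h2) (Set.mem_Ioi.mpr (hc0pos φ))
        (show g (φ, (inv (φ, M)).2) = g (φ, c0 φ) by rw [hgval, hgc0 φ]))
    have hsmooth2 : ContDiffAt ℝ ((⊤ : ℕ∞) : WithTop ℕ∞) (fun φ : ℝ => (inv (φ, M)).2) φ0 := by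
      have hinv' : ContDiffAt ℝ ((⊤ : ℕ∞) : WithTop ℕ∞) inv (φ0, M) := hΦp0 ▸ hinvsmooth
      have hc1 : ContDiffAt ℝ ((⊤ : ℕ∞) : WithTop ℕ∞) (fun φ : ℝ => inv (φ, M)) φ0 :=
        hinv'.comp φ0 (ContDiffAt.prodMk contDiffAt_id contDiffAt_const)
      exact hc1.snd
    exact hsmooth2.congr_of_eventuallyEq hEq.symm
  have hc0smooth : ∀ n : ℕ, ContDiff ℝ n c0 := by
    intro n
    refine contDiff_iff_contDiffAt.mpr fun φ => (hmain φ).of_le ?_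
    exact_mod_cast (le_top : ((n:ℕ∞)) ≤ ⊤)
  refine ⟨hc0smooth, fun i hi1 hiN => ⟨fun φ => mul_pos (Real.rpow_pos_of_pos (hc0pos φ) _)
    (Real.exp_pos _), fun n => ?_⟩⟩
  apply contDiff_iff_contDiffAt.mpr
  intro φ
  have h1 : ContDiffAt ℝ n (fun φ : ℝ => (c0 φ) ^ (lam i / lam 0)) φ :=
    ((hc0smooth n).contDiffAt).rpow_const_of_ne (hc0pos φ).ne'
  exact h1.mul ((contDiffAt_const.sub (contDiffAt_const.mul contDiffAt_id)).exp)
end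

section
/- Fix Λ > 0 and φ ∈ ℝ. Positive reals c_0, c_1, …, c_N satisfy the system ln c_i + z_i φ + Λ λ_i ∑_{j=0}^N λ_j c_j = μ_i for all i = 0, 1, …, N if and only if c_i = c_0^{λ_i/λ_0} exp(μ̄_i − z_i φ) for i = 1, …, N and ln c_0 + Λ λ_0 ∑_{j=0}^N λ_j c_0^{λ_j/λ_0} exp(μ̄_j − z_j φ) = μ_0. In particular, this system has a unique positive solution (c_{0,Λ}(φ), c_{1,Λ}(φ), …, c_{N,Λ}(φ)). -/
open Filter Real Set

theorem stmt2
    (N : ℕ) (hN : 1 ≤ N)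
    (z lam μhat : ℕ → ℝ) (μtilde0 : ℝ)
    (hz0 : z 0 = 0)
    (hzne : ∀ i, 1 ≤ i → i ≤ N → z i ≠ 0)
    (hmix : ∃ i j, 1 ≤ i ∧ i ≤ N ∧ 1 ≤ j ∧ j ≤ N ∧ z i * z j < 0)
    (hlam : ∀ i, i ≤ N → 0 < lam i)
    (hμt : 0 < μtilde0)
    (hμhat : ∀ i, i ≤ N → 0 < μhat i)
    (μbar : ℕ → ℝ) (hμbar : ∀ i, μbar i = μhat i - lam i / lam 0 * μhat 0)
    (Λ : ℝ) (hΛ : 0 < Λ) (φ : ℝ) :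
    (∀ c : ℕ → ℝ, (∀ i, i ≤ N → 0 < c i) →
      ((∀ i, i ≤ N → Real.log (c i) + z i * φ + Λ * lam i * ∑ j ∈ Finset.range (N+1), lam j * c j = Λ * lam i * μtilde0 + μhat i) ↔
       ((∀ i, 1 ≤ i → i ≤ N → c i = (c 0) ^ (lam i / lam 0) * Real.exp (μbar i - z i * φ)) ∧ Real.log (c 0) + Λ * lam 0 * ∑ j ∈ Finset.range (N+1), lam j * (c 0) ^ (lam j / lam 0) * Real.exp (μbar j - z j * φ) = Λ * lam 0 * μtilde0 + μhat 0))) ∧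
    (∃ c : ℕ → ℝ, (∀ i, i ≤ N → 0 < c i) ∧ (∀ i, i ≤ N → Real.log (c i) + z i * φ + Λ * lam i * ∑ j ∈ Finset.range (N+1), lam j * c j = Λ * lam i * μtilde0 + μhat i)) ∧
    (∀ c c' : ℕ → ℝ, (∀ i, i ≤ N → 0 < c i) → (∀ i, i ≤ N → 0 < c' i) →
      (∀ i, i ≤ N → Real.log (c i) + z i * φ + Λ * lam i * ∑ j ∈ Finset.range (N+1), lam j * c j = Λ * lam i * μtilde0 + μhat i) → (∀ i, i ≤ N → Real.log (c' i) + z i * φ + Λ * lam i * ∑ j ∈ Finset.range (N+1), lam j * c' j = Λ * lam i * μtilde0 + μhat i) →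
      ∀ i, i ≤ N → c i = c' i) := by
  have hl0 : 0 < lam 0 := hlam 0 (Nat.zero_le N)
  have hl0' : lam 0 ≠ 0 := ne_of_gt hl0
  set μ0 : ℝ := Λ * lam 0 * μtilde0 + μhat 0 with hμ0
  set g : ℝ → ℝ := fun x => Real.log x +
      Λ * lam 0 * ∑ j ∈ Finset.range (N+1),
        lam j * x ^ (lam j / lam 0) * Real.exp (μbar j - z j * φ) with hgdef
  -- the key equivalence
  have key : ∀ c : ℕ → ℝ, (∀ i, i ≤ N → 0 < c i) →
      ((∀ i, i ≤ N → Real.log (c i) + z i * φ +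
          Λ * lam i * ∑ j ∈ Finset.range (N+1), lam j * c j
          = Λ * lam i * μtilde0 + μhat i) ↔
       ((∀ i, 1 ≤ i → i ≤ N → c i = (c 0) ^ (lam i / lam 0) * Real.exp (μbar i - z i * φ)) ∧
        g (c 0) = μ0)) := by
    intro c hc
    have hc0 : 0 < c 0 := hc 0 (Nat.zero_le N)
    have hform0 : c 0 = (c 0) ^ (lam 0 / lam 0) * Real.exp (μbar 0 - z 0 * φ) := by
      rw [div_self hl0', Real.rpow_one, hμbar, hz0, div_self hl0']
      simp
    constructor
    · intro hsys
      have h0 := hsys 0 (Nat.zero_le N)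
      rw [hz0] at h0
      have hform : ∀ i, 1 ≤ i → i ≤ N →
          c i = (c 0) ^ (lam i / lam 0) * Real.exp (μbar i - z i * φ) := by
        intro i h1 hiN
        have hi := hsys i hiN
        have hS : Λ * lam i * (∑ j ∈ Finset.range (N+1), lam j * c j)
            = lam i / lam 0 * (Λ * lam 0 * (∑ j ∈ Finset.range (N+1), lam j * c j)) := by
          field_simp
        have hμS : Λ * lam i * μtilde0 = lam i / lam 0 * (Λ * lam 0 * μtilde0) := by
          field_simp
        rw [hS, hμS] at hi
        have hlog : Real.log (c i)
            = lam i / lam 0 * Real.log (c 0) + (μbar i - z i * φ) := by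
          rw [hμbar]
          linear_combination hi - (lam i / lam 0) * h0
        rw [← Real.exp_log (hc i hiN), hlog, Real.exp_add,
          Real.rpow_def_of_pos hc0, mul_comm (Real.log (c 0)) (lam i / lam 0)]
      have hsumeq : (∑ j ∈ Finset.range (N+1), lam j * c j)
          = ∑ j ∈ Finset.range (N+1),
              lam j * (c 0) ^ (lam j / lam 0) * Real.exp (μbar j - z j * φ) := by
        refine Finset.sum_congr rfl ?_
        intro j hj
        rw [Finset.mem_range, Nat.lt_succ_iff] at hj
        rcases Nat.eq_zero_or_pos j with h | h
        · subst h; rw [mul_assoc, ← hform0]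
        · rw [mul_assoc, ← hform j h hj]
      refine ⟨hform, ?_⟩
      simp only [hgdef]
      rw [← hsumeq]
      linarith [h0]
    · rintro ⟨hform, h0eq⟩
      have hsumeq : (∑ j ∈ Finset.range (N+1), lam j * c j)
          = ∑ j ∈ Finset.range (N+1),
              lam j * (c 0) ^ (lam j / lam 0) * Real.exp (μbar j - z j * φ) := by
        refine Finset.sum_congr rfl ?_
        intro j hj
        rw [Finset.mem_range, Nat.lt_succ_iff] at hj
        rcases Nat.eq_zero_or_pos j with h | h
        · subst h; rw [mul_assoc, ← hform0]
        · rw [mul_assoc, ← hform j h hj]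
      simp only [hgdef] at h0eq
      rw [← hsumeq] at h0eq
      intro i hiN
      have hlog : Real.log (c i)
          = lam i / lam 0 * Real.log (c 0) + (μbar i - z i * φ) := by
        rcases Nat.eq_zero_or_pos i with h | h
        · subst h
          rw [div_self hl0', hμbar, hz0, div_self hl0']
          ring
        · rw [hform i h hiN, Real.log_mul (by positivity) (Real.exp_ne_zero _),
            Real.log_rpow hc0, Real.log_exp]
      have hS : Λ * lam i * (∑ j ∈ Finset.range (N+1), lam j * c j)
          = lam i / lam 0 * (Λ * lam 0 * (∑ j ∈ Finset.range (N+1), lam j * c j)) := by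
        field_simp
      have hμS : Λ * lam i * μtilde0 = lam i / lam 0 * (Λ * lam 0 * μtilde0) := by
        field_simp
      rw [hμ0] at h0eq
      rw [hlog, hμbar, hS, hμS]
      linear_combination (lam i / lam 0) * h0eq
  -- positivity and monotonicity facts about g
  have hsum_nonneg : ∀ x : ℝ, 0 < x → 0 ≤ ∑ j ∈ Finset.range (N+1),
      lam j * x ^ (lam j / lam 0) * Real.exp (μbar j - z j * φ) := by
    intro x hx
    refine Finset.sum_nonneg ?_
    intro j hj
    rw [Finset.mem_range, Nat.lt_succ_iff] at hj
    have := hlam j hj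
    positivity
  have hmono : StrictMonoOn g (Set.Ioi (0:ℝ)) := by
    intro x hx y hy hxy
    simp only [hgdef]
    have hlog : Real.log x < Real.log y := Real.log_lt_log hx hxy
    have hsum : (∑ j ∈ Finset.range (N+1),
          lam j * x ^ (lam j / lam 0) * Real.exp (μbar j - z j * φ))
        ≤ ∑ j ∈ Finset.range (N+1),
          lam j * y ^ (lam j / lam 0) * Real.exp (μbar j - z j * φ) := by
      refine Finset.sum_le_sum ?_
      intro j hj
      rw [Finset.mem_range, Nat.lt_succ_iff] at hj
      have hlj := hlam j hj
      have hp : 0 ≤ lam j / lam 0 := le_of_lt (div_pos hlj hl0)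
      have hr : x ^ (lam j / lam 0) ≤ y ^ (lam j / lam 0) :=
        Real.rpow_le_rpow (le_of_lt hx) (le_of_lt hxy) hp
      have he : (0:ℝ) < Real.exp (μbar j - z j * φ) := Real.exp_pos _
      exact mul_le_mul_of_nonneg_right
        (mul_le_mul_of_nonneg_left hr (le_of_lt hlj)) (le_of_lt he)
    have hc : (0:ℝ) ≤ Λ * lam 0 := by positivity
    linarith [mul_le_mul_of_nonneg_left hsum hc]
  -- continuity of g on Ioi 0
  have hcont : ContinuousOn g (Set.Ioi (0:ℝ)) := by
    simp only [hgdef]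
    refine ContinuousOn.add (Real.continuousOn_log.mono ?_) ?_
    · intro x hx; exact ne_of_gt hx
    refine ContinuousOn.mul continuousOn_const ?_
    refine continuousOn_finset_sum _ ?_
    intro j hj
    refine ContinuousOn.mul (ContinuousOn.mul continuousOn_const ?_) continuousOn_const
    intro x hx
    exact (Real.continuousAt_rpow_const x _ (Or.inl (ne_of_gt hx))).continuousWithinAt
  -- find a positive root of g = μ0
  have hroot : ∃ x : ℝ, 0 < x ∧ g x = μ0 := by
    set K : ℝ := Λ * lam 0 * ∑ j ∈ Finset.range (N+1),
        lam j * Real.exp (μbar j - z j * φ) with hK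
    set a : ℝ := min 1 (Real.exp (μ0 - K)) with ha
    set b : ℝ := max 1 (Real.exp μ0) with hb
    have ha0 : 0 < a := lt_min one_pos (Real.exp_pos _)
    have ha1 : a ≤ 1 := min_le_left _ _
    have hb1 : (1:ℝ) ≤ b := le_max_left _ _
    have hab : a ≤ b := le_trans ha1 hb1
    have hga : g a ≤ μ0 := by
      have hsum : (∑ j ∈ Finset.range (N+1),
            lam j * a ^ (lam j / lam 0) * Real.exp (μbar j - z j * φ))
          ≤ ∑ j ∈ Finset.range (N+1), lam j * Real.exp (μbar j - z j * φ) := by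
        refine Finset.sum_le_sum ?_
        intro j hj
        rw [Finset.mem_range, Nat.lt_succ_iff] at hj
        have hlj := hlam j hj
        have hp : 0 ≤ lam j / lam 0 := le_of_lt (div_pos hlj hl0)
        have hr : a ^ (lam j / lam 0) ≤ 1 :=
          Real.rpow_le_one (le_of_lt ha0) ha1 hp
        have he : (0:ℝ) < Real.exp (μbar j - z j * φ) := Real.exp_pos _
        have := mul_le_mul_of_nonneg_right
          (mul_le_mul_of_nonneg_left hr (le_of_lt hlj)) (le_of_lt he)
        nlinarith
      have hcoef : (0:ℝ) ≤ Λ * lam 0 := by positivity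
      have h1 : Λ * lam 0 * (∑ j ∈ Finset.range (N+1),
          lam j * a ^ (lam j / lam 0) * Real.exp (μbar j - z j * φ)) ≤ K := by
        rw [hK]; exact mul_le_mul_of_nonneg_left hsum hcoef
      have h2 : Real.log a ≤ μ0 - K := by
        calc Real.log a ≤ Real.log (Real.exp (μ0 - K)) :=
              Real.log_le_log ha0 (min_le_right _ _)
          _ = μ0 - K := Real.log_exp _
      simp only [hgdef]
      linarith
    have hgb : μ0 ≤ g b := by
      have h2 : μ0 ≤ Real.log b := by
        calc μ0 = Real.log (Real.exp μ0) := (Real.log_exp _).symm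
          _ ≤ Real.log b := Real.log_le_log (Real.exp_pos _) (le_max_right _ _)
      have h3 := hsum_nonneg b (lt_of_lt_of_le one_pos hb1)
      have hcoef : (0:ℝ) ≤ Λ * lam 0 := by positivity
      simp only [hgdef]
      nlinarith
    have hsub : Set.Icc a b ⊆ Set.Ioi (0:ℝ) := by
      intro x hx; exact lt_of_lt_of_le ha0 hx.1
    have := intermediate_value_Icc hab (hcont.mono hsub)
    obtain ⟨x, hxmem, hgx⟩ := this ⟨hga, hgb⟩
    exact ⟨x, lt_of_lt_of_le ha0 hxmem.1, hgx⟩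
  obtain ⟨x0, hx0, hgx0⟩ := hroot
  refine ⟨key, ?_, ?_⟩
  · -- existence
    refine ⟨fun i => x0 ^ (lam i / lam 0) * Real.exp (μbar i - z i * φ), ?_, ?_⟩
    · intro i hiN
      positivity
    · set c : ℕ → ℝ := fun i => x0 ^ (lam i / lam 0) * Real.exp (μbar i - z i * φ) with hcdef
      have hcpos : ∀ i, i ≤ N → 0 < c i := by intro i hiN; positivity
      have hc0 : c 0 = x0 := by
        simp only [hcdef, div_self hl0', Real.rpow_one, hμbar, hz0, div_self hl0']
        simp
      refine (key c hcpos).2 ⟨?_, ?_⟩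
      · intro i h1 hiN; rw [hc0]
      · rw [hc0, hgx0]
  · -- uniqueness
    intro c c' hc hc' hsys hsys'
    obtain ⟨hf, hg0⟩ := (key c hc).1 hsys
    obtain ⟨hf', hg0'⟩ := (key c' hc').1 hsys'
    have hc00 : c 0 = c' 0 := by
      refine hmono.injOn (hc 0 (Nat.zero_le N)) (hc' 0 (Nat.zero_le N)) ?_
      rw [hg0, hg0']
    intro i hiN
    rcases Nat.eq_zero_or_pos i with h | h
    · subst h; exact hc00
    · rw [hf i h hiN, hf' i h hiN, hc00]
end

section
/- For every Λ > 0, the function f_Λ(φ) = ∑_{i=1}^N z_i c_{i,Λ}(φ) is strictly decreasing on ℝ. -/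
open Filter Real Set

lemma mul_exp_sub_one_nonneg (x : ℝ) : 0 ≤ x * (Real.exp x - 1) := by
  rcases le_or_gt 0 x with h | h
  · have h1 : 1 ≤ Real.exp x := Real.one_le_exp h
    nlinarith
  · have h1 : Real.exp x < 1 := by
      calc Real.exp x < Real.exp 0 := Real.exp_lt_exp.mpr h
        _ = 1 := Real.exp_zero
    nlinarith

lemma mul_exp_sub_one_pos {x : ℝ} (hx : x ≠ 0) : 0 < x * (Real.exp x - 1) := by
  rcases lt_or_gt_of_ne hx with h | h
  · have h1 : Real.exp x < 1 := by
      calc Real.exp x < Real.exp 0 := Real.exp_lt_exp.mpr h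
        _ = 1 := Real.exp_zero
    nlinarith
  · have h1 : 1 < Real.exp x := by
      calc (1:ℝ) = Real.exp 0 := Real.exp_zero.symm
        _ < Real.exp x := Real.exp_lt_exp.mpr h
    nlinarith

theorem stmt3
    (N : ℕ) (hN : 1 ≤ N)
    (z lam μhat : ℕ → ℝ) (μtilde0 : ℝ)
    (hz0 : z 0 = 0)
    (hzne : ∀ i, 1 ≤ i → i ≤ N → z i ≠ 0)
    (hmix : ∃ i j, 1 ≤ i ∧ i ≤ N ∧ 1 ≤ j ∧ j ≤ N ∧ z i * z j < 0)
    (hlam : ∀ i, i ≤ N → 0 < lam i)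
    (hμt : 0 < μtilde0)
    (hμhat : ∀ i, i ≤ N → 0 < μhat i)
    (μbar : ℕ → ℝ) (hμbar : ∀ i, μbar i = μhat i - lam i / lam 0 * μhat 0)
    (Λ : ℝ) (hΛ : 0 < Λ)
    (c0 : ℝ → ℝ) (hc0pos : ∀ φ, 0 < c0 φ)
    (hc0eq : ∀ φ : ℝ, Real.log (c0 φ)
        + Λ * lam 0 * ∑ j ∈ Finset.range (N+1),
            lam j * (c0 φ) ^ (lam j / lam 0) * Real.exp (μbar j - z j * φ)
      = Λ * lam 0 * μtilde0 + μhat 0)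
    :
    StrictAnti (fun φ : ℝ => ∑ i ∈ Finset.Icc 1 N, z i * ((c0 φ) ^ (lam i / lam 0) * Real.exp (μbar i - z i * φ))) := by
  have hlam0 : 0 < lam 0 := hlam 0 (Nat.zero_le N)
  have hz1 : z 1 ≠ 0 := hzne 1 le_rfl hN
  intro φ1 φ2 hφ
  dsimp only
  set Δφ : ℝ := φ2 - φ1 with hΔφdef
  have hΔφ : 0 < Δφ := sub_pos.mpr hφ
  set Δt : ℝ := Real.log (c0 φ2) - Real.log (c0 φ1) with hΔtdef
  set c : ℕ → ℝ := fun j => (c0 φ1) ^ (lam j / lam 0) * Real.exp (μbar j - z j * φ1) with hcdef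
  set α : ℕ → ℝ := fun j => lam j / lam 0 * Δt - z j * Δφ with hαdef
  have hcpos : ∀ j, 0 < c j := fun j =>
    mul_pos (Real.rpow_pos_of_pos (hc0pos φ1) _) (Real.exp_pos _)
  have hkey : ∀ j, (c0 φ2) ^ (lam j / lam 0) * Real.exp (μbar j - z j * φ2)
      = c j * Real.exp (α j) := by
    intro j
    simp only [hcdef, hαdef]
    rw [Real.rpow_def_of_pos (hc0pos φ2), Real.rpow_def_of_pos (hc0pos φ1),
      ← Real.exp_add, mul_assoc, ← Real.exp_add, ← Real.exp_add]
    congr 1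
    simp only [hΔtdef, hΔφdef]
    ring
  -- energy equation difference
  have h1 := hc0eq φ1
  have h2 := hc0eq φ2
  have hE : Δt + Λ * lam 0 * ∑ j ∈ Finset.range (N+1),
      lam j * c j * (Real.exp (α j) - 1) = 0 := by
    have hsplit : ∑ j ∈ Finset.range (N+1), lam j * c j * (Real.exp (α j) - 1)
        = (∑ j ∈ Finset.range (N+1),
            lam j * (c0 φ2) ^ (lam j / lam 0) * Real.exp (μbar j - z j * φ2))
          - ∑ j ∈ Finset.range (N+1),
            lam j * (c0 φ1) ^ (lam j / lam 0) * Real.exp (μbar j - z j * φ1) := by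
      rw [← Finset.sum_sub_distrib]
      refine Finset.sum_congr rfl fun j _ => ?_
      rw [mul_assoc (lam j) ((c0 φ2) ^ (lam j / lam 0)), hkey j]
      simp only [hcdef]
      ring
    rw [hsplit, mul_sub, hΔtdef]
    linarith [h1, h2]
  -- rewrite the goal
  rw [← sub_neg, ← Finset.sum_sub_distrib]
  have hgoal : ∀ i ∈ Finset.Icc 1 N,
      z i * ((c0 φ2) ^ (lam i / lam 0) * Real.exp (μbar i - z i * φ2))
      - z i * ((c0 φ1) ^ (lam i / lam 0) * Real.exp (μbar i - z i * φ1))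
      = z i * c i * (Real.exp (α i) - 1) := by
    intro i _
    rw [hkey i]
    simp only [hcdef]
    ring
  rw [Finset.sum_congr rfl hgoal]
  have hext : ∑ j ∈ Finset.range (N+1), z j * c j * (Real.exp (α j) - 1)
      = ∑ j ∈ Finset.Icc 1 N, z j * c j * (Real.exp (α j) - 1) := by
    have hins : Finset.range (N+1) = insert 0 (Finset.Icc 1 N) := by
      ext x
      simp [Nat.lt_succ_iff]
      omega
    rw [hins, Finset.sum_insert (by simp)]
    simp [hz0]
  rw [← hext]
  set S : ℝ := ∑ j ∈ Finset.range (N+1), z j * c j * (Real.exp (α j) - 1) with hSdef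
  set P : ℝ := ∑ j ∈ Finset.range (N+1), α j * (c j * (Real.exp (α j) - 1)) with hPdef
  set L : ℝ := ∑ j ∈ Finset.range (N+1), lam j * c j * (Real.exp (α j) - 1) with hLdef
  -- main algebraic identity
  have hA : lam 0 * (Δφ * S) = Δt * L - lam 0 * P := by
    rw [hSdef, hLdef, hPdef, Finset.mul_sum, Finset.mul_sum, Finset.mul_sum, Finset.mul_sum,
      ← Finset.sum_sub_distrib]
    refine Finset.sum_congr rfl fun j _ => ?_
    simp only [hαdef]
    field_simp
    ring
  have hL : Λ * lam 0 * L = -Δt := by linarith [hE]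
  have hfin : Λ * lam 0 * (lam 0 * (Δφ * S)) = -(Δt * Δt) - Λ * (lam 0 * lam 0) * P := by
    calc Λ * lam 0 * (lam 0 * (Δφ * S)) = Λ * lam 0 * (Δt * L - lam 0 * P) := by rw [hA]
      _ = Δt * (Λ * lam 0 * L) - Λ * (lam 0 * lam 0) * P := by ring
      _ = Δt * (-Δt) - Λ * (lam 0 * lam 0) * P := by rw [hL]
      _ = -(Δt * Δt) - Λ * (lam 0 * lam 0) * P := by ring
  have hPterm : ∀ j ∈ Finset.range (N+1), 0 ≤ α j * (c j * (Real.exp (α j) - 1)) := by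
    intro j _
    rw [mul_left_comm]
    exact mul_nonneg (hcpos j).le (mul_exp_sub_one_nonneg (α j))
  have hP : 0 ≤ P := Finset.sum_nonneg hPterm
  have hneg : Λ * lam 0 * (lam 0 * (Δφ * S)) < 0 := by
    by_cases hΔt : Δt = 0
    · -- then α 1 ≠ 0 gives P > 0
      have h1mem : (1:ℕ) ∈ Finset.range (N+1) := by
        simp
        omega
      have hα1 : α 1 ≠ 0 := by
        have he : α 1 = -(z 1 * Δφ) := by
          simp only [hαdef]
          rw [hΔt]
          ring
        rw [he, neg_ne_zero]
        exact mul_ne_zero hz1 hΔφ.ne'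
      have hPpos : 0 < P := by
        refine Finset.sum_pos' hPterm ⟨1, h1mem, ?_⟩
        rw [mul_left_comm]
        exact mul_pos (hcpos 1) (mul_exp_sub_one_pos hα1)
      rw [hfin, hΔt]
      have : 0 < Λ * (lam 0 * lam 0) * P := by positivity
      nlinarith
    · rw [hfin]
      have h0 : 0 < Δt * Δt := mul_self_pos.mpr hΔt
      have h1 : 0 ≤ Λ * (lam 0 * lam 0) * P := by positivity
      linarith
  -- conclude S < 0
  by_contra hS
  push_neg at hS
  have : 0 ≤ Λ * lam 0 * (lam 0 * (Δφ * S)) := by positivity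
  linarith
end

section
/- For every Λ > 0 and every k ∈ {0, 1, …, N}: if z_k ≥ 0 then c_{k,Λ}(φ) ≤ exp(μ_k) for all φ ≥ 0, and if z_k ≤ 0 then c_{k,Λ}(φ) ≤ exp(μ_k) for all φ ≤ 0. -/
open Filter Real Set

theorem stmt4
    (N : ℕ) (hN : 1 ≤ N)
    (z lam μhat : ℕ → ℝ) (μtilde0 : ℝ)
    (hz0 : z 0 = 0)
    (hzne : ∀ i, 1 ≤ i → i ≤ N → z i ≠ 0)
    (hmix : ∃ i j, 1 ≤ i ∧ i ≤ N ∧ 1 ≤ j ∧ j ≤ N ∧ z i * z j < 0)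
    (hlam : ∀ i, i ≤ N → 0 < lam i)
    (hμt : 0 < μtilde0)
    (hμhat : ∀ i, i ≤ N → 0 < μhat i)
    (μbar : ℕ → ℝ) (hμbar : ∀ i, μbar i = μhat i - lam i / lam 0 * μhat 0)
    (Λ : ℝ) (hΛ : 0 < Λ)
    (c0 : ℝ → ℝ) (hc0pos : ∀ φ, 0 < c0 φ)
    (hc0eq : ∀ φ : ℝ, Real.log (c0 φ)
        + Λ * lam 0 * ∑ j ∈ Finset.range (N+1),
            lam j * (c0 φ) ^ (lam j / lam 0) * Real.exp (μbar j - z j * φ)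
      = Λ * lam 0 * μtilde0 + μhat 0)
    (k : ℕ) (hk : k ≤ N) :
    (0 ≤ z k → ∀ φ : ℝ, 0 ≤ φ →
      (c0 φ) ^ (lam k / lam 0) * Real.exp (μbar k - z k * φ) ≤ Real.exp (Λ * lam k * μtilde0 + μhat k)) ∧
    (z k ≤ 0 → ∀ φ : ℝ, φ ≤ 0 →
      (c0 φ) ^ (lam k / lam 0) * Real.exp (μbar k - z k * φ) ≤ Real.exp (Λ * lam k * μtilde0 + μhat k)) := by
  have hl0 := hlam 0 (Nat.zero_le N)
  have hlk := hlam k hk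
  have hsum : ∀ φ : ℝ, 0 ≤ ∑ j ∈ Finset.range (N+1),
      lam j * (c0 φ) ^ (lam j / lam 0) * Real.exp (μbar j - z j * φ) := by
    intro φ
    apply Finset.sum_nonneg
    intro j hj
    have hlj := hlam j (Nat.lt_succ_iff.mp (Finset.mem_range.mp hj))
    have hc := hc0pos φ
    positivity
  have hlog : ∀ φ : ℝ, Real.log (c0 φ) ≤ Λ * lam 0 * μtilde0 + μhat 0 := by
    intro φ
    have h := hc0eq φ
    nlinarith [hsum φ, hΛ, hl0, mul_pos hΛ hl0]
  have hr : (0:ℝ) ≤ lam k / lam 0 := le_of_lt (div_pos hlk hl0)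
  have hrl : lam k / lam 0 * lam 0 = lam k := div_mul_cancel₀ _ (ne_of_gt hl0)
  have key : ∀ φ : ℝ, 0 ≤ z k * φ →
      (c0 φ) ^ (lam k / lam 0) * Real.exp (μbar k - z k * φ)
        ≤ Real.exp (Λ * lam k * μtilde0 + μhat k) := by
    intro φ hφ
    rw [Real.rpow_def_of_pos (hc0pos φ), ← Real.exp_add, Real.exp_le_exp]
    have h1 : Real.log (c0 φ) * (lam k / lam 0)
        ≤ (Λ * lam 0 * μtilde0 + μhat 0) * (lam k / lam 0) :=
      mul_le_mul_of_nonneg_right (hlog φ) hr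
    have h2 := hμbar k
    have h3 : (Λ * lam 0 * μtilde0 + μhat 0) * (lam k / lam 0)
        = Λ * lam k * μtilde0 + lam k / lam 0 * μhat 0 := by
      field_simp
    linarith [h1, hφ]
  constructor
  · intro hzk φ hφ
    exact key φ (mul_nonneg hzk hφ)
  · intro hzk φ hφ
    exact key φ (by nlinarith)
end

section
/- For every Λ > 0 there exist indices i_0, j_0 ∈ {1, …, N} with z_{i_0} > 0 and z_{j_0} < 0 such that limsup_{φ → −∞} c_{i_0,Λ}(φ) = ∞ and limsup_{φ → +∞} c_{j_0,Λ}(φ) = ∞ (that is: for every R > 0 and every M > 0 there exists φ < −M with c_{i_0,Λ}(φ) > R, and there exists φ > M with c_{j_0,Λ}(φ) > R). -/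
open Filter Real Set

lemma aux_blowup (N : ℕ) (z lam μbar : ℕ → ℝ)
    (hz0 : z 0 = 0)
    (hlam : ∀ i, i ≤ N → 0 < lam i)
    (Λ μ0 : ℝ) (hΛ : 0 < Λ)
    (c0 : ℝ → ℝ) (hc0pos : ∀ φ, 0 < c0 φ)
    (hc0eq : ∀ φ : ℝ, Real.log (c0 φ)
        + Λ * lam 0 * ∑ j ∈ Finset.range (N+1),
            lam j * (c0 φ) ^ (lam j / lam 0) * Real.exp (μbar j - z j * φ)
      = μ0)
    (i₀ : ℕ) (hiN : i₀ ≤ N) (hzi : 0 < z i₀)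
    (hmax : ∀ j, j ≤ N → z j * lam i₀ ≤ z i₀ * lam j) :
    ∀ R : ℝ, 0 < R → ∀ M : ℝ, 0 < M → ∃ φ : ℝ, φ < -M ∧
      R < (c0 φ) ^ (lam i₀ / lam 0) * Real.exp (μbar i₀ - z i₀ * φ) := by
  intro R hR M hM
  by_contra hcon
  push_neg at hcon
  have hl0 := hlam 0 (Nat.zero_le N)
  have hli := hlam i₀ hiN
  -- log form of the boundedness assumption
  have h1 : ∀ φ : ℝ, φ < -M →
      lam i₀ / lam 0 * Real.log (c0 φ) ≤ Real.log R - μbar i₀ + z i₀ * φ := by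
    intro φ hφ
    have hb := hcon φ hφ
    have hlog := Real.log_le_log (mul_pos (Real.rpow_pos_of_pos (hc0pos φ) _) (Real.exp_pos _)) hb
    rw [Real.log_mul (Real.rpow_pos_of_pos (hc0pos φ) _).ne' (Real.exp_pos _).ne', Real.log_rpow (hc0pos φ),
      Real.log_exp] at hlog
    linarith [mul_comm (lam i₀ / lam 0) (Real.log (c0 φ))]
  -- termwise bound on the sum
  set E : ℕ → ℝ := fun j => lam j / lam i₀ * (Real.log R - μbar i₀) + μbar j with hE
  have hterm : ∀ φ : ℝ, φ < -M → ∀ j ∈ Finset.range (N+1),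
      lam j * (c0 φ) ^ (lam j / lam 0) * Real.exp (μbar j - z j * φ)
        ≤ lam j * Real.exp (E j) := by
    intro φ hφ j hj
    have hjN : j ≤ N := Nat.lt_succ_iff.mp (Finset.mem_range.mp hj)
    have hlj := hlam j hjN
    have h4 : lam j / lam i₀ * (z i₀ * φ) ≤ z j * φ := by
      rw [div_mul_eq_mul_div, div_le_iff₀ hli]
      nlinarith [mul_nonneg (by linarith : (0:ℝ) ≤ -φ)
        (by linarith [hmax j hjN] : (0:ℝ) ≤ z i₀ * lam j - z j * lam i₀)]
    have h3 : lam j / lam 0 * Real.log (c0 φ)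
        ≤ lam j / lam i₀ * (Real.log R - μbar i₀) + lam j / lam i₀ * (z i₀ * φ) := by
      have hid : lam j / lam 0 * Real.log (c0 φ)
          = lam j / lam i₀ * (lam i₀ / lam 0 * Real.log (c0 φ)) := by
        field_simp
      rw [hid]
      calc lam j / lam i₀ * (lam i₀ / lam 0 * Real.log (c0 φ))
          ≤ lam j / lam i₀ * (Real.log R - μbar i₀ + z i₀ * φ) :=
            mul_le_mul_of_nonneg_left (h1 φ hφ) (by positivity)
        _ = lam j / lam i₀ * (Real.log R - μbar i₀) + lam j / lam i₀ * (z i₀ * φ) := by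
            ring
    have hexp : Real.log (c0 φ) * (lam j / lam 0) + (μbar j - z j * φ) ≤ E j := by
      rw [hE]
      have := mul_comm (Real.log (c0 φ)) (lam j / lam 0)
      linarith [h3, h4, this.le, this.ge]
    calc lam j * (c0 φ) ^ (lam j / lam 0) * Real.exp (μbar j - z j * φ)
        = lam j * Real.exp (Real.log (c0 φ) * (lam j / lam 0) + (μbar j - z j * φ)) := by
          rw [Real.rpow_def_of_pos (hc0pos φ), Real.exp_add]; ring
      _ ≤ lam j * Real.exp (E j) := by
          apply mul_le_mul_of_nonneg_left _ hlj.le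
          exact Real.exp_le_exp.mpr hexp
  -- hence a uniform lower bound on log c0
  set S0 : ℝ := ∑ j ∈ Finset.range (N+1), lam j * Real.exp (E j) with hS0
  set lb : ℝ := μ0 - Λ * lam 0 * S0 with hlb
  have hlow : ∀ φ : ℝ, φ < -M → lb ≤ Real.log (c0 φ) := by
    intro φ hφ
    have hsum : (∑ j ∈ Finset.range (N+1),
        lam j * (c0 φ) ^ (lam j / lam 0) * Real.exp (μbar j - z j * φ)) ≤ S0 :=
      Finset.sum_le_sum (hterm φ hφ)
    have heq := hc0eq φ
    nlinarith [mul_le_mul_of_nonneg_left hsum (by positivity : (0:ℝ) ≤ Λ * lam 0)]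
  -- choose φ very negative to contradict the bound
  set φ0 : ℝ := min (-M - 1) ((lam i₀ / lam 0 * lb + μbar i₀ - Real.log R) / z i₀ - 1) with hφ0
  have hφ0M : φ0 < -M := lt_of_le_of_lt (min_le_left _ _) (by linarith)
  have hzφ : z i₀ * φ0 < lam i₀ / lam 0 * lb + μbar i₀ - Real.log R := by
    have : φ0 < (lam i₀ / lam 0 * lb + μbar i₀ - Real.log R) / z i₀ :=
      lt_of_le_of_lt (min_le_right _ _) (by linarith)
    rw [lt_div_iff₀ hzi] at this
    linarith [this]
  have hc0lb : Real.exp lb ≤ c0 φ0 := by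
    have := hlow φ0 hφ0M
    calc Real.exp lb ≤ Real.exp (Real.log (c0 φ0)) := Real.exp_le_exp.mpr this
      _ = c0 φ0 := Real.exp_log (hc0pos φ0)
  have hfinal : R < (c0 φ0) ^ (lam i₀ / lam 0) * Real.exp (μbar i₀ - z i₀ * φ0) := by
    have hr1 : Real.exp (lb * (lam i₀ / lam 0)) ≤ (c0 φ0) ^ (lam i₀ / lam 0) := by
      have := Real.rpow_le_rpow (Real.exp_pos lb).le hc0lb (by positivity : (0:ℝ) ≤ lam i₀ / lam 0)
      rwa [Real.rpow_def_of_pos (Real.exp_pos lb), Real.log_exp] at this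
    calc R = Real.exp (Real.log R) := (Real.exp_log hR).symm
      _ < Real.exp (lb * (lam i₀ / lam 0) + (μbar i₀ - z i₀ * φ0)) := by
          apply Real.exp_lt_exp.mpr
          nlinarith [hzφ]
      _ = Real.exp (lb * (lam i₀ / lam 0)) * Real.exp (μbar i₀ - z i₀ * φ0) := Real.exp_add _ _
      _ ≤ (c0 φ0) ^ (lam i₀ / lam 0) * Real.exp (μbar i₀ - z i₀ * φ0) :=
          mul_le_mul_of_nonneg_right hr1 (Real.exp_pos _).le
  exact absurd (hcon φ0 hφ0M) (not_le.mpr hfinal)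

open Filter Real Set

theorem stmt5
    (N : ℕ) (hN : 1 ≤ N)
    (z lam μhat : ℕ → ℝ) (μtilde0 : ℝ)
    (hz0 : z 0 = 0)
    (hzne : ∀ i, 1 ≤ i → i ≤ N → z i ≠ 0)
    (hmix : ∃ i j, 1 ≤ i ∧ i ≤ N ∧ 1 ≤ j ∧ j ≤ N ∧ z i * z j < 0)
    (hlam : ∀ i, i ≤ N → 0 < lam i)
    (hμt : 0 < μtilde0)
    (hμhat : ∀ i, i ≤ N → 0 < μhat i)
    (μbar : ℕ → ℝ) (hμbar : ∀ i, μbar i = μhat i - lam i / lam 0 * μhat 0)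
    (Λ : ℝ) (hΛ : 0 < Λ)
    (c0 : ℝ → ℝ) (hc0pos : ∀ φ, 0 < c0 φ)
    (hc0eq : ∀ φ : ℝ, Real.log (c0 φ)
        + Λ * lam 0 * ∑ j ∈ Finset.range (N+1),
            lam j * (c0 φ) ^ (lam j / lam 0) * Real.exp (μbar j - z j * φ)
      = Λ * lam 0 * μtilde0 + μhat 0)
    :
    ∃ i₀ j₀ : ℕ, 1 ≤ i₀ ∧ i₀ ≤ N ∧ 1 ≤ j₀ ∧ j₀ ≤ N ∧ 0 < z i₀ ∧ z j₀ < 0 ∧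
      (∀ R : ℝ, 0 < R → ∀ M : ℝ, 0 < M → ∃ φ : ℝ, φ < -M ∧
        R < (c0 φ) ^ (lam i₀ / lam 0) * Real.exp (μbar i₀ - z i₀ * φ)) ∧
      (∀ R : ℝ, 0 < R → ∀ M : ℝ, 0 < M → ∃ φ : ℝ, M < φ ∧
        R < (c0 φ) ^ (lam j₀ / lam 0) * Real.exp (μbar j₀ - z j₀ * φ)) := by
  obtain ⟨i, j, hi1, hiN, hj1, hjN, hij⟩ := hmix
  -- get a positive and a negative valence index
  obtain ⟨ip, hip1, hipN, hipz, jn, hjn1, hjnN, hjnz⟩ :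
      ∃ ip, 1 ≤ ip ∧ ip ≤ N ∧ 0 < z ip ∧ ∃ jn, 1 ≤ jn ∧ jn ≤ N ∧ z jn < 0 := by
    rcases lt_or_gt_of_ne (hzne i hi1 hiN) with h | h
    · exact ⟨j, hj1, hjN, by nlinarith, i, hi1, hiN, h⟩
    · exact ⟨i, hi1, hiN, h, j, hj1, hjN, by nlinarith⟩
  have hne : (Finset.Icc 1 N).Nonempty := ⟨1, Finset.mem_Icc.mpr ⟨le_refl 1, hN⟩⟩
  obtain ⟨i₀, hi₀mem, hi₀max⟩ := Finset.exists_max_image (Finset.Icc 1 N)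
    (fun k => z k / lam k) hne
  obtain ⟨j₀, hj₀mem, hj₀min⟩ := Finset.exists_min_image (Finset.Icc 1 N)
    (fun k => z k / lam k) hne
  obtain ⟨hi₀1, hi₀N⟩ := Finset.mem_Icc.mp hi₀mem
  obtain ⟨hj₀1, hj₀N⟩ := Finset.mem_Icc.mp hj₀mem
  have hli₀ := hlam i₀ hi₀N
  have hlj₀ := hlam j₀ hj₀N
  have hl0 := hlam 0 (Nat.zero_le N)
  have hzi₀ : 0 < z i₀ := by
    have h1 : z ip / lam ip ≤ z i₀ / lam i₀ :=
      hi₀max ip (Finset.mem_Icc.mpr ⟨hip1, hipN⟩)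
    have h2 : 0 < z ip / lam ip := div_pos hipz (hlam ip hipN)
    have h3 : 0 < z i₀ / lam i₀ := lt_of_lt_of_le h2 h1
    have := mul_pos h3 hli₀
    rwa [div_mul_cancel₀ _ hli₀.ne'] at this
  have hzj₀ : z j₀ < 0 := by
    have h1 : z j₀ / lam j₀ ≤ z jn / lam jn :=
      hj₀min jn (Finset.mem_Icc.mpr ⟨hjn1, hjnN⟩)
    have h2 : z jn / lam jn < 0 := div_neg_of_neg_of_pos hjnz (hlam jn hjnN)
    have h3 : z j₀ / lam j₀ < 0 := lt_of_le_of_lt h1 h2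
    have := mul_neg_of_neg_of_pos h3 hlj₀
    rwa [div_mul_cancel₀ _ hlj₀.ne'] at this
  have hmax : ∀ k, k ≤ N → z k * lam i₀ ≤ z i₀ * lam k := by
    intro k hkN
    rcases Nat.eq_zero_or_pos k with rfl | hk1
    · rw [hz0]; nlinarith [mul_pos hzi₀ hl0]
    · have h1 : z k / lam k ≤ z i₀ / lam i₀ :=
        hi₀max k (Finset.mem_Icc.mpr ⟨hk1, hkN⟩)
      exact (div_le_div_iff₀ (hlam k hkN) hli₀).mp h1
  have hmin : ∀ k, k ≤ N → (-z k) * lam j₀ ≤ (-z j₀) * lam k := by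
    intro k hkN
    rcases Nat.eq_zero_or_pos k with rfl | hk1
    · rw [hz0]; nlinarith [mul_pos (neg_pos.mpr hzj₀) hl0]
    · have h1 : z j₀ / lam j₀ ≤ z k / lam k :=
        hj₀min k (Finset.mem_Icc.mpr ⟨hk1, hkN⟩)
      have := (div_le_div_iff₀ hlj₀ (hlam k hkN)).mp h1
      linarith
  refine ⟨i₀, j₀, hi₀1, hi₀N, hj₀1, hj₀N, hzi₀, hzj₀, ?_, ?_⟩
  · exact aux_blowup N z lam μbar hz0 hlam Λ (Λ * lam 0 * μtilde0 + μhat 0) hΛ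
      c0 hc0pos hc0eq i₀ hi₀N hzi₀ hmax
  · have haux := aux_blowup N (fun k => -z k) lam μbar (by simp [hz0]) hlam Λ
      (Λ * lam 0 * μtilde0 + μhat 0) hΛ (fun φ => c0 (-φ)) (fun φ => hc0pos (-φ))
      (by intro φ
          have h := hc0eq (-φ)
          simp only [mul_neg, neg_mul, neg_neg] at h ⊢
          exact h)
      j₀ hj₀N (neg_pos.mpr hzj₀) hmin
    intro R hR M hM
    obtain ⟨φ, hφ, hlt⟩ := haux R hR M hM
    refine ⟨-φ, by linarith, ?_⟩
    simp only [neg_mul, neg_neg] at hlt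
    rw [show μbar j₀ - z j₀ * -φ = μbar j₀ - -(z j₀ * φ) by ring]
    exact hlt
end

section
/- For every Λ > 0, f_Λ(φ) → −∞ as φ → +∞ and f_Λ(φ) → +∞ as φ → −∞; in particular, the range of f_Λ is all of ℝ. -/
open Filter Real Set

lemma sum_split' (N : ℕ) (f : ℕ → ℝ) :
    ∑ j ∈ Finset.range (N+1), f j = f 0 + ∑ j ∈ Finset.Icc 1 N, f j := by
  have h : Finset.range (N+1) = insert 0 (Finset.Icc 1 N) := by
    ext x; simp [Nat.lt_succ_iff]; omega
  rw [h, Finset.sum_insert (by simp)]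

lemma main_atBot (N : ℕ) (z lam μbar : ℕ → ℝ)
    (hz0 : z 0 = 0) (hμbar0 : μbar 0 = 0)
    (hlam : ∀ i, i ≤ N → 0 < lam i)
    (ineg : ℕ) (hi1 : 1 ≤ ineg) (hiN : ineg ≤ N) (hzi : z ineg < 0)
    (Λ : ℝ) (hΛ : 0 < Λ) (M : ℝ)
    (c0 : ℝ → ℝ) (hc0pos : ∀ φ, 0 < c0 φ)
    (hc0eq : ∀ φ : ℝ, Real.log (c0 φ)
        + Λ * lam 0 * ∑ j ∈ Finset.range (N+1),
            lam j * (c0 φ) ^ (lam j / lam 0) * Real.exp (μbar j - z j * φ)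
      = M) :
    Filter.Tendsto (fun φ : ℝ => ∑ i ∈ Finset.Icc 1 N,
      z i * ((c0 φ) ^ (lam i / lam 0) * Real.exp (μbar i - z i * φ))) Filter.atTop Filter.atBot := by
  have hlam0 := hlam 0 (Nat.zero_le N)
  set c : ℝ → ℕ → ℝ := fun φ j => (c0 φ) ^ (lam j / lam 0) * Real.exp (μbar j - z j * φ)
    with hc
  have hcpos : ∀ φ j, 0 < c φ j := fun φ j =>
    mul_pos (Real.rpow_pos_of_pos (hc0pos φ) _) (Real.exp_pos _)
  have hsum : ∀ φ, Real.log (c0 φ)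
      + Λ * lam 0 * ∑ j ∈ Finset.range (N+1), lam j * c φ j = M := by
    intro φ; simpa [hc, mul_assoc] using hc0eq φ
  have hsumpos : ∀ φ, 0 < ∑ j ∈ Finset.range (N+1), lam j * c φ j := by
    intro φ
    refine Finset.sum_pos (fun j hj => ?_) ⟨0, by simp⟩
    exact mul_pos (hlam j (by simpa [Nat.lt_succ_iff] using hj)) (hcpos φ j)
  have hΛl : 0 < Λ * lam 0 := mul_pos hΛ hlam0
  have hlogM : ∀ φ, Real.log (c0 φ) < M := by
    intro φ
    nlinarith [hsum φ, mul_pos hΛl (hsumpos φ)]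
  have hterm_le : ∀ φ, Λ * lam 0 * (lam ineg * c φ ineg) ≤ M - Real.log (c0 φ) := by
    intro φ
    have h1 : lam ineg * c φ ineg ≤ ∑ j ∈ Finset.range (N+1), lam j * c φ j :=
      Finset.single_le_sum
        (fun j hj => le_of_lt (mul_pos (hlam j (by simpa [Nat.lt_succ_iff] using hj)) (hcpos φ j)))
        (by simp [Nat.lt_succ_iff]; omega)
    nlinarith [hsum φ, mul_le_mul_of_nonneg_left h1 hΛl.le]
  have hineg : 0 < lam ineg := hlam ineg hiN
  have haineg : 0 < lam ineg / lam 0 := div_pos hineg hlam0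
  -- c0 → 0 at +∞
  have hc0lim : Tendsto c0 atTop (nhds 0) := by
    rw [tendsto_order]
    constructor
    · intro b hb
      exact Eventually.of_forall fun φ => lt_trans hb (hc0pos φ)
    · intro ε hε
      by_cases hεM : M ≤ Real.log ε
      · refine Eventually.of_forall fun φ => ?_
        calc c0 φ = Real.exp (Real.log (c0 φ)) := (Real.exp_log (hc0pos φ)).symm
          _ < Real.exp (Real.log ε) := Real.exp_lt_exp.2 (lt_of_lt_of_le (hlogM φ) hεM)
          _ = ε := Real.exp_log hε
      · push_neg at hεM
        set K := Λ * lam 0 * (lam ineg * (ε ^ (lam ineg / lam 0) * Real.exp (μbar ineg)))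
          with hKdef
        have hK : 0 < K := by
          have := Real.rpow_pos_of_pos hε (lam ineg / lam 0)
          positivity
        have hexp : Tendsto (fun φ : ℝ => Real.exp (-(z ineg) * φ)) atTop atTop :=
          Real.tendsto_exp_atTop.comp (Tendsto.const_mul_atTop (by linarith) tendsto_id)
        filter_upwards [hexp.eventually_gt_atTop ((M - Real.log ε)/K)] with φ hφ
        by_contra h; push_neg at h
        have hrp : ε ^ (lam ineg / lam 0) ≤ (c0 φ) ^ (lam ineg / lam 0) :=
          Real.rpow_le_rpow hε.le h haineg.le
        have hexpeq : Real.exp (μbar ineg - z ineg * φ)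
            = Real.exp (μbar ineg) * Real.exp (-(z ineg) * φ) := by
          rw [← Real.exp_add]; ring_nf
        have e1 : K * Real.exp (-(z ineg) * φ) ≤ Λ * lam 0 * (lam ineg * c φ ineg) := by
          rw [hKdef, hc]
          simp only []
          rw [hexpeq]
          have : ε ^ (lam ineg / lam 0) * (Real.exp (μbar ineg) * Real.exp (-(z ineg) * φ))
              ≤ (c0 φ) ^ (lam ineg / lam 0) * (Real.exp (μbar ineg) * Real.exp (-(z ineg) * φ)) :=
            mul_le_mul_of_nonneg_right hrp (by positivity)
          nlinarith [mul_le_mul_of_nonneg_left this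
            (show (0:ℝ) ≤ Λ * lam 0 * lam ineg by positivity)]
        have h3 : M - Real.log (c0 φ) ≤ M - Real.log ε := by
          have := Real.log_le_log hε h; linarith
        have h4 : M - Real.log ε < K * Real.exp (-(z ineg) * φ) := by
          have := (div_lt_iff₀ hK).mp hφ; linarith
        linarith [hterm_le φ]
  -- log c0 → -∞
  have hlog : Tendsto (fun φ => Real.log (c0 φ)) atTop atBot :=
    Real.tendsto_log_nhdsGT_zero.comp
      (tendsto_nhdsWithin_of_tendsto_nhds_of_eventually_within _ hc0lim
        (Eventually.of_forall fun φ => hc0pos φ))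
  -- total sum → ∞
  have hS : Tendsto (fun φ => ∑ j ∈ Finset.range (N+1), lam j * c φ j) atTop atTop := by
    have heq : (fun φ => ∑ j ∈ Finset.range (N+1), lam j * c φ j)
        = fun φ => (M - Real.log (c0 φ)) / (Λ * lam 0) := by
      funext φ
      have := hsum φ
      field_simp
      linarith
    rw [heq]
    refine Tendsto.atTop_div_const hΛl ?_
    have : Tendsto (fun φ => -Real.log (c0 φ)) atTop atTop := tendsto_neg_atBot_atTop.comp hlog
    have h2 := Tendsto.atTop_add this (tendsto_const_nhds (x := M))
    simpa [add_comm, sub_eq_add_neg] using h2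
  -- Icc sum → ∞
  have hsplit : ∀ φ, ∑ j ∈ Finset.range (N+1), lam j * c φ j
      = lam 0 * c0 φ + ∑ j ∈ Finset.Icc 1 N, lam j * c φ j := by
    intro φ
    rw [sum_split' N (fun j => lam j * c φ j)]
    congr 1
    have : c φ 0 = c0 φ := by
      simp [hc, hz0, hμbar0, div_self (ne_of_gt hlam0), Real.rpow_one]
    rw [this]
  have hS1 : Tendsto (fun φ => ∑ j ∈ Finset.Icc 1 N, lam j * c φ j) atTop atTop := by
    have heq : (fun φ => ∑ j ∈ Finset.Icc 1 N, lam j * c φ j)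
        = fun φ => (∑ j ∈ Finset.range (N+1), lam j * c φ j) + (-(lam 0 * c0 φ)) := by
      funext φ; rw [hsplit φ]; ring
    rw [heq]
    have h0 : Tendsto (fun φ => -(lam 0 * c0 φ)) atTop (nhds 0) := by
      have : Tendsto (fun φ => -(lam 0 * c0 φ)) atTop (nhds (-(lam 0 * 0))) :=
        ((hc0lim.const_mul (lam 0))).neg
      simpa using this
    exact Tendsto.atTop_add hS h0
  -- terms with 0 ≤ z i tend to 0
  have hczero : ∀ i, i ≤ N → 0 ≤ z i → Tendsto (fun φ => c φ i) atTop (nhds 0) := by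
    intro i hiN' hzi'
    have hai : 0 < lam i / lam 0 := div_pos (hlam i hiN') hlam0
    have h1 : Tendsto (fun φ => (c0 φ) ^ (lam i / lam 0)) atTop (nhds 0) := by
      have hcont : ContinuousAt (fun x : ℝ => x ^ (lam i / lam 0)) 0 :=
        Real.continuousAt_rpow_const 0 _ (Or.inr hai.le)
      have := hcont.tendsto.comp hc0lim
      simpa [Real.zero_rpow (ne_of_gt hai), Function.comp_def] using this
    refine squeeze_zero' (g := fun φ => (c0 φ) ^ (lam i / lam 0) * Real.exp (μbar i))
      (Eventually.of_forall fun φ => (hcpos φ i).le) ?_ ?_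
    · filter_upwards [eventually_ge_atTop (0:ℝ)] with φ hφ
      have : Real.exp (μbar i - z i * φ) ≤ Real.exp (μbar i) :=
        Real.exp_le_exp.2 (by nlinarith)
      exact mul_le_mul_of_nonneg_left this (Real.rpow_nonneg (hc0pos φ).le _)
    · simpa using h1.mul_const (Real.exp (μbar i))
  classical
  set P := (Finset.Icc 1 N).filter (fun i => 0 ≤ z i) with hP
  set Ng := (Finset.Icc 1 N).filter (fun i => ¬ 0 ≤ z i) with hNg
  have hNgne : Ng.Nonempty :=
    ⟨ineg, by
      rw [hNg, Finset.mem_filter, Finset.mem_Icc]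
      exact ⟨⟨hi1, hiN⟩, not_le.2 hzi⟩⟩
  set κ := Ng.inf' hNgne (fun i => -z i / lam i) with hκ
  have hNgmem : ∀ i ∈ Ng, 1 ≤ i ∧ i ≤ N ∧ z i < 0 := by
    intro i hi
    simp only [hNg, Finset.mem_filter, Finset.mem_Icc, not_le] at hi
    exact ⟨hi.1.1, hi.1.2, hi.2⟩
  have hκpos : 0 < κ := by
    rw [hκ, Finset.lt_inf'_iff]
    intro i hi
    obtain ⟨h1, h2, h3⟩ := hNgmem i hi
    exact div_pos (by linarith) (hlam i h2)
  have hκle : ∀ i ∈ Ng, κ * lam i ≤ -z i := by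
    intro i hi
    obtain ⟨h1, h2, h3⟩ := hNgmem i hi
    have := Finset.inf'_le (fun i => -z i / lam i) hi
    rw [hκ]
    calc Ng.inf' hNgne (fun i => -z i / lam i) * lam i
        ≤ (-z i / lam i) * lam i := mul_le_mul_of_nonneg_right this (hlam i h2).le
      _ = -z i := div_mul_cancel₀ _ (ne_of_gt (hlam i h2))
  have hPmem : ∀ i ∈ P, i ≤ N ∧ 0 ≤ z i := by
    intro i hi
    simp only [hP, Finset.mem_filter, Finset.mem_Icc] at hi
    exact ⟨hi.1.2, hi.2⟩
  have hTP : Tendsto (fun φ => ∑ i ∈ P, z i * c φ i) atTop (nhds 0) := by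
    have := tendsto_finset_sum P (f := fun i φ => z i * c φ i) (a := fun _ => 0)
      (fun i hi => by
        obtain ⟨h1, h2⟩ := hPmem i hi
        simpa using (hczero i h1 h2).const_mul (z i))
    simpa using this
  have hUP : Tendsto (fun φ => ∑ i ∈ P, lam i * c φ i) atTop (nhds 0) := by
    have := tendsto_finset_sum P (f := fun i φ => lam i * c φ i) (a := fun _ => 0)
      (fun i hi => by
        obtain ⟨h1, h2⟩ := hPmem i hi
        simpa using (hczero i h1 h2).const_mul (lam i))
    simpa using this
  have hbound : ∀ φ, ∑ i ∈ Finset.Icc 1 N, z i * c φ i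
      ≤ (∑ i ∈ P, z i * c φ i) + κ * (∑ i ∈ P, lam i * c φ i)
        - κ * (∑ i ∈ Finset.Icc 1 N, lam i * c φ i) := by
    intro φ
    have hsf : ∑ i ∈ P, z i * c φ i + ∑ i ∈ Ng, z i * c φ i
        = ∑ i ∈ Finset.Icc 1 N, z i * c φ i :=
      Finset.sum_filter_add_sum_filter_not _ _ _
    have hsl : ∑ i ∈ P, lam i * c φ i + ∑ i ∈ Ng, lam i * c φ i
        = ∑ i ∈ Finset.Icc 1 N, lam i * c φ i :=
      Finset.sum_filter_add_sum_filter_not _ _ _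
    have hNgle : ∑ i ∈ Ng, z i * c φ i ≤ ∑ i ∈ Ng, (-(κ * (lam i * c φ i))) := by
      refine Finset.sum_le_sum fun i hi => ?_
      have h1 := hκle i hi
      have h2 := hcpos φ i
      nlinarith
    have hNgsum : ∑ i ∈ Ng, (-(κ * (lam i * c φ i)))
        = -(κ * ∑ i ∈ Ng, lam i * c φ i) := by
      rw [Finset.mul_sum, ← Finset.sum_neg_distrib]
    rw [hNgsum] at hNgle
    nlinarith [hNgle, hsf, hsl]
  have hg : Tendsto (fun φ => (∑ i ∈ P, z i * c φ i) + κ * (∑ i ∈ P, lam i * c φ i)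
      - κ * (∑ i ∈ Finset.Icc 1 N, lam i * c φ i)) atTop atBot := by
    have h1 : Tendsto (fun φ => (∑ i ∈ P, z i * c φ i) + κ * (∑ i ∈ P, lam i * c φ i))
        atTop (nhds 0) := by
      simpa using hTP.add (hUP.const_mul κ)
    have h2 : Tendsto (fun φ => -(κ * (∑ i ∈ Finset.Icc 1 N, lam i * c φ i))) atTop atBot := by
      have := hS1.const_mul_atTop hκpos
      exact tendsto_neg_atTop_atBot.comp this
    have := Tendsto.add_atBot h1 h2
    simpa [sub_eq_add_neg] using this
  exact tendsto_atBot_mono hbound hg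

lemma c0_cont (N : ℕ) (z lam μbar : ℕ → ℝ) (Λ M : ℝ) (hΛ : 0 < Λ)
    (hlam : ∀ i, i ≤ N → 0 < lam i)
    (c0 : ℝ → ℝ) (hc0pos : ∀ φ, 0 < c0 φ)
    (hc0eq : ∀ φ : ℝ, Real.log (c0 φ)
        + Λ * lam 0 * ∑ j ∈ Finset.range (N+1),
            lam j * (c0 φ) ^ (lam j / lam 0) * Real.exp (μbar j - z j * φ)
      = M) :
    Continuous c0 := by
  have hlam0 := hlam 0 (Nat.zero_le N)
  have hΛl : 0 < Λ * lam 0 := mul_pos hΛ hlam0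
  set G : ℝ → ℝ → ℝ := fun φ t => Real.log t
      + Λ * lam 0 * ∑ j ∈ Finset.range (N+1),
          lam j * t ^ (lam j / lam 0) * Real.exp (μbar j - z j * φ) with hG
  have hmono : ∀ φ : ℝ, ∀ s t : ℝ, 0 < s → s < t → G φ s < G φ t := by
    intro φ s t hs hst
    have hlog : Real.log s < Real.log t := Real.log_lt_log hs hst
    have hsum : ∑ j ∈ Finset.range (N+1), lam j * s ^ (lam j / lam 0) * Real.exp (μbar j - z j * φ)
        ≤ ∑ j ∈ Finset.range (N+1), lam j * t ^ (lam j / lam 0) * Real.exp (μbar j - z j * φ) := by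
      refine Finset.sum_le_sum fun j hj => ?_
      have hj' : j ≤ N := by simpa [Nat.lt_succ_iff] using hj
      have hrp : s ^ (lam j / lam 0) ≤ t ^ (lam j / lam 0) :=
        Real.rpow_le_rpow hs.le hst.le (div_nonneg (hlam j hj').le hlam0.le)
      have := mul_le_mul_of_nonneg_left hrp (hlam j hj').le
      exact mul_le_mul_of_nonneg_right this (Real.exp_pos _).le
    have := mul_le_mul_of_nonneg_left hsum hΛl.le
    simp only [hG]
    linarith
  have hmono' : ∀ φ : ℝ, ∀ s t : ℝ, 0 < s → s ≤ t → G φ s ≤ G φ t := by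
    intro φ s t hs hst
    rcases eq_or_lt_of_le hst with h | h
    · rw [h]
    · exact (hmono φ s t hs h).le
  have hGc : ∀ φ, G φ (c0 φ) = M := hc0eq
  have hGcont : ∀ t : ℝ, Continuous (fun φ => G φ t) := by
    intro t
    simp only [hG]
    refine continuous_const.add (continuous_const.mul (continuous_finset_sum _ fun j _ => ?_))
    exact continuous_const.mul
      (Real.continuous_exp.comp (continuous_const.sub (continuous_const.mul continuous_id)))
  rw [continuous_iff_continuousAt]
  intro φ₀
  unfold ContinuousAt
  rw [tendsto_order]
  constructor
  · intro b hb
    set t1 := max b (c0 φ₀ / 2) with ht1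
    have ht1pos : 0 < t1 := lt_max_of_lt_right (by linarith [hc0pos φ₀])
    have ht1lt : t1 < c0 φ₀ := max_lt hb (by linarith [hc0pos φ₀])
    have hGlt : G φ₀ t1 < M := by rw [← hGc φ₀]; exact hmono φ₀ t1 _ ht1pos ht1lt
    have hev : ∀ᶠ φ in nhds φ₀, G φ t1 < M :=
      Tendsto.eventually_lt_const hGlt ((hGcont t1).continuousAt)
    filter_upwards [hev] with φ hφ
    refine lt_of_not_ge fun h => ?_
    have h1 : c0 φ ≤ t1 := h.trans (le_max_left _ _)
    have := hmono' φ (c0 φ) t1 (hc0pos φ) h1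
    rw [hGc φ] at this
    linarith
  · intro b hb
    have hGgt : M < G φ₀ b := by rw [← hGc φ₀]; exact hmono φ₀ _ b (hc0pos φ₀) hb
    have hev : ∀ᶠ φ in nhds φ₀, M < G φ b :=
      Tendsto.eventually_const_lt hGgt ((hGcont b).continuousAt)
    filter_upwards [hev] with φ hφ
    refine lt_of_not_ge fun h => ?_
    have := hmono' φ b (c0 φ) (lt_trans (hc0pos φ₀) hb) h
    rw [hGc φ] at this
    linarith

theorem stmt6
    (N : ℕ) (hN : 1 ≤ N)
    (z lam μhat : ℕ → ℝ) (μtilde0 : ℝ)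
    (hz0 : z 0 = 0)
    (hzne : ∀ i, 1 ≤ i → i ≤ N → z i ≠ 0)
    (hmix : ∃ i j, 1 ≤ i ∧ i ≤ N ∧ 1 ≤ j ∧ j ≤ N ∧ z i * z j < 0)
    (hlam : ∀ i, i ≤ N → 0 < lam i)
    (hμt : 0 < μtilde0)
    (hμhat : ∀ i, i ≤ N → 0 < μhat i)
    (μbar : ℕ → ℝ) (hμbar : ∀ i, μbar i = μhat i - lam i / lam 0 * μhat 0)
    (Λ : ℝ) (hΛ : 0 < Λ)
    (c0 : ℝ → ℝ) (hc0pos : ∀ φ, 0 < c0 φ)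
    (hc0eq : ∀ φ : ℝ, Real.log (c0 φ)
        + Λ * lam 0 * ∑ j ∈ Finset.range (N+1),
            lam j * (c0 φ) ^ (lam j / lam 0) * Real.exp (μbar j - z j * φ)
      = Λ * lam 0 * μtilde0 + μhat 0)
    :
    Filter.Tendsto (fun φ : ℝ => ∑ i ∈ Finset.Icc 1 N, z i * ((c0 φ) ^ (lam i / lam 0) * Real.exp (μbar i - z i * φ))) Filter.atTop Filter.atBot ∧
    Filter.Tendsto (fun φ : ℝ => ∑ i ∈ Finset.Icc 1 N, z i * ((c0 φ) ^ (lam i / lam 0) * Real.exp (μbar i - z i * φ))) Filter.atBot Filter.atTop ∧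
    Function.Surjective (fun φ : ℝ => ∑ i ∈ Finset.Icc 1 N, z i * ((c0 φ) ^ (lam i / lam 0) * Real.exp (μbar i - z i * φ))) := by
  have hlam0 := hlam 0 (Nat.zero_le N)
  have hμbar0 : μbar 0 = 0 := by
    rw [hμbar 0, div_self (ne_of_gt hlam0)]; ring
  obtain ⟨ineg, hin1, hinN, hinz, ipos, hip1, hipN, hipz⟩ :
      ∃ a, 1 ≤ a ∧ a ≤ N ∧ z a < 0 ∧ ∃ b, 1 ≤ b ∧ b ≤ N ∧ 0 < z b := by
    obtain ⟨i, j, hi1, hiN, hj1, hjN, hij⟩ := hmix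
    rcases mul_neg_iff.mp hij with ⟨hpos, hneg⟩ | ⟨hneg, hpos⟩
    · exact ⟨j, hj1, hjN, hneg, i, hi1, hiN, hpos⟩
    · exact ⟨i, hi1, hiN, hneg, j, hj1, hjN, hpos⟩
  set M := Λ * lam 0 * μtilde0 + μhat 0 with hM
  have h1 : Filter.Tendsto (fun φ : ℝ => ∑ i ∈ Finset.Icc 1 N,
      z i * ((c0 φ) ^ (lam i / lam 0) * Real.exp (μbar i - z i * φ))) atTop atBot :=
    main_atBot N z lam μbar hz0 hμbar0 hlam ineg hin1 hinN hinz Λ hΛ M c0 hc0pos hc0eq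
  have h2' : Filter.Tendsto (fun φ : ℝ => ∑ i ∈ Finset.Icc 1 N,
      (-z i) * ((c0 (-φ)) ^ (lam i / lam 0) * Real.exp (μbar i - (-z i) * φ))) atTop atBot := by
    refine main_atBot N (fun i => -z i) lam μbar (by simp [hz0]) hμbar0 hlam ipos hip1 hipN
      (by simpa using hipz) Λ hΛ M (fun φ => c0 (-φ)) (fun φ => hc0pos (-φ)) ?_
    intro φ
    simpa only [mul_neg, neg_mul] using hc0eq (-φ)
  have h2 : Filter.Tendsto (fun φ : ℝ => ∑ i ∈ Finset.Icc 1 N,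
      z i * ((c0 φ) ^ (lam i / lam 0) * Real.exp (μbar i - z i * φ))) atBot atTop := by
    have heq : (fun φ : ℝ => ∑ i ∈ Finset.Icc 1 N,
        (-z i) * ((c0 (-φ)) ^ (lam i / lam 0) * Real.exp (μbar i - (-z i) * φ)))
        = fun φ : ℝ => -(∑ i ∈ Finset.Icc 1 N,
        z i * ((c0 (-φ)) ^ (lam i / lam 0) * Real.exp (μbar i - z i * (-φ)))) := by
      funext φ
      rw [← Finset.sum_neg_distrib]
      refine Finset.sum_congr rfl fun i _ => ?_
      have : μbar i - -z i * φ = μbar i - z i * (-φ) := by ring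
      rw [this]; ring
    rw [heq] at h2'
    have h3 : Filter.Tendsto (fun φ : ℝ => ∑ i ∈ Finset.Icc 1 N,
        z i * ((c0 (-φ)) ^ (lam i / lam 0) * Real.exp (μbar i - z i * (-φ)))) atTop atTop := by
      have := tendsto_neg_atBot_atTop.comp h2'
      simpa [Function.comp_def, neg_neg] using this
    have := h3.comp tendsto_neg_atBot_atTop
    simpa [Function.comp_def, neg_neg, mul_neg, sub_eq_add_neg] using this
  refine ⟨h1, h2, ?_⟩
  have hc0cont : Continuous c0 := c0_cont N z lam μbar Λ M hΛ hlam c0 hc0pos hc0eq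
  have hf : Continuous (fun φ : ℝ => ∑ i ∈ Finset.Icc 1 N,
      z i * ((c0 φ) ^ (lam i / lam 0) * Real.exp (μbar i - z i * φ))) := by
    refine continuous_finset_sum _ fun i _ => continuous_const.mul (Continuous.mul ?_ ?_)
    · rw [continuous_iff_continuousAt]
      intro φ
      exact (Real.continuousAt_rpow_const (c0 φ) _ (Or.inl (ne_of_gt (hc0pos φ)))).comp
        hc0cont.continuousAt
    · exact Real.continuous_exp.comp (continuous_const.sub (continuous_const.mul continuous_id))
  exact hf.surjective' h2 h1
end

section
/- For every φ ∈ ℝ there exists a unique t > 0 such that ∑_{j=0}^N λ_j t^{λ_j/λ_0} exp(μ̄_j − z_j φ) = μ̃_0. The resulting function c_0^* : ℝ → (0, ∞), defined by c_0^*(φ) = this unique t, is C^∞ on ℝ, and consequently each function c_i^*(φ) = (c_0^*(φ))^{λ_i/λ_0} exp(μ̄_i − z_i φ), i = 1, …, N, is a positive C^∞ function on ℝ. -/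
open Filter Real Set Topology

theorem stmt7
    (N : ℕ) (hN : 1 ≤ N)
    (z lam μhat : ℕ → ℝ) (μtilde0 : ℝ)
    (hz0 : z 0 = 0)
    (hzne : ∀ i, 1 ≤ i → i ≤ N → z i ≠ 0)
    (hmix : ∃ i j, 1 ≤ i ∧ i ≤ N ∧ 1 ≤ j ∧ j ≤ N ∧ z i * z j < 0)
    (hlam : ∀ i, i ≤ N → 0 < lam i)
    (hμt : 0 < μtilde0)
    (hμhat : ∀ i, i ≤ N → 0 < μhat i)
    (μbar : ℕ → ℝ) (hμbar : ∀ i, μbar i = μhat i - lam i / lam 0 * μhat 0)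
    :
    (∀ φ : ℝ, ∃! t : ℝ, 0 < t ∧
      ∑ j ∈ Finset.range (N+1), lam j * t ^ (lam j / lam 0) * Real.exp (μbar j - z j * φ)
        = μtilde0) ∧
    (∀ c0s : ℝ → ℝ, (∀ φ, 0 < c0s φ) →
      (∀ φ : ℝ, ∑ j ∈ Finset.range (N+1),
        lam j * (c0s φ) ^ (lam j / lam 0) * Real.exp (μbar j - z j * φ) = μtilde0) →
      (∀ n : ℕ, ContDiff ℝ n c0s) ∧
      (∀ i, 1 ≤ i → i ≤ N →
        (∀ φ : ℝ, 0 < (c0s φ) ^ (lam i / lam 0) * Real.exp (μbar i - z i * φ)) ∧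
        (∀ n : ℕ, ContDiff ℝ n (fun φ : ℝ => (c0s φ) ^ (lam i / lam 0) * Real.exp (μbar i - z i * φ))))) := by
  have hl0 := hlam 0 (Nat.zero_le N)
  have hla : ∀ j ∈ Finset.range (N+1), 0 < lam j := fun j hj =>
    hlam j (Nat.lt_succ_iff.mp (Finset.mem_range.mp hj))
  have hμbar0 : μbar 0 = 0 := by
    rw [hμbar, div_self (ne_of_gt hl0)]; ring
  -- Part 1: existence and uniqueness
  have key : ∀ φ : ℝ, ∃! t : ℝ, 0 < t ∧
      ∑ j ∈ Finset.range (N+1), lam j * t ^ (lam j / lam 0) * Real.exp (μbar j - z j * φ)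
        = μtilde0 := by
    intro φ
    set f : ℝ → ℝ := fun t => ∑ j ∈ Finset.range (N+1),
      lam j * t ^ (lam j / lam 0) * Real.exp (μbar j - z j * φ) with hfdef
    have hmono : StrictMonoOn f (Set.Ici 0) := by
      intro s hs t ht hst
      apply Finset.sum_lt_sum_of_nonempty (by simp)
      intro j hj
      have hlj := hla j hj
      have ha : 0 < lam j / lam 0 := div_pos hlj hl0
      have h1 : s ^ (lam j / lam 0) < t ^ (lam j / lam 0) := Real.rpow_lt_rpow hs hst ha
      exact mul_lt_mul_of_pos_right (mul_lt_mul_of_pos_left h1 hlj) (Real.exp_pos _)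
    have hcont : Continuous f := by
      apply continuous_finset_sum
      intro j hj
      have ha : 0 < lam j / lam 0 := div_pos (hla j hj) hl0
      have hc : Continuous fun t : ℝ => t ^ (lam j / lam 0) := by
        rw [continuous_iff_continuousAt]
        exact fun x => Real.continuousAt_rpow_const x _ (Or.inr ha.le)
      exact (continuous_const.mul hc).mul continuous_const
    have hf0 : f 0 = 0 := by
      apply Finset.sum_eq_zero
      intro j hj
      have ha : 0 < lam j / lam 0 := div_pos (hla j hj) hl0
      rw [Real.zero_rpow (ne_of_gt ha)]; ring
    set T : ℝ := μtilde0 / lam 0 with hT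
    have hT0 : 0 < T := div_pos hμt hl0
    have hfT : μtilde0 ≤ f T := by
      have h0 : lam 0 * T ^ (lam 0 / lam 0) * Real.exp (μbar 0 - z 0 * φ) = μtilde0 := by
        rw [div_self (ne_of_gt hl0), Real.rpow_one, hμbar0, hz0]
        simp [hT]
        field_simp
      calc μtilde0 = lam 0 * T ^ (lam 0 / lam 0) * Real.exp (μbar 0 - z 0 * φ) := h0.symm
      _ ≤ f T := by
          apply Finset.single_le_sum
            (f := fun j => lam j * T ^ (lam j / lam 0) * Real.exp (μbar j - z j * φ))
          · intro j hj
            have := hla j hj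
            positivity
          · simp
    have : μtilde0 ∈ f '' Set.Icc 0 T :=
      intermediate_value_Icc (le_of_lt hT0) hcont.continuousOn
        ⟨by rw [hf0]; exact le_of_lt hμt, hfT⟩
    obtain ⟨t, htmem, htf⟩ := this
    have ht0 : 0 < t := by
      rcases lt_or_eq_of_le htmem.1 with h | h
      · exact h
      · exfalso; rw [← h, hf0] at htf; exact (ne_of_gt hμt) htf.symm
    refine ⟨t, ⟨ht0, htf⟩, ?_⟩
    rintro s ⟨hs0, hsf⟩
    exact hmono.injOn (le_of_lt hs0) (le_of_lt ht0) (hsf.trans htf.symm)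
  refine ⟨key, ?_⟩
  intro c0s hpos heq
  -- smoothness of c0s
  have hsmooth : ∀ (n : ℕ) (φ₀ : ℝ), ContDiffAt ℝ ((n+1 : ℕ) : WithTop ℕ∞) c0s φ₀ := by
    intro n φ₀
    set m : WithTop ℕ∞ := ((n+1 : ℕ) : WithTop ℕ∞) with hmdef
    have hm : 1 ≤ m := by rw [hmdef]; exact_mod_cast Nat.succ_le_succ (Nat.zero_le n)
    set t₀ : ℝ := c0s φ₀ with ht₀def
    have ht₀ : 0 < t₀ := hpos φ₀
    set F : ℝ × ℝ → ℝ := fun p => ∑ j ∈ Finset.range (N+1),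
      lam j * p.2 ^ (lam j / lam 0) * Real.exp (μbar j - z j * p.1) with hFdef
    set x₀ : ℝ × ℝ := (φ₀, t₀) with hx₀
    have hF : ContDiffAt ℝ m F x₀ := by
      apply ContDiffAt.sum
      intro j hj
      have hrpow : ContDiffAt ℝ m (fun p : ℝ × ℝ => p.2 ^ (lam j / lam 0)) x₀ :=
        (Real.contDiffAt_rpow_const_of_ne (ne_of_gt ht₀)).comp x₀ contDiffAt_snd
      have hexp : ContDiffAt ℝ m (fun p : ℝ × ℝ => Real.exp (μbar j - z j * p.1)) x₀ :=
        Real.contDiff_exp.contDiffAt.comp x₀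
          (contDiffAt_const.sub (contDiffAt_const.mul contDiffAt_fst))
      exact (contDiffAt_const.mul hrpow).mul hexp
    have hslice : ∀ (φ t : ℝ), 0 < t → HasDerivAt (fun s : ℝ => ∑ j ∈ Finset.range (N+1),
        lam j * s ^ (lam j / lam 0) * Real.exp (μbar j - z j * φ))
        (∑ j ∈ Finset.range (N+1), lam j * ((lam j / lam 0) * t ^ (lam j / lam 0 - 1))
          * Real.exp (μbar j - z j * φ)) t := by
      intro φ t ht
      apply HasDerivAt.fun_sum
      intro j hj
      exact ((Real.hasDerivAt_rpow_const (Or.inl (ne_of_gt ht))).const_mul (lam j)).mul_const _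
    have hDpos : ∀ (φ t : ℝ), 0 < t → 0 < ∑ j ∈ Finset.range (N+1),
        lam j * ((lam j / lam 0) * t ^ (lam j / lam 0 - 1)) * Real.exp (μbar j - z j * φ) := by
      intro φ t ht
      apply Finset.sum_pos _ (by simp)
      intro j hj
      have h1 := hla j hj
      have h2 : 0 < lam j / lam 0 := div_pos h1 hl0
      have h3 : (0:ℝ) < t ^ (lam j / lam 0 - 1) := Real.rpow_pos_of_pos ht _
      positivity
    have hdF : DifferentiableAt ℝ F x₀ := hF.differentiableAt (one_pos.trans_le hm).ne'
    set L : ℝ × ℝ →L[ℝ] ℝ := fderiv ℝ F x₀ with hLdef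
    have hL : HasFDerivAt F L x₀ := hdF.hasFDerivAt
    set p : ℝ := L (1, 0) with hpdef
    set q : ℝ := L (0, 1) with hqdef
    have hLrepr : ∀ v : ℝ × ℝ, L v = p * v.1 + q * v.2 := by
      intro v
      have hv : v = v.1 • ((1:ℝ), (0:ℝ)) + v.2 • ((0:ℝ), (1:ℝ)) := by
        apply Prod.ext <;> simp
      nth_rewrite 1 [hv]
      rw [map_add, map_smul, map_smul, smul_eq_mul, smul_eq_mul, ← hpdef, ← hqdef]
      ring
    have hcurve : HasDerivAt (fun s : ℝ => ((φ₀, s) : ℝ × ℝ)) ((0,1) : ℝ × ℝ) t₀ :=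
      (hasDerivAt_const t₀ φ₀).prodMk (hasDerivAt_id t₀)
    have hcomp : HasDerivAt (fun s => F (φ₀, s)) (L (0,1)) t₀ :=
      hL.comp_hasDerivAt t₀ hcurve
    have hq : q = ∑ j ∈ Finset.range (N+1), lam j * ((lam j / lam 0) * t₀ ^ (lam j / lam 0 - 1))
        * Real.exp (μbar j - z j * φ₀) := hcomp.unique (hslice φ₀ t₀ ht₀)
    have hq0 : q ≠ 0 := by rw [hq]; exact ne_of_gt (hDpos φ₀ t₀ ht₀)
    set A : ℝ × ℝ →L[ℝ] ℝ × ℝ := (ContinuousLinearMap.fst ℝ ℝ ℝ).prod L with hAdef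
    set B : ℝ × ℝ →L[ℝ] ℝ × ℝ := (ContinuousLinearMap.fst ℝ ℝ ℝ).prod
      (q⁻¹ • (ContinuousLinearMap.snd ℝ ℝ ℝ - p • ContinuousLinearMap.fst ℝ ℝ ℝ)) with hBdef
    have hBA : Function.LeftInverse B A := by
      intro v
      apply Prod.ext
      · simp [hAdef, hBdef]
      · simp [hAdef, hBdef, hLrepr v]
        field_simp
    have hAB : Function.RightInverse B A := by
      intro v
      apply Prod.ext
      · simp [hAdef, hBdef]
      · simp [hAdef, hBdef, hLrepr]
        field_simp
        ring
    set e : (ℝ × ℝ) ≃L[ℝ] (ℝ × ℝ) := ContinuousLinearEquiv.equivOfInverse A B hBA hAB with hedef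
    set G : ℝ × ℝ → ℝ × ℝ := fun v => (v.1, F v) with hGdef
    have hG : ContDiffAt ℝ m G x₀ := contDiffAt_fst.prodMk hF
    have hG' : HasFDerivAt G (e : ℝ × ℝ →L[ℝ] ℝ × ℝ) x₀ := by
      have : HasFDerivAt G A x₀ := (hasFDerivAt_fst).prodMk hL
      exact this
    set g : ℝ × ℝ → ℝ × ℝ := hG.localInverse hG' (one_pos.trans_le hm).ne' with hgdef
    have hgs : ContDiffAt ℝ m g (G x₀) := hG.to_localInverse hG' (one_pos.trans_le hm).ne'
    have hstrict : HasStrictFDerivAt G (e : ℝ × ℝ →L[ℝ] ℝ × ℝ) x₀ := hG.hasStrictFDerivAt' hG' (one_pos.trans_le hm).ne'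
    have hri : ∀ᶠ y in 𝓝 (G x₀), G (g y) = y := hstrict.eventually_right_inverse
    have hgc : ContinuousAt g (G x₀) := hstrict.localInverse_continuousAt
    have hgx : g (G x₀) = x₀ := hG.localInverse_apply_image hG' (one_pos.trans_le hm).ne'
    have hGx₀ : G x₀ = (φ₀, μtilde0) := by
      rw [hGdef]
      simp only [hx₀]
      rw [hFdef]
      simp only
      rw [heq φ₀]
    -- the locally defined inverse function
    set h : ℝ → ℝ := fun φ => (g (φ, μtilde0)).2 with hhdef
    have hcurve2 : ContinuousAt (fun φ : ℝ => ((φ, μtilde0) : ℝ × ℝ)) φ₀ :=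
      continuousAt_id.prodMk continuousAt_const
    have htends : Tendsto (fun φ : ℝ => ((φ, μtilde0) : ℝ × ℝ)) (𝓝 φ₀) (𝓝 (G x₀)) := by
      rw [hGx₀]; exact hcurve2
    have hh_cd : ContDiffAt ℝ m h φ₀ := by
      have h1 : ContDiffAt ℝ m (fun φ : ℝ => ((φ, μtilde0) : ℝ × ℝ)) φ₀ :=
        contDiffAt_id.prodMk contDiffAt_const
      have h2 : ContDiffAt ℝ m (fun φ : ℝ => g (φ, μtilde0)) φ₀ :=
        ContDiffAt.comp φ₀ (hGx₀ ▸ hgs) h1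
      exact contDiffAt_snd.comp φ₀ h2
    have hh_cont : ContinuousAt h φ₀ := hh_cd.continuousAt
    have hhφ₀ : h φ₀ = t₀ := by
      rw [hhdef]
      simp only
      rw [show ((φ₀, μtilde0) : ℝ × ℝ) = G x₀ from hGx₀.symm, hgx]
    have hev_pos : ∀ᶠ φ in 𝓝 φ₀, 0 < h φ :=
      hh_cont.eventually (eventually_gt_nhds (by rw [hhφ₀]; exact ht₀))
    have hev_eq : ∀ᶠ φ in 𝓝 φ₀, G (g (φ, μtilde0)) = (φ, μtilde0) := htends.eventually hri
    have hfinal : ∀ᶠ φ in 𝓝 φ₀, c0s φ = h φ := by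
      filter_upwards [hev_pos, hev_eq] with φ h1 h2
      have hfst : (g (φ, μtilde0)).1 = φ := congrArg Prod.fst h2
      have hsnd : F (g (φ, μtilde0)) = μtilde0 := congrArg Prod.snd h2
      have hFh : F (φ, h φ) = μtilde0 := by
        have hgg : ((φ, h φ) : ℝ × ℝ) = g (φ, μtilde0) := by
          apply Prod.ext
          · exact hfst.symm
          · rfl
        rw [hgg]; exact hsnd
      obtain ⟨t, ht, huniq⟩ := key φ
      have e1 : c0s φ = t := huniq _ ⟨hpos φ, heq φ⟩
      have e2 : h φ = t := huniq _ ⟨h1, hFh⟩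
      rw [e1, e2]
    exact hh_cd.congr_of_eventuallyEq hfinal
  have hcd : ∀ n : ℕ, ContDiff ℝ n c0s := by
    intro n
    rw [contDiff_iff_contDiffAt]
    intro φ
    exact (hsmooth n φ).of_le (by exact_mod_cast Nat.le_succ n)
  refine ⟨hcd, ?_⟩
  intro i h1i hiN
  constructor
  · intro φ
    exact mul_pos (Real.rpow_pos_of_pos (hpos φ) _) (Real.exp_pos _)
  · intro n
    rw [contDiff_iff_contDiffAt]
    intro φ
    have hr : ContDiffAt ℝ n (fun φ : ℝ => (c0s φ) ^ (lam i / lam 0)) φ :=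
      (Real.contDiffAt_rpow_const_of_ne (ne_of_gt (hpos φ))).comp φ ((hcd n).contDiffAt)
    have hexp : ContDiffAt ℝ n (fun φ : ℝ => Real.exp (μbar i - z i * φ)) φ :=
      Real.contDiff_exp.contDiffAt.comp φ
        (contDiffAt_const.sub (contDiffAt_const.mul contDiffAt_id))
    exact hr.mul hexp
end

section
/- For every i ∈ {0, 1, …, N}, every m ∈ ℕ, and all reals a < b, c_{i,Λ} converges to c_i^* in C^m[a,b] as Λ → ∞; that is, lim_{Λ→∞} ∑_{k=0}^m sup_{φ ∈ [a,b]} |c_{i,Λ}^{(k)}(φ) − (c_i^*)^{(k)}(φ)| = 0, where the superscript (k) denotes the k-th derivative. -/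
open Filter Real Set



noncomputable def pd2 (F : ℝ × ℝ → ℝ) (q : ℝ × ℝ) : ℝ := fderiv ℝ F q (0, 1)

noncomputable def kseq (K : ℝ × ℝ → ℝ) : ℕ → ℝ × ℝ → ℝ
  | 0 => K
  | j+1 => pd2 (kseq K j)

lemma kseq_contDiffOn {K : ℝ × ℝ → ℝ} {W : Set (ℝ × ℝ)} (hW : IsOpen W) {n : ℕ}
    (hK : ContDiffOn ℝ n K W) : ∀ j, j ≤ n → ContDiffOn ℝ ((n - j : ℕ) : ℕ∞) (kseq K j) W := by
  intro j
  induction j with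
  | zero => intro _; simpa [kseq] using hK
  | succ j ih =>
    intro hj
    have ihj : ContDiffOn ℝ ((n - j : ℕ) : ℕ∞) (kseq K j) W := ih (by omega)
    have h1 : ContDiffOn ℝ ((n - (j+1) : ℕ) : ℕ∞) (fderiv ℝ (kseq K j)) W := by
      apply ihj.fderiv_of_isOpen hW
      exact_mod_cast (by omega : (n - (j+1)) + 1 ≤ n - j)
    exact (h1.clm_apply contDiffOn_const)

lemma kseq_slice {K : ℝ × ℝ → ℝ} {W : Set (ℝ × ℝ)} (hW : IsOpen W) {n : ℕ}
    (hK : ContDiffOn ℝ n K W) :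
    ∀ j, j < n → ∀ t ψ, (t, ψ) ∈ W →
      iteratedDeriv j (fun y => K (t, y)) ψ = kseq K j (t, ψ) := by
  intro j
  induction j with
  | zero => intro _ t ψ _; simp [kseq]
  | succ j ih =>
    intro hj t ψ hq
    have hsl : IsOpen {y : ℝ | (t, y) ∈ W} := hW.preimage (by fun_prop)
    have hEq : (iteratedDeriv j fun y => K (t, y)) =ᶠ[nhds ψ] fun y => kseq K j (t, y) := by
      filter_upwards [hsl.mem_nhds hq] with y hy
      exact ih (by omega) t y hy
    rw [iteratedDeriv_succ, hEq.deriv_eq]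
    have hcd : ContDiffOn ℝ ((n - j : ℕ) : ℕ∞) (kseq K j) W := kseq_contDiffOn hW hK j (by omega)
    have hdiff : DifferentiableAt ℝ (kseq K j) (t, ψ) := by
      have : DifferentiableOn ℝ (kseq K j) W := hcd.differentiableOn (by exact_mod_cast (by omega : n - j ≠ 0))
      exact (this (t, ψ) hq).differentiableAt (hW.mem_nhds hq)
    have hder : HasDerivAt (fun y => kseq K j (t, y)) (fderiv ℝ (kseq K j) (t, ψ) (0, 1)) ψ := by
      have hline : HasDerivAt (fun y : ℝ => ((t, y) : ℝ × ℝ)) ((0 : ℝ), (1 : ℝ)) ψ :=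
        (hasDerivAt_const ψ t).prodMk (hasDerivAt_id ψ)
      exact hdiff.hasFDerivAt.comp_hasDerivAt ψ hline
    exact hder.deriv



noncomputable def Gf (N : ℕ) (lam μbar z : ℕ → ℝ) (u φ : ℝ) : ℝ :=
  ∑ j ∈ Finset.range (N+1), lam j * Real.exp (u * (lam j / lam 0) + (μbar j - z j * φ))

noncomputable def Hf (N : ℕ) (lam μbar z : ℕ → ℝ) (μhat0 : ℝ) (x : ℝ × ℝ × ℝ) : ℝ :=
  x.1 * x.2.2 + Gf N lam μbar z x.2.2 x.2.1 - x.1 * μhat0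

lemma Hf_contDiff (N : ℕ) (lam μbar z : ℕ → ℝ) (μhat0 : ℝ) :
    ContDiff ℝ ((⊤ : ℕ∞) : WithTop ℕ∞) (Hf N lam μbar z μhat0) := by
  apply ContDiff.sub
  · apply ContDiff.add
    · exact contDiff_fst.mul (contDiff_snd.comp contDiff_snd)
    · apply ContDiff.sum
      intro j _
      apply ContDiff.mul contDiff_const
      apply ContDiff.exp
      exact ((contDiff_snd.comp contDiff_snd).mul contDiff_const).add
        (contDiff_const.sub (contDiff_const.mul (contDiff_fst.comp contDiff_snd)))
  · exact contDiff_fst.mul contDiff_const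

lemma Gf_strictMono (N : ℕ) (lam μbar z : ℕ → ℝ) (hlam : ∀ j, j ≤ N → 0 < lam j)
    {t : ℝ} (ht : 0 ≤ t) (φ : ℝ) :
    StrictMono (fun u => t * u + Gf N lam μbar z u φ) := by
  intro u v huv
  have h1 : t * u ≤ t * v := mul_le_mul_of_nonneg_left huv.le ht
  have h2 : Gf N lam μbar z u φ < Gf N lam μbar z v φ := by
    apply Finset.sum_lt_sum_of_nonempty (by simp)
    intro j hj
    have hlj : 0 < lam j := hlam j (by simpa using Nat.lt_succ_iff.mp (Finset.mem_range.mp hj))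
    have hp : 0 < lam j / lam 0 := div_pos hlj (hlam 0 (by omega))
    have : u * (lam j / lam 0) < v * (lam j / lam 0) := by
      exact mul_lt_mul_of_pos_right huv hp
    exact mul_lt_mul_of_pos_left (Real.exp_lt_exp.mpr (by linarith)) hlj
  exact add_lt_add_of_le_of_lt h1 h2

lemma Gf_hasDerivAt (N : ℕ) (lam μbar z : ℕ → ℝ) (u0 φ : ℝ) :
    HasDerivAt (fun u => Gf N lam μbar z u φ)
      (∑ j ∈ Finset.range (N+1),
        lam j * (Real.exp (u0 * (lam j / lam 0) + (μbar j - z j * φ)) * (lam j / lam 0))) u0 := by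
  apply HasDerivAt.fun_sum
  intro j _
  have h1 : HasDerivAt (fun u : ℝ => u * (lam j / lam 0) + (μbar j - z j * φ)) (lam j / lam 0) u0 :=
    by simpa using ((hasDerivAt_id u0).mul_const (lam j / lam 0)).add_const (μbar j - z j * φ)
  exact (h1.exp).const_mul (lam j)

lemma Gf_deriv_pos (N : ℕ) (lam μbar z : ℕ → ℝ) (hlam : ∀ j, j ≤ N → 0 < lam j) (u0 φ : ℝ) :
    0 < ∑ j ∈ Finset.range (N+1),
        lam j * (Real.exp (u0 * (lam j / lam 0) + (μbar j - z j * φ)) * (lam j / lam 0)) := by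
  apply Finset.sum_pos _ (by simp)
  intro j hj
  have hlj : 0 < lam j := hlam j (by simpa using Nat.lt_succ_iff.mp (Finset.mem_range.mp hj))
  have hp : 0 < lam j / lam 0 := div_pos hlj (hlam 0 (by omega))
  positivity

lemma local_package (N : ℕ) (lam μbar z : ℕ → ℝ) (μhat0 μt : ℝ)
    (hlam : ∀ j, j ≤ N → 0 < lam j) (φ0 u0 : ℝ)
    (hu0 : Gf N lam μbar z u0 φ0 = μt) (m : ℕ) :
    ∃ W : Set (ℝ × ℝ), IsOpen W ∧ ((0:ℝ), φ0) ∈ W ∧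
      ∃ Ψ : ℝ × ℝ → ℝ, ContDiffOn ℝ ((m+1 : ℕ) : ℕ∞) Ψ W ∧
        ∀ q ∈ W, q.1 * Ψ q + Gf N lam μbar z (Ψ q) q.2 - q.1 * μhat0 = μt := by
  set n : WithTop ℕ∞ := ((⊤ : ℕ∞) : WithTop ℕ∞) with hn_def
  have hn1 : 1 ≤ n := by rw [hn_def]; exact_mod_cast (le_top : (1:ℕ∞) ≤ ⊤)
  set H : ℝ × ℝ × ℝ → ℝ := Hf N lam μbar z μhat0 with hH_def
  have hHcd : ContDiff ℝ n H := Hf_contDiff N lam μbar z μhat0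
  set pt : ℝ × ℝ × ℝ := (0, φ0, u0) with hpt_def
  set Q : ℝ × ℝ × ℝ → ℝ × ℝ × ℝ := fun x => (x.1, x.2.1, H x) with hQ_def
  have hQcd : ContDiffAt ℝ n Q pt :=
    (contDiff_fst.prodMk ((contDiff_fst.comp contDiff_snd).prodMk hHcd)).contDiffAt
  set D : ℝ × ℝ × ℝ →L[ℝ] ℝ := fderiv ℝ H pt with hD_def
  have hHd : HasFDerivAt H D pt :=
    ((hHcd.differentiable (zero_lt_one.trans_le hn1).ne') pt).hasFDerivAt
  set C : ℝ := D (0, 0, 1) with hC_def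
  -- C is the u-partial derivative of H, positive
  have hC : 0 < C := by
    have hline : HasDerivAt (fun u : ℝ => ((0:ℝ), φ0, u)) ((0:ℝ), (0:ℝ), (1:ℝ)) u0 :=
      (hasDerivAt_const u0 (0:ℝ)).prodMk ((hasDerivAt_const u0 φ0).prodMk (hasDerivAt_id u0))
    have h1 : HasDerivAt (fun u => H (0, φ0, u)) C u0 := by
      have := hHd.comp_hasDerivAt u0 hline; exact this
    have hfun : (fun u => H (0, φ0, u)) = fun u => Gf N lam μbar z u φ0 := by
      funext u; simp [hH_def, Hf]
    rw [hfun] at h1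
    have h2 := Gf_hasDerivAt N lam μbar z u0 φ0
    rw [h1.unique h2]
    exact Gf_deriv_pos N lam μbar z hlam u0 φ0
  -- build the continuous linear equiv
  set P1 : ℝ × ℝ × ℝ →L[ℝ] ℝ := ContinuousLinearMap.fst ℝ ℝ (ℝ × ℝ) with hP1
  set P2 : ℝ × ℝ × ℝ →L[ℝ] ℝ :=
    (ContinuousLinearMap.fst ℝ ℝ ℝ).comp (ContinuousLinearMap.snd ℝ ℝ (ℝ × ℝ)) with hP2
  set P3 : ℝ × ℝ × ℝ →L[ℝ] ℝ :=
    (ContinuousLinearMap.snd ℝ ℝ ℝ).comp (ContinuousLinearMap.snd ℝ ℝ (ℝ × ℝ)) with hP3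
  set J : ℝ × ℝ × ℝ →L[ℝ] ℝ × ℝ × ℝ := P1.prod (P2.prod 0) with hJ
  set L : ℝ × ℝ × ℝ →L[ℝ] ℝ × ℝ × ℝ := P1.prod (P2.prod D) with hL
  set Minv : ℝ × ℝ × ℝ →L[ℝ] ℝ × ℝ × ℝ :=
    P1.prod (P2.prod (C⁻¹ • (P3 - D.comp J))) with hM
  have hkey : ∀ x : ℝ × ℝ × ℝ, D x = D (x.1, x.2.1, 0) + x.2.2 * C := by
    intro x
    have hx : x = (x.1, x.2.1, (0:ℝ)) + x.2.2 • ((0:ℝ), (0:ℝ), (1:ℝ)) := by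
      ext <;> simp
    calc D x = D ((x.1, x.2.1, (0:ℝ)) + x.2.2 • ((0:ℝ), (0:ℝ), (1:ℝ))) := by rw [← hx]
      _ = D (x.1, x.2.1, (0:ℝ)) + x.2.2 * D (0, 0, 1) := by
          rw [map_add, map_smul]; simp
      _ = D (x.1, x.2.1, 0) + x.2.2 * C := rfl
  have hCne : C ≠ 0 := ne_of_gt hC
  have hLapp : ∀ y : ℝ × ℝ × ℝ, L y = (y.1, y.2.1, D y) := fun y => rfl
  have hMapp : ∀ y : ℝ × ℝ × ℝ, Minv y = (y.1, y.2.1, C⁻¹ * (y.2.2 - D (y.1, y.2.1, 0))) :=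
    fun y => rfl
  set e : (ℝ × ℝ × ℝ) ≃L[ℝ] (ℝ × ℝ × ℝ) := ContinuousLinearEquiv.equivOfInverse L Minv
    (by
      intro x
      rw [hLapp, hMapp]
      refine Prod.ext rfl (Prod.ext rfl ?_)
      show C⁻¹ * (D x - D (x.1, x.2.1, 0)) = x.2.2
      rw [hkey x]
      field_simp
      ring
    )
    (by
      intro y
      rw [hMapp, hLapp]
      refine Prod.ext rfl (Prod.ext rfl ?_)
      show D (y.1, y.2.1, C⁻¹ * (y.2.2 - D (y.1, y.2.1, 0))) = y.2.2
      rw [hkey (y.1, y.2.1, C⁻¹ * (y.2.2 - D (y.1, y.2.1, 0)))]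
      show D (y.1, y.2.1, 0) + C⁻¹ * (y.2.2 - D (y.1, y.2.1, 0)) * C = y.2.2
      field_simp
      ring
    ) with he
  have hecoe : (e : ℝ × ℝ × ℝ →L[ℝ] ℝ × ℝ × ℝ) = L := rfl
  have hQL : HasFDerivAt Q (e : ℝ × ℝ × ℝ →L[ℝ] ℝ × ℝ × ℝ) pt := by
    rw [hecoe]
    exact (P1.hasFDerivAt).prodMk ((P2.hasFDerivAt).prodMk hHd)
  -- the local inverse
  set g : ℝ × ℝ × ℝ → ℝ × ℝ × ℝ := hQcd.localInverse hQL (zero_lt_one.trans_le hn1).ne' with hg_def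
  have hgcd : ContDiffAt ℝ n g (Q pt) := hQcd.to_localInverse hQL (zero_lt_one.trans_le hn1).ne'
  have hs : HasStrictFDerivAt Q (e : ℝ × ℝ × ℝ →L[ℝ] ℝ × ℝ × ℝ) pt :=
    hQcd.hasStrictFDerivAt' hQL (zero_lt_one.trans_le hn1).ne'
  have hright : ∀ᶠ y in nhds (Q pt), Q (g y) = y := hs.eventually_right_inverse
  have hQpt : Q pt = (0, φ0, μt) := by
    show ((0:ℝ), φ0, H pt) = (0, φ0, μt)
    have : H pt = μt := by simp [hH_def, Hf, hpt_def, hu0]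
    rw [this]
  set Ψ : ℝ × ℝ → ℝ := fun q => (g (q.1, q.2, μt)).2.2 with hΨ_def
  have hΨcd : ContDiffAt ℝ n Ψ ((0:ℝ), φ0) := by
    have hf1 : ContDiff ℝ n (fun q : ℝ × ℝ => ((q.1, q.2, μt) : ℝ × ℝ × ℝ)) :=
      contDiff_fst.prodMk (contDiff_snd.prodMk contDiff_const)
    rw [hQpt] at hgcd
    have h2' : ContDiffAt ℝ n (fun q : ℝ × ℝ => g (q.1, q.2, μt)) ((0:ℝ), φ0) :=
      ContDiffAt.comp _ hgcd hf1.contDiffAt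
    exact ContDiffAt.comp (g := fun x : ℝ × ℝ × ℝ => x.2.2)
      (f := fun q : ℝ × ℝ => g (q.1, q.2, μt)) ((0:ℝ), φ0)
      contDiff_snd.snd.contDiffAt h2'
  have heq : ∀ᶠ q : ℝ × ℝ in nhds ((0:ℝ), φ0),
      q.1 * Ψ q + Gf N lam μbar z (Ψ q) q.2 - q.1 * μhat0 = μt := by
    have hcont : ContinuousAt (fun q : ℝ × ℝ => ((q.1, q.2, μt) : ℝ × ℝ × ℝ)) ((0:ℝ), φ0) := by
      fun_prop
    have hmap : Filter.Tendsto (fun q : ℝ × ℝ => ((q.1, q.2, μt) : ℝ × ℝ × ℝ))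
        (nhds ((0:ℝ), φ0)) (nhds (Q pt)) := by
      rw [hQpt]; exact hcont.tendsto
    filter_upwards [hmap.eventually hright] with q hq
    set y := g (q.1, q.2, μt) with hy
    have h1 : y.1 = q.1 := congrArg Prod.fst hq
    have h2 : y.2.1 = q.2 := congrArg (fun p => p.2.1) hq
    have h3 : H y = μt := congrArg (fun p : ℝ × ℝ × ℝ => p.2.2) hq
    have : H y = q.1 * Ψ q + Gf N lam μbar z (Ψ q) q.2 - q.1 * μhat0 := by
      show y.1 * y.2.2 + Gf N lam μbar z y.2.2 y.2.1 - y.1 * μhat0 = _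
      rw [h1, h2]
    rw [← this, h3]
  obtain ⟨u, hu, hucd⟩ := hΨcd.contDiffOn
    (m := ((m+1 : ℕ) : WithTop ℕ∞))
    (by rw [hn_def]; exact_mod_cast (le_top : ((m+1:ℕ) : ℕ∞) ≤ ⊤))
    (by
      intro h
      exfalso
      have h2 : ((m+1 : ℕ) : ℕ∞) = ⊤ := by exact_mod_cast h
      exact (WithTop.natCast_ne_top (m+1)) h2)
  set V := {q : ℝ × ℝ | q.1 * Ψ q + Gf N lam μbar z (Ψ q) q.2 - q.1 * μhat0 = μt} with hV
  refine ⟨interior u ∩ interior V, isOpen_interior.inter isOpen_interior, ⟨?_, ?_⟩, Ψ, ?_, ?_⟩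
  · exact mem_interior_iff_mem_nhds.mpr hu
  · exact mem_interior_iff_mem_nhds.mpr heq
  · have h3 : ContDiffOn ℝ ((m+1 : ℕ) : WithTop ℕ∞) Ψ (interior u ∩ interior V) :=
      hucd.mono (Set.inter_subset_left.trans interior_subset)
    exact_mod_cast h3
  · intro q hq
    have h : q ∈ V := interior_subset hq.2
    exact h

lemma rpow_exp_trans {c : ℝ} (hc : 0 < c) (p q : ℝ) :
    c ^ p * Real.exp q = Real.exp (Real.log c * p + q) := by
  rw [Real.rpow_def_of_pos hc, ← Real.exp_add]

lemma local_main
    (N : ℕ)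
    (z lam μhat : ℕ → ℝ) (μtilde0 : ℝ)
    (hlam : ∀ i, i ≤ N → 0 < lam i)
    (μbar : ℕ → ℝ)
    (c0 : ℝ → ℝ → ℝ)
    (hc0pos : ∀ Λ : ℝ, 0 < Λ → ∀ φ, 0 < c0 Λ φ)
    (hc0eq : ∀ Λ : ℝ, 0 < Λ → ∀ φ : ℝ, Real.log (c0 Λ φ)
        + Λ * lam 0 * ∑ j ∈ Finset.range (N+1),
            lam j * (c0 Λ φ) ^ (lam j / lam 0) * Real.exp (μbar j - z j * φ)
      = Λ * lam 0 * μtilde0 + μhat 0)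
    (c0s : ℝ → ℝ) (hc0spos : ∀ φ, 0 < c0s φ)
    (hc0seq : ∀ φ : ℝ, ∑ j ∈ Finset.range (N+1),
        lam j * (c0s φ) ^ (lam j / lam 0) * Real.exp (μbar j - z j * φ) = μtilde0)
    (i : ℕ) (m : ℕ) (φ0 : ℝ) :
    ∃ W : Set (ℝ × ℝ), IsOpen W ∧ ((0:ℝ), φ0) ∈ W ∧
      ∃ Kk : ℕ → ℝ × ℝ → ℝ,
        (∀ k, k ≤ m → ContinuousOn (Kk k) W) ∧
        (∀ k, k ≤ m → ∀ t : ℝ, 0 < t → ∀ ψ : ℝ, (t, ψ) ∈ W →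
          iteratedDeriv k (fun ψ' : ℝ =>
            (c0 (1/(t * lam 0)) ψ') ^ (lam i / lam 0) * Real.exp (μbar i - z i * ψ')) ψ
            = Kk k (t, ψ)) ∧
        (∀ k, k ≤ m → ∀ ψ : ℝ, ((0:ℝ), ψ) ∈ W →
          iteratedDeriv k (fun ψ' : ℝ =>
            (c0s ψ') ^ (lam i / lam 0) * Real.exp (μbar i - z i * ψ')) ψ
            = Kk k (0, ψ)) := by
  have hlam0 : 0 < lam 0 := hlam 0 (Nat.zero_le N)
  -- the stationary equation in terms of Gf
  have hGS : ∀ φ, Gf N lam μbar z (Real.log (c0s φ)) φ = μtilde0 := by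
    intro φ
    rw [← hc0seq φ]
    apply Finset.sum_congr rfl
    intro j _
    rw [mul_assoc, rpow_exp_trans (hc0spos φ)]
  -- the scaled equation for positive t
  have hGL : ∀ t : ℝ, 0 < t → ∀ φ : ℝ,
      t * Real.log (c0 (1/(t * lam 0)) φ) + Gf N lam μbar z (Real.log (c0 (1/(t * lam 0)) φ)) φ
        = μtilde0 + t * μhat 0 := by
    intro t ht φ
    have hΛ : 0 < 1/(t * lam 0) := by positivity
    have hE := hc0eq (1/(t * lam 0)) hΛ φ
    have hsum : ∑ j ∈ Finset.range (N+1),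
        lam j * (c0 (1/(t * lam 0)) φ) ^ (lam j / lam 0) * Real.exp (μbar j - z j * φ)
        = Gf N lam μbar z (Real.log (c0 (1/(t * lam 0)) φ)) φ := by
      apply Finset.sum_congr rfl
      intro j _
      rw [mul_assoc, rpow_exp_trans (hc0pos _ hΛ φ)]
    rw [hsum] at hE
    have hmul : (1/(t * lam 0)) * lam 0 = 1/t := by
      field_simp
    rw [hmul] at hE
    have ht' : t ≠ 0 := ne_of_gt ht
    field_simp at hE ⊢
    linarith
  obtain ⟨W, hWopen, hWmem, Ψ, hΨcd, hΨeq⟩ :=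
    local_package N lam μbar z (μhat 0) μtilde0 hlam φ0 (Real.log (c0s φ0)) (hGS φ0) m
  -- uniqueness identifications
  have hid_pos : ∀ t : ℝ, 0 < t → ∀ ψ : ℝ, (t, ψ) ∈ W →
      Ψ (t, ψ) = Real.log (c0 (1/(t * lam 0)) ψ) := by
    intro t ht ψ hq
    have h1 := hΨeq (t, ψ) hq
    have h2 := hGL t ht ψ
    have hmono := Gf_strictMono N lam μbar z hlam ht.le ψ
    apply hmono.injective
    show t * Ψ (t, ψ) + Gf N lam μbar z (Ψ (t, ψ)) ψ = _
    simp only [] at h1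
    linarith
  have hid_zero : ∀ ψ : ℝ, ((0:ℝ), ψ) ∈ W → Ψ (0, ψ) = Real.log (c0s ψ) := by
    intro ψ hq
    have h1 := hΨeq (0, ψ) hq
    have h2 := hGS ψ
    have hmono := Gf_strictMono N lam μbar z hlam (le_refl (0:ℝ)) ψ
    apply hmono.injective
    show 0 * Ψ (0, ψ) + Gf N lam μbar z (Ψ (0, ψ)) ψ = 0 * Real.log (c0s ψ) + _
    simp only [] at h1
    linarith
  -- the output function
  set K : ℝ × ℝ → ℝ := fun q =>
    Real.exp (Ψ q * (lam i / lam 0) + (μbar i - z i * q.2)) with hK_def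
  have hKcd : ContDiffOn ℝ ((m+1 : ℕ) : ℕ∞) K W := by
    apply ContDiffOn.exp
    exact (hΨcd.mul contDiffOn_const).add
      (contDiffOn_const.sub (contDiffOn_const.mul (contDiff_snd.contDiffOn)))
  refine ⟨W, hWopen, hWmem, kseq K, ?_, ?_, ?_⟩
  · intro k hk
    exact (kseq_contDiffOn hWopen hKcd k (by omega)).continuousOn
  · intro k hk t ht ψ hq
    have hfeq : (fun ψ' : ℝ =>
        (c0 (1/(t * lam 0)) ψ') ^ (lam i / lam 0) * Real.exp (μbar i - z i * ψ'))
        =ᶠ[nhds ψ] (fun y => K (t, y)) := by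
      have hsl : IsOpen {y : ℝ | (t, y) ∈ W} := hWopen.preimage (by fun_prop)
      filter_upwards [hsl.mem_nhds hq] with y hy
      have hΛ : 0 < 1/(t * lam 0) := by positivity
      rw [rpow_exp_trans (hc0pos _ hΛ y), hK_def]
      simp only []
      rw [hid_pos t ht y hy]
    rw [hfeq.iteratedDeriv_eq k]
    exact kseq_slice hWopen hKcd k (by omega) t ψ hq
  · intro k hk ψ hq
    have hfeq : (fun ψ' : ℝ =>
        (c0s ψ') ^ (lam i / lam 0) * Real.exp (μbar i - z i * ψ'))
        =ᶠ[nhds ψ] (fun y => K (0, y)) := by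
      have hsl : IsOpen {y : ℝ | ((0:ℝ), y) ∈ W} := hWopen.preimage (by fun_prop)
      filter_upwards [hsl.mem_nhds hq] with y hy
      rw [rpow_exp_trans (hc0spos y), hK_def]
      simp only []
      rw [hid_zero y hy]
    rw [hfeq.iteratedDeriv_eq k]
    exact kseq_slice hWopen hKcd k (by omega) 0 ψ hq

theorem stmt8
    (N : ℕ) (hN : 1 ≤ N)
    (z lam μhat : ℕ → ℝ) (μtilde0 : ℝ)
    (hz0 : z 0 = 0)
    (hzne : ∀ i, 1 ≤ i → i ≤ N → z i ≠ 0)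
    (hmix : ∃ i j, 1 ≤ i ∧ i ≤ N ∧ 1 ≤ j ∧ j ≤ N ∧ z i * z j < 0)
    (hlam : ∀ i, i ≤ N → 0 < lam i)
    (hμt : 0 < μtilde0)
    (hμhat : ∀ i, i ≤ N → 0 < μhat i)
    (μbar : ℕ → ℝ) (hμbar : ∀ i, μbar i = μhat i - lam i / lam 0 * μhat 0)
    (c0 : ℝ → ℝ → ℝ)
    (hc0pos : ∀ Λ : ℝ, 0 < Λ → ∀ φ, 0 < c0 Λ φ)
    (hc0eq : ∀ Λ : ℝ, 0 < Λ → ∀ φ : ℝ, Real.log (c0 Λ φ)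
        + Λ * lam 0 * ∑ j ∈ Finset.range (N+1),
            lam j * (c0 Λ φ) ^ (lam j / lam 0) * Real.exp (μbar j - z j * φ)
      = Λ * lam 0 * μtilde0 + μhat 0)
    (c0s : ℝ → ℝ) (hc0spos : ∀ φ, 0 < c0s φ)
    (hc0seq : ∀ φ : ℝ, ∑ j ∈ Finset.range (N+1),
        lam j * (c0s φ) ^ (lam j / lam 0) * Real.exp (μbar j - z j * φ) = μtilde0)
    :
    ∀ i, i ≤ N → ∀ m : ℕ, ∀ a b : ℝ, a < b →
      Filter.Tendsto (fun Λ : ℝ => ∑ k ∈ Finset.range (m+1),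
          ⨆ φ : Set.Icc a b,
            |iteratedDeriv k (fun ψ : ℝ => ((c0 Λ) ψ) ^ (lam i / lam 0) * Real.exp (μbar i - z i * ψ)) ↑φ
              - iteratedDeriv k (fun ψ : ℝ => (c0s ψ) ^ (lam i / lam 0) * Real.exp (μbar i - z i * ψ)) ↑φ|)
        Filter.atTop (nhds 0) := by
  intro i hi m a b hab
  have hlam0 : 0 < lam 0 := hlam 0 (Nat.zero_le N)
  haveI : Nonempty (Set.Icc a b) := Set.Nonempty.to_subtype (Set.nonempty_Icc.mpr hab.le)
  -- key epsilon-delta statement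
  have key : ∀ k : ℕ, ∀ η : ℝ, 0 < η → ∃ Λ0 : ℝ, 0 ≤ Λ0 ∧ ∀ Λ : ℝ, Λ0 < Λ →
      ∀ ψ : ℝ, ψ ∈ Set.Icc a b → k ≤ m →
      |iteratedDeriv k (fun ψ' : ℝ =>
          (c0 Λ ψ') ^ (lam i / lam 0) * Real.exp (μbar i - z i * ψ')) ψ
        - iteratedDeriv k (fun ψ' : ℝ =>
          (c0s ψ') ^ (lam i / lam 0) * Real.exp (μbar i - z i * ψ')) ψ| ≤ η := by
    intro k η hη
    by_cases hk : k ≤ m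
    swap
    · exact ⟨0, le_refl _, fun Λ _ ψ _ hk' => absurd hk' hk⟩
    -- local statement around each φ0
    have hloc : ∀ φ0 : ℝ, ∃ ε : ℝ, 0 < ε ∧ ∀ t : ℝ, 0 < t → t < ε → ∀ ψ : ℝ, |ψ - φ0| < ε →
        |iteratedDeriv k (fun ψ' : ℝ =>
            (c0 (1/(t * lam 0)) ψ') ^ (lam i / lam 0) * Real.exp (μbar i - z i * ψ')) ψ
          - iteratedDeriv k (fun ψ' : ℝ =>
            (c0s ψ') ^ (lam i / lam 0) * Real.exp (μbar i - z i * ψ')) ψ| ≤ η := by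
      intro φ0
      obtain ⟨W, hWo, hWm, Kk, hcont, hidp, hid0⟩ :=
        local_main N z lam μhat μtilde0 hlam μbar c0 hc0pos hc0eq c0s hc0spos hc0seq i m φ0
      have hCA : ContinuousAt (Kk k) ((0:ℝ), φ0) :=
        (hcont k hk).continuousAt (hWo.mem_nhds hWm)
      obtain ⟨ε1, hε1, hball⟩ := Metric.continuousAt_iff.mp hCA (η/2) (by positivity)
      obtain ⟨ε2, hε2, hsub⟩ := Metric.mem_nhds_iff.mp (hWo.mem_nhds hWm)
      refine ⟨min ε1 ε2, lt_min hε1 hε2, ?_⟩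
      intro t ht htε ψ hψ
      have hd1 : dist ((t, ψ) : ℝ × ℝ) ((0:ℝ), φ0) < min ε1 ε2 := by
        rw [Prod.dist_eq]
        apply max_lt
        · show |(t, ψ).1 - ((0:ℝ), φ0).1| < _
          simp only [sub_zero]
          rw [abs_of_pos ht]
          exact htε
        · exact hψ
      have hd0 : dist (((0:ℝ), ψ) : ℝ × ℝ) ((0:ℝ), φ0) < min ε1 ε2 := by
        rw [Prod.dist_eq]
        apply max_lt
        · show |((0:ℝ), ψ).1 - ((0:ℝ), φ0).1| < _
          simp only [sub_zero, sub_self, abs_zero]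
          exact lt_min hε1 hε2
        · exact hψ
      have hmem1 : ((t, ψ) : ℝ × ℝ) ∈ W := hsub (by
        rw [Metric.mem_ball]; exact lt_of_lt_of_le hd1 (min_le_right _ _))
      have hmem0 : (((0:ℝ), ψ) : ℝ × ℝ) ∈ W := hsub (by
        rw [Metric.mem_ball]; exact lt_of_lt_of_le hd0 (min_le_right _ _))
      have hb1 : dist (Kk k (t, ψ)) (Kk k (0, φ0)) < η/2 :=
        hball (lt_of_lt_of_le hd1 (min_le_left _ _))
      have hb0 : dist (Kk k (0, ψ)) (Kk k (0, φ0)) < η/2 :=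
        hball (lt_of_lt_of_le hd0 (min_le_left _ _))
      rw [hidp k hk t ht ψ hmem1, hid0 k hk ψ hmem0]
      rw [Real.dist_eq] at hb1 hb0
      calc |Kk k (t, ψ) - Kk k (0, ψ)|
          ≤ |Kk k (t, ψ) - Kk k (0, φ0)| + |Kk k (0, φ0) - Kk k (0, ψ)| := abs_sub_le _ _ _
        _ ≤ η/2 + η/2 := by rw [abs_sub_comm (Kk k (0, φ0))]; exact add_le_add hb1.le hb0.le
        _ = η := by ring
    -- compactness
    choose ε hεpos hεprop using hloc
    have hcover : Set.Icc a b ⊆ ⋃ φ0 ∈ Set.Icc a b, Metric.ball φ0 (ε φ0) := by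
      intro ψ hψ
      exact Set.mem_biUnion hψ (Metric.mem_ball_self (hεpos ψ))
    obtain ⟨T, hTsub, hTfin, hTcover⟩ := isCompact_Icc.elim_finite_subcover_image
      (fun φ0 _ => Metric.isOpen_ball) hcover
    have hTne : T.Nonempty := by
      obtain ⟨s, hsT, _⟩ := Set.mem_iUnion₂.mp (hTcover (Set.mem_Icc.mpr ⟨le_refl a, hab.le⟩))
      exact ⟨s, hsT⟩
    set Tf := hTfin.toFinset with hTf
    have hTfne : Tf.Nonempty := by
      rwa [hTf, Set.Finite.toFinset_nonempty]
    set δ : ℝ := Tf.inf' hTfne ε with hδ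
    have hδpos : 0 < δ := by
      rw [hδ, Finset.lt_inf'_iff]
      intro φ0 _
      exact hεpos φ0
    refine ⟨max (1/(δ * lam 0)) 0, le_max_right _ _, ?_⟩
    intro Λ hΛ ψ hψ _
    have hΛpos : 0 < Λ := lt_of_le_of_lt (le_max_right _ _) hΛ
    set t : ℝ := 1/(Λ * lam 0) with htdef
    have htpos : 0 < t := by positivity
    have htlt : t < δ := by
      have h1 : 1/(δ * lam 0) < Λ := lt_of_le_of_lt (le_max_left _ _) hΛ
      have h2 : 1 < Λ * (δ * lam 0) := (div_lt_iff₀ (by positivity)).mp h1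
      rw [htdef, div_lt_iff₀ (by positivity)]
      nlinarith
    -- find covering ball
    obtain ⟨s, hsT, hψs'⟩ := Set.mem_iUnion₂.mp (hTcover hψ)
    have hψs : dist ψ s < ε s := Metric.mem_ball.mp hψs'
    have hδle : δ ≤ ε s := by
      rw [hδ]
      exact Finset.inf'_le ε (by rwa [hTf, Set.Finite.mem_toFinset])
    have hb := hεprop s t htpos (lt_of_lt_of_le htlt hδle) ψ
      (by rw [← Real.dist_eq]; exact hψs)
    have hΛeq : 1/(t * lam 0) = Λ := by
      rw [htdef]; field_simp
    rwa [hΛeq] at hb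
  -- conclude the limit
  rw [Metric.tendsto_nhds]
  intro ε hε
  have hηpos : 0 < ε / (2 * (m + 1)) := by positivity
  set η := ε / (2 * (m + 1)) with hη
  have key' : ∀ k : ℕ, ∃ Λ0 : ℝ, 0 ≤ Λ0 ∧ ∀ Λ : ℝ, Λ0 < Λ →
      ∀ ψ : ℝ, ψ ∈ Set.Icc a b → k ≤ m →
      |iteratedDeriv k (fun ψ' : ℝ =>
          (c0 Λ ψ') ^ (lam i / lam 0) * Real.exp (μbar i - z i * ψ')) ψ
        - iteratedDeriv k (fun ψ' : ℝ =>
          (c0s ψ') ^ (lam i / lam 0) * Real.exp (μbar i - z i * ψ')) ψ| ≤ η :=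
    fun k => key k η hηpos
  choose Λ0f hΛ0f using key'
  set Λmax : ℝ := ((Finset.range (m+1)).image Λ0f).max' (by
    apply Finset.image_nonempty.mpr
    exact Finset.nonempty_range_iff.mpr (Nat.succ_ne_zero m)) with hΛmax
  filter_upwards [eventually_gt_atTop Λmax] with Λ hΛ
  have hterm : ∀ k ∈ Finset.range (m+1),
      (⨆ φ : Set.Icc a b,
        |iteratedDeriv k (fun ψ : ℝ => ((c0 Λ) ψ) ^ (lam i / lam 0) * Real.exp (μbar i - z i * ψ)) ↑φ
          - iteratedDeriv k (fun ψ : ℝ => (c0s ψ) ^ (lam i / lam 0) * Real.exp (μbar i - z i * ψ)) ↑φ|) ≤ η := by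
    intro k hkr
    have hkm : k ≤ m := Nat.lt_succ_iff.mp (Finset.mem_range.mp hkr)
    have hΛk : Λ0f k < Λ := by
      apply lt_of_le_of_lt _ hΛ
      rw [hΛmax]
      exact Finset.le_max' _ _ (Finset.mem_image_of_mem Λ0f hkr)
    apply ciSup_le
    intro φ
    exact (hΛ0f k).2 Λ hΛk φ.1 φ.2 hkm
  have hnn : ∀ k ∈ Finset.range (m+1),
      (0:ℝ) ≤ ⨆ φ : Set.Icc a b,
        |iteratedDeriv k (fun ψ : ℝ => ((c0 Λ) ψ) ^ (lam i / lam 0) * Real.exp (μbar i - z i * ψ)) ↑φ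
          - iteratedDeriv k (fun ψ : ℝ => (c0s ψ) ^ (lam i / lam 0) * Real.exp (μbar i - z i * ψ)) ↑φ| := by
    intro k _
    exact Real.iSup_nonneg (fun φ => abs_nonneg _)
  have hsum_le : (∑ k ∈ Finset.range (m+1),
      ⨆ φ : Set.Icc a b,
        |iteratedDeriv k (fun ψ : ℝ => ((c0 Λ) ψ) ^ (lam i / lam 0) * Real.exp (μbar i - z i * ψ)) ↑φ
          - iteratedDeriv k (fun ψ : ℝ => (c0s ψ) ^ (lam i / lam 0) * Real.exp (μbar i - z i * ψ)) ↑φ|)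
      ≤ (m+1) * η := by
    calc _ ≤ ∑ _k ∈ Finset.range (m+1), η := Finset.sum_le_sum hterm
      _ = (m+1) * η := by rw [Finset.sum_const, Finset.card_range]; push_cast; ring
  have hsum_nn : (0:ℝ) ≤ ∑ k ∈ Finset.range (m+1),
      ⨆ φ : Set.Icc a b,
        |iteratedDeriv k (fun ψ : ℝ => ((c0 Λ) ψ) ^ (lam i / lam 0) * Real.exp (μbar i - z i * ψ)) ↑φ
          - iteratedDeriv k (fun ψ : ℝ => (c0s ψ) ^ (lam i / lam 0) * Real.exp (μbar i - z i * ψ)) ↑φ| :=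
    Finset.sum_nonneg hnn
  rw [Real.dist_eq, sub_zero, abs_of_nonneg hsum_nn]
  apply lt_of_le_of_lt hsum_le
  rw [hη]
  have hm1 : (0:ℝ) < (m:ℝ) + 1 := by positivity
  calc ((m:ℝ) + 1) * (ε / (2 * ((m:ℝ) + 1))) = ε/2 := by field_simp
    _ < ε := by linarith
end

section
/- For every m ∈ ℕ and all reals a < b, f_Λ converges to f^* in C^m[a,b] as Λ → ∞; that is, lim_{Λ→∞} ∑_{k=0}^m sup_{φ ∈ [a,b]} |f_Λ^{(k)}(φ) − (f^*)^{(k)}(φ)| = 0, where the superscript (k) denotes the k-th derivative. -/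
open Filter Real Set Topology


lemma aux_sliceHasDerivAt {f : ℝ × ℝ → ℝ} {x y : ℝ} (hf : DifferentiableAt ℝ f (x, y)) :
    HasDerivAt (fun t => f (x, t)) (fderiv ℝ f (x, y) (0, 1)) y :=
  hf.hasFDerivAt.comp_hasDerivAt y ((hasDerivAt_const y x).prodMk (hasDerivAt_id y))

lemma aux_parametric_iteratedDeriv :
    ∀ (k : ℕ) (f : ℝ × ℝ → ℝ) (U : Set (ℝ × ℝ)), IsOpen U →
      (∀ p ∈ U, ContDiffAt ℝ k f p) →
      ∃ g : ℝ × ℝ → ℝ, (∀ p ∈ U, ContinuousAt g p) ∧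
        ∀ p ∈ U, iteratedDeriv k (fun y => f (p.1, y)) p.2 = g p := by
  intro k
  induction k with
  | zero =>
    intro f U hU hf
    exact ⟨f, fun p hp => (hf p hp).continuousAt, fun p hp => by simp [iteratedDeriv_zero]⟩
  | succ k IH =>
    intro f U hU hf
    have hg1smooth : ∀ p ∈ U, ContDiffAt ℝ k (fun p => fderiv ℝ f p (0, 1)) p := by
      intro p hp
      exact ((hf p hp).fderiv_right (by exact_mod_cast le_rfl)).clm_apply contDiffAt_const
    obtain ⟨g, hgc, hgeq⟩ := IH (fun p => fderiv ℝ f p (0, 1)) U hU hg1smooth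
    refine ⟨g, hgc, ?_⟩
    intro p hp
    rw [iteratedDeriv_succ']
    have hUev : ∀ᶠ y in 𝓝 p.2, (p.1, y) ∈ U := by
      have hc : ContinuousAt (fun y : ℝ => (p.1, y)) p.2 :=
        (continuous_const.prodMk continuous_id).continuousAt
      have : (p.1, p.2) ∈ U := by simpa using hp
      exact hc (hU.mem_nhds this)
    have hev : (deriv fun t => f (p.1, t)) =ᶠ[𝓝 p.2] (fun y => fderiv ℝ f (p.1, y) (0, 1)) := by
      filter_upwards [hUev] with y hy
      exact (aux_sliceHasDerivAt ((hf (p.1, y) hy).differentiableAt (by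
        simp))).deriv
    rw [hev.iteratedDeriv_eq k]
    exact hgeq p hp

section
variable (L : (ℝ × ℝ × ℝ) →L[ℝ] ℝ)

noncomputable def aux_F3 : (ℝ × ℝ × ℝ) →L[ℝ] (ℝ × ℝ × ℝ) :=
  (ContinuousLinearMap.fst ℝ ℝ (ℝ × ℝ)).prod
    ((((ContinuousLinearMap.fst ℝ ℝ ℝ).comp (ContinuousLinearMap.snd ℝ ℝ (ℝ × ℝ)))).prod L)

lemma aux_F3_apply (v : ℝ × ℝ × ℝ) : aux_F3 L v = (v.1, v.2.1, L v) := rfl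

lemma aux_L_decomp (v : ℝ × ℝ × ℝ) :
    L v = L (v.1, v.2.1, 0) + v.2.2 * L (0, 0, 1) := by
  have hv : v = ((v.1, v.2.1, 0) : ℝ × ℝ × ℝ) + v.2.2 • ((0:ℝ), (0:ℝ), (1:ℝ)) := by
    simp [Prod.ext_iff]
  nth_rewrite 1 [hv]
  rw [map_add, map_smul, smul_eq_mul]

noncomputable def aux_G3 : (ℝ × ℝ × ℝ) →L[ℝ] (ℝ × ℝ × ℝ) :=
  (ContinuousLinearMap.fst ℝ ℝ (ℝ × ℝ)).prod
    ((((ContinuousLinearMap.fst ℝ ℝ ℝ).comp (ContinuousLinearMap.snd ℝ ℝ (ℝ × ℝ)))).prod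
      ((L (0, 0, 1))⁻¹ •
        (((ContinuousLinearMap.snd ℝ ℝ ℝ).comp (ContinuousLinearMap.snd ℝ ℝ (ℝ × ℝ))) -
          L.comp ((ContinuousLinearMap.fst ℝ ℝ (ℝ × ℝ)).prod
            ((((ContinuousLinearMap.fst ℝ ℝ ℝ).comp (ContinuousLinearMap.snd ℝ ℝ (ℝ × ℝ)))).prod
              (0 : (ℝ × ℝ × ℝ) →L[ℝ] ℝ))))))

lemma aux_G3_apply (v : ℝ × ℝ × ℝ) :
    aux_G3 L v = (v.1, v.2.1, (L (0, 0, 1))⁻¹ * (v.2.2 - L (v.1, v.2.1, 0))) := rfl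

noncomputable def aux_A3 (hq : L (0, 0, 1) ≠ 0) : (ℝ × ℝ × ℝ) ≃L[ℝ] (ℝ × ℝ × ℝ) :=
  ContinuousLinearEquiv.equivOfInverse (aux_F3 L) (aux_G3 L)
    (by
      intro v
      rw [aux_F3_apply, aux_G3_apply]
      refine Prod.ext rfl (Prod.ext rfl ?_)
      simp only
      rw [aux_L_decomp L v]
      field_simp
      ring)
    (by
      intro v
      rw [aux_G3_apply, aux_F3_apply]
      refine Prod.ext rfl (Prod.ext rfl ?_)
      simp only
      rw [aux_L_decomp L ((v.1, v.2.1, (L (0, 0, 1))⁻¹ * (v.2.2 - L (v.1, v.2.1, 0))))]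
      simp only
      field_simp
      ring)

lemma aux_A3_coe (hq : L (0, 0, 1) ≠ 0) :
    (aux_A3 L hq : (ℝ × ℝ × ℝ) →L[ℝ] (ℝ × ℝ × ℝ)) = aux_F3 L := rfl

end


theorem stmt9
    (N : ℕ) (hN : 1 ≤ N)
    (z lam μhat : ℕ → ℝ) (μtilde0 : ℝ)
    (hz0 : z 0 = 0)
    (hzne : ∀ i, 1 ≤ i → i ≤ N → z i ≠ 0)
    (hmix : ∃ i j, 1 ≤ i ∧ i ≤ N ∧ 1 ≤ j ∧ j ≤ N ∧ z i * z j < 0)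
    (hlam : ∀ i, i ≤ N → 0 < lam i)
    (hμt : 0 < μtilde0)
    (hμhat : ∀ i, i ≤ N → 0 < μhat i)
    (μbar : ℕ → ℝ) (hμbar : ∀ i, μbar i = μhat i - lam i / lam 0 * μhat 0)
    (c0 : ℝ → ℝ → ℝ)
    (hc0pos : ∀ Λ : ℝ, 0 < Λ → ∀ φ, 0 < c0 Λ φ)
    (hc0eq : ∀ Λ : ℝ, 0 < Λ → ∀ φ : ℝ, Real.log (c0 Λ φ)
        + Λ * lam 0 * ∑ j ∈ Finset.range (N+1),
            lam j * (c0 Λ φ) ^ (lam j / lam 0) * Real.exp (μbar j - z j * φ)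
      = Λ * lam 0 * μtilde0 + μhat 0)
    (c0s : ℝ → ℝ) (hc0spos : ∀ φ, 0 < c0s φ)
    (hc0seq : ∀ φ : ℝ, ∑ j ∈ Finset.range (N+1),
        lam j * (c0s φ) ^ (lam j / lam 0) * Real.exp (μbar j - z j * φ) = μtilde0)
    :
    ∀ m : ℕ, ∀ a b : ℝ, a < b →
      Filter.Tendsto (fun Λ : ℝ => ∑ k ∈ Finset.range (m+1),
          ⨆ φ : Set.Icc a b,
            |iteratedDeriv k (fun ψ : ℝ => ∑ i ∈ Finset.Icc 1 N, z i * (((c0 Λ) ψ) ^ (lam i / lam 0) * Real.exp (μbar i - z i * ψ))) ↑φ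
              - iteratedDeriv k (fun ψ : ℝ => ∑ i ∈ Finset.Icc 1 N, z i * ((c0s ψ) ^ (lam i / lam 0) * Real.exp (μbar i - z i * ψ))) ↑φ|)
        Filter.atTop (nhds 0) := by
  intro m a b hab
  have hlam0 : 0 < lam 0 := hlam 0 (Nat.zero_le N)
  have hpj : ∀ j, j ≤ N → 0 < lam j / lam 0 := fun j hj => div_pos (hlam j hj) hlam0
  set H : ℝ × ℝ × ℝ → ℝ := fun p => p.1 * (Real.log p.2.2 - μhat 0)
      + lam 0 * ((∑ j ∈ Finset.range (N+1),
          lam j * p.2.2 ^ (lam j / lam 0) * Real.exp (μbar j - z j * p.2.1)) - μtilde0) with hH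
  -- smoothness of H at points with positive third coordinate
  have hHsmooth : ∀ (n : ℕ) (p : ℝ × ℝ × ℝ), 0 < p.2.2 → ContDiffAt ℝ n H p := by
    intro n p hp
    have h3 : ContDiffAt ℝ n (fun q : ℝ × ℝ × ℝ => q.2.2) p :=
      (contDiff_snd.comp contDiff_snd).contDiffAt
    have h2 : ContDiffAt ℝ n (fun q : ℝ × ℝ × ℝ => q.2.1) p :=
      (contDiff_fst.comp contDiff_snd).contDiffAt
    have h1 : ContDiffAt ℝ n (fun q : ℝ × ℝ × ℝ => q.1) p := contDiff_fst.contDiffAt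
    have hFsm : ContDiffAt ℝ n (fun q : ℝ × ℝ × ℝ =>
        ∑ j ∈ Finset.range (N+1),
          lam j * q.2.2 ^ (lam j / lam 0) * Real.exp (μbar j - z j * q.2.1)) p := by
      apply ContDiffAt.sum
      intro j _
      exact (contDiffAt_const.mul (h3.rpow_const_of_ne hp.ne')).mul
        ((contDiffAt_const.sub (contDiffAt_const.mul h2)).exp)
    rw [hH]
    exact (h1.mul ((h3.log hp.ne').sub contDiffAt_const)).add
      (contDiffAt_const.mul (hFsm.sub contDiffAt_const))
  -- strict monotonicity in the third variable, for nonnegative first variable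
  have hmono : ∀ ε φ : ℝ, 0 ≤ ε → StrictMonoOn (fun c => H (ε, φ, c)) (Set.Ioi 0) := by
    intro ε φ hε c1 hc1 c2 hc2 hlt
    simp only [hH]
    have hsum : (∑ j ∈ Finset.range (N+1),
          lam j * c1 ^ (lam j / lam 0) * Real.exp (μbar j - z j * φ))
        < ∑ j ∈ Finset.range (N+1),
          lam j * c2 ^ (lam j / lam 0) * Real.exp (μbar j - z j * φ) := by
      apply Finset.sum_lt_sum_of_nonempty (by simp)
      intro j hj
      have hjN : j ≤ N := Nat.lt_succ_iff.mp (Finset.mem_range.mp hj)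
      have hr : c1 ^ (lam j / lam 0) < c2 ^ (lam j / lam 0) :=
        Real.rpow_lt_rpow (le_of_lt hc1) hlt (hpj j hjN)
      have he : 0 < Real.exp (μbar j - z j * φ) := Real.exp_pos _
      exact mul_lt_mul_of_pos_right (mul_lt_mul_of_pos_left hr (hlam j hjN)) he
    have hlog : Real.log c1 ≤ Real.log c2 := Real.log_le_log hc1 hlt.le
    have h1 : ε * (Real.log c1 - μhat 0) ≤ ε * (Real.log c2 - μhat 0) :=
      mul_le_mul_of_nonneg_left (by linarith) hε
    have h2 : lam 0 * ((∑ j ∈ Finset.range (N+1),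
          lam j * c1 ^ (lam j / lam 0) * Real.exp (μbar j - z j * φ)) - μtilde0)
        < lam 0 * ((∑ j ∈ Finset.range (N+1),
          lam j * c2 ^ (lam j / lam 0) * Real.exp (μbar j - z j * φ)) - μtilde0) :=
      mul_lt_mul_of_pos_left (by linarith) hlam0

    linarith

  -- the main local chart lemma
  have loc : ∀ φ0 : ℝ, ∃ r : ℝ, 0 < r ∧ ∀ k, k ≤ m → ∀ η : ℝ, 0 < η →
      ∀ᶠ Λ : ℝ in atTop, ∀ φ : ℝ, |φ - φ0| ≤ r →
      |iteratedDeriv k (fun ψ : ℝ => ∑ i ∈ Finset.Icc 1 N,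
          z i * ((c0 Λ ψ) ^ (lam i / lam 0) * Real.exp (μbar i - z i * ψ))) φ
        - iteratedDeriv k (fun ψ : ℝ => ∑ i ∈ Finset.Icc 1 N,
          z i * ((c0s ψ) ^ (lam i / lam 0) * Real.exp (μbar i - z i * ψ))) φ| ≤ η := by
    intro φ0
    have hcstpos : 0 < c0s φ0 := hc0spos φ0
    set p0 : ℝ × ℝ × ℝ := (0, φ0, c0s φ0) with hp0
    have hHp0 : H p0 = 0 := by
      simp [hH, hp0, hc0seq φ0]
    -- derivative data
    have hn1 : ((m+1 : ℕ) : WithTop ℕ∞) ≠ 0 := by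
      exact_mod_cast Nat.succ_ne_zero m
    have hHn : ContDiffAt ℝ (m+1 : ℕ) H p0 := hHsmooth (m+1) p0 hcstpos
    have hHdiff : DifferentiableAt ℝ H p0 := hHn.differentiableAt hn1
    set L : (ℝ × ℝ × ℝ) →L[ℝ] ℝ := fderiv ℝ H p0 with hL
    have hLfd : HasFDerivAt H L p0 := hHdiff.hasFDerivAt
    -- the explicit value of the partial derivative in the third variable
    have hV : HasDerivAt (fun c => H (0, φ0, c))
        (lam 0 * ∑ j ∈ Finset.range (N+1),
          lam j * (lam j / lam 0 * (c0s φ0) ^ (lam j / lam 0 - 1)) *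
            Real.exp (μbar j - z j * φ0)) (c0s φ0) := by
      have hfun : (fun c => H (0, φ0, c)) = fun c => lam 0 *
          ((∑ j ∈ Finset.range (N+1),
            lam j * c ^ (lam j / lam 0) * Real.exp (μbar j - z j * φ0)) - μtilde0) := by
        funext c; simp [hH]
      rw [hfun]
      apply HasDerivAt.const_mul
      apply HasDerivAt.sub_const
      apply HasDerivAt.fun_sum
      intro j _
      have hbase : HasDerivAt (fun c : ℝ => c ^ (lam j / lam 0))
          (lam j / lam 0 * (c0s φ0) ^ (lam j / lam 0 - 1)) (c0s φ0) :=
        Real.hasDerivAt_rpow_const (Or.inl hcstpos.ne')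
      exact (hbase.const_mul (lam j)).mul_const _
    have hVpos : 0 < lam 0 * ∑ j ∈ Finset.range (N+1),
        lam j * (lam j / lam 0 * (c0s φ0) ^ (lam j / lam 0 - 1)) *
          Real.exp (μbar j - z j * φ0) := by
      apply mul_pos hlam0
      apply Finset.sum_pos _ (by simp)
      intro j hj
      have hjN : j ≤ N := Nat.lt_succ_iff.mp (Finset.mem_range.mp hj)
      exact mul_pos (mul_pos (hlam j hjN)
        (mul_pos (hpj j hjN) (Real.rpow_pos_of_pos hcstpos _))) (Real.exp_pos _)
    have hline : HasDerivAt (fun c : ℝ => ((0:ℝ), φ0, c)) ((0:ℝ), (0:ℝ), (1:ℝ)) (c0s φ0) :=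
      (hasDerivAt_const _ _).prodMk ((hasDerivAt_const _ _).prodMk (hasDerivAt_id _))
    have hq' : HasDerivAt (fun c => H (0, φ0, c)) (L ((0:ℝ), (0:ℝ), (1:ℝ))) (c0s φ0) :=
      by rw [hp0] at hLfd; exact hLfd.comp_hasDerivAt (c0s φ0) hline
    have hLval : L ((0:ℝ), (0:ℝ), (1:ℝ)) = lam 0 * ∑ j ∈ Finset.range (N+1),
        lam j * (lam j / lam 0 * (c0s φ0) ^ (lam j / lam 0 - 1)) *
          Real.exp (μbar j - z j * φ0) := hq'.unique hV
    have hLne : L ((0:ℝ), (0:ℝ), (1:ℝ)) ≠ 0 := by rw [hLval]; exact hVpos.ne'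
    -- the local diffeomorphism
    set Ψ : ℝ × ℝ × ℝ → ℝ × ℝ × ℝ := fun p => (p.1, p.2.1, H p) with hΨdef
    have hΨsm : ContDiffAt ℝ (m+1 : ℕ) Ψ p0 :=
      (contDiff_fst.contDiffAt).prodMk (((contDiff_fst.comp contDiff_snd).contDiffAt).prodMk hHn)
    have hΨd : HasFDerivAt Ψ ((aux_A3 L hLne : (ℝ × ℝ × ℝ) ≃L[ℝ] (ℝ × ℝ × ℝ))
        : (ℝ × ℝ × ℝ) →L[ℝ] (ℝ × ℝ × ℝ)) p0 := by
      rw [aux_A3_coe]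
      exact (hasFDerivAt_fst).prodMk ((hasFDerivAt_fst.comp p0 hasFDerivAt_snd).prodMk hLfd)
    set inv : ℝ × ℝ × ℝ → ℝ × ℝ × ℝ := hΨsm.localInverse hΨd hn1 with hinv
    have hΨp0 : Ψ p0 = ((0:ℝ), φ0, (0:ℝ)) := by
      simp only [hΨdef, hHp0]; simp [hp0]
    have hinvsm : ContDiffAt ℝ (m+1 : ℕ) inv ((0:ℝ), φ0, (0:ℝ)) := by
      rw [← hΨp0]; exact hΨsm.to_localInverse hΨd hn1
    have hinvp0 : inv ((0:ℝ), φ0, (0:ℝ)) = p0 := by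
      rw [← hΨp0]; exact hΨsm.localInverse_apply_image hΨd hn1
    set C : ℝ × ℝ → ℝ := fun p => (inv (p.1, p.2, 0)).2.2 with hC
    have hjsm : ContDiff ℝ (m+1 : ℕ) (fun p : ℝ × ℝ => (p.1, p.2, (0:ℝ))) :=
      contDiff_fst.prodMk (contDiff_snd.prodMk contDiff_const)
    have hCsm : ContDiffAt ℝ (m+1 : ℕ) C ((0:ℝ), φ0) := by
      have hcomp : ContDiffAt ℝ (m+1 : ℕ) (fun p : ℝ × ℝ => inv (p.1, p.2, 0)) ((0:ℝ), φ0) :=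
        ContDiffAt.comp _ hinvsm hjsm.contDiffAt
      exact (contDiff_snd.comp contDiff_snd).contDiffAt.comp _ hcomp
    have hC00 : C ((0:ℝ), φ0) = c0s φ0 := by
      simp [hC, hinvp0, hp0]
    -- collect neighborhood facts
    have ev_rinv : ∀ᶠ w in 𝓝 (Ψ p0), Ψ (inv w) = w :=
      (hΨsm.hasStrictFDerivAt' hΨd hn1).eventually_right_inverse
    have ev1 : ∀ᶠ p : ℝ × ℝ in 𝓝 ((0:ℝ), φ0), H (p.1, p.2, C p) = 0 := by
      have hjc : ContinuousAt (fun p : ℝ × ℝ => (p.1, p.2, (0:ℝ))) ((0:ℝ), φ0) :=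
        hjsm.continuous.continuousAt
      have hjc' : Tendsto (fun p : ℝ × ℝ => (p.1, p.2, (0:ℝ))) (𝓝 ((0:ℝ), φ0)) (𝓝 (Ψ p0)) := by
        rw [hΨp0]; exact hjc
      filter_upwards [hjc'.eventually ev_rinv] with p hp
      have h1 : (inv (p.1, p.2, 0)).1 = p.1 := congrArg Prod.fst hp
      have h2 : (inv (p.1, p.2, 0)).2.1 = p.2 := congrArg (fun w => w.2.1) hp
      have h3 : H (inv (p.1, p.2, 0)) = (0:ℝ) := congrArg (fun w => w.2.2) hp
      have heq : ((p.1, p.2, C p) : ℝ × ℝ × ℝ) = inv (p.1, p.2, 0) :=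
        Prod.ext h1.symm (Prod.ext h2.symm rfl)
      rw [heq]; exact h3
    have ev2 : ∀ᶠ p : ℝ × ℝ in 𝓝 ((0:ℝ), φ0), 0 < C p := by
      have hCc : ContinuousAt C ((0:ℝ), φ0) := hCsm.continuousAt
      have : 0 < C ((0:ℝ), φ0) := by rw [hC00]; exact hcstpos
      exact hCc (Ioi_mem_nhds this)
    have hmle : ((m : ℕ) : WithTop ℕ∞) ≤ ((m+1 : ℕ) : WithTop ℕ∞) := by
      exact_mod_cast Nat.le_succ m
    obtain ⟨u, hu, hCu⟩ := hCsm.contDiffOn hmle (by simp)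
    have ev3 : ∀ᶠ p : ℝ × ℝ in 𝓝 ((0:ℝ), φ0), p ∈ interior u :=
      isOpen_interior.mem_nhds (mem_interior_iff_mem_nhds.mpr hu)
    obtain ⟨δ, hδpos, hball⟩ := Metric.eventually_nhds_iff.mp ((ev1.and ev2).and ev3)
    have hCint : ContDiffOn ℝ (m : ℕ) C (interior u) := hCu.mono interior_subset
    -- identification with c0s
    have hid0 : ∀ ψ : ℝ, dist ((0:ℝ), ψ) ((0:ℝ), φ0) < δ → C (0, ψ) = c0s ψ := by
      intro ψ hψ
      obtain ⟨⟨hH0, hCpos⟩, -⟩ := hball hψ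
      have hseq : H (0, ψ, c0s ψ) = 0 := by simp [hH, hc0seq ψ]
      exact (hmono 0 ψ le_rfl).injOn (mem_Ioi.mpr hCpos) (mem_Ioi.mpr (hc0spos ψ))
        (hH0.trans hseq.symm)
    -- identification with c0
    have hidp : ∀ ε ψ : ℝ, 0 < ε → dist (ε, ψ) ((0:ℝ), φ0) < δ → C (ε, ψ) = c0 ε⁻¹ ψ := by
      intro ε ψ hε hd
      obtain ⟨⟨hH0, hCpos⟩, -⟩ := hball hd
      have hΛpos : 0 < ε⁻¹ := inv_pos.mpr hε
      have heq := hc0eq ε⁻¹ hΛpos ψ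
      set S : ℝ := ∑ j ∈ Finset.range (N+1),
        lam j * (c0 ε⁻¹ ψ) ^ (lam j / lam 0) * Real.exp (μbar j - z j * ψ) with hS
      have hkey : H (ε, ψ, c0 ε⁻¹ ψ) = 0 := by
        have h2 := congrArg (fun t => ε * t) heq
        simp only [mul_add] at h2
        have h3 : ε * (ε⁻¹ * lam 0 * S) = lam 0 * S := by field_simp
        have h4 : ε * (ε⁻¹ * lam 0 * μtilde0) = lam 0 * μtilde0 := by field_simp
        rw [h3, h4] at h2
        simp only [hH, ← hS]
        linarith
      exact (hmono ε ψ hε.le).injOn (mem_Ioi.mpr hCpos) (mem_Ioi.mpr (hc0pos ε⁻¹ hΛpos ψ))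
        (hH0.trans hkey.symm)
    -- the smooth family of "f" functions
    set U : Set (ℝ × ℝ) := Metric.ball ((0:ℝ), φ0) δ with hUdef
    have hUopen : IsOpen U := Metric.isOpen_ball
    set G : ℝ × ℝ → ℝ := fun p => ∑ i ∈ Finset.Icc 1 N,
      z i * (C p ^ (lam i / lam 0) * Real.exp (μbar i - z i * p.2)) with hGdef
    have hGsm : ∀ p ∈ U, ContDiffAt ℝ (m : ℕ) G p := by
      intro p hp
      have hd : dist p ((0:ℝ), φ0) < δ := Metric.mem_ball.mp hp
      obtain ⟨⟨-, hCpos⟩, hpint⟩ := hball hd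
      have hCat : ContDiffAt ℝ (m : ℕ) C p := hCint.contDiffAt (isOpen_interior.mem_nhds hpint)
      rw [hGdef]
      apply ContDiffAt.sum
      intro i _
      exact contDiffAt_const.mul ((hCat.rpow_const_of_ne hCpos.ne').mul
        ((contDiffAt_const.sub (contDiffAt_const.mul (contDiff_snd.contDiffAt))).exp))
    refine ⟨δ/2, half_pos hδpos, ?_⟩
    intro k hk η hη
    obtain ⟨g, hgc, hgeq⟩ := aux_parametric_iteratedDeriv k G U hUopen
      (fun p hp => (hGsm p hp).of_le (by exact_mod_cast hk))
    set K : Set (ℝ × ℝ) := Set.Icc (0:ℝ) (δ/2) ×ˢ Set.Icc (φ0 - δ/2) (φ0 + δ/2) with hK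
    have hKU : K ⊆ U := by
      rintro ⟨x, y⟩ ⟨hx, hy⟩
      simp only [hUdef, Metric.mem_ball, Prod.dist_eq, Real.dist_eq, sub_zero]
      apply max_lt
      · have : |x| ≤ δ/2 := abs_le.mpr ⟨by linarith [hx.1], hx.2⟩
        linarith
      · have : |y - φ0| ≤ δ/2 := abs_le.mpr ⟨by linarith [hy.1], by linarith [hy.2]⟩
        linarith
    have hgK : ContinuousOn g K := fun p hp => (hgc p (hKU hp)).continuousWithinAt
    have hKc : IsCompact K := isCompact_Icc.prod isCompact_Icc
    obtain ⟨ρ, hρpos, hρ⟩ := Metric.uniformContinuousOn_iff.mp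
      (hKc.uniformContinuousOn_of_continuous hgK) η hη
    filter_upwards [eventually_gt_atTop (max (2/δ) ρ⁻¹), eventually_gt_atTop 0] with Λ hΛ hΛ0
    intro φ hφ
    have hεpos : 0 < Λ⁻¹ := inv_pos.mpr hΛ0
    have hεδ : Λ⁻¹ < δ/2 := by
      have h2δ : (0:ℝ) < 2/δ := by positivity
      have := inv_strictAnti₀ h2δ (lt_of_le_of_lt (le_max_left _ _) hΛ)
      rwa [inv_div] at this
    have hερ : Λ⁻¹ < ρ := by
      have := inv_strictAnti₀ (inv_pos.mpr hρpos) (lt_of_le_of_lt (le_max_right _ _) hΛ)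
      rwa [inv_inv] at this
    obtain ⟨hφ1, hφ2⟩ := abs_le.mp hφ
    have hmemε : ((Λ⁻¹, φ) : ℝ × ℝ) ∈ K :=
      ⟨⟨hεpos.le, hεδ.le⟩, ⟨by linarith, by linarith⟩⟩
    have hmem0 : (((0:ℝ), φ) : ℝ × ℝ) ∈ K :=
      ⟨⟨le_rfl, by positivity⟩, ⟨by linarith, by linarith⟩⟩
    have hdist : dist ((Λ⁻¹, φ) : ℝ × ℝ) (((0:ℝ), φ) : ℝ × ℝ) < ρ := by
      simp only [Prod.dist_eq, Real.dist_eq, sub_zero, sub_self, abs_zero]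
      rw [max_eq_left (abs_nonneg _), abs_of_pos hεpos]
      exact hερ
    have hgb : |g (Λ⁻¹, φ) - g (0, φ)| < η := by
      have := hρ (Λ⁻¹, φ) hmemε ((0:ℝ), φ) hmem0 hdist
      rwa [Real.dist_eq] at this
    have hUmem : ∀ ψ : ℝ, |ψ - φ| < δ/2 → ∀ e : ℝ, 0 ≤ e → e < δ/2 → ((e, ψ) : ℝ × ℝ) ∈ U := by
      intro ψ hψ e he1 he2
      simp only [hUdef, Metric.mem_ball, Prod.dist_eq, Real.dist_eq, sub_zero]
      apply max_lt
      · rw [abs_of_nonneg he1]; linarith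
      · have h3 := abs_sub_le ψ φ φ0
        have h4 : |φ - φ0| ≤ δ/2 := hφ
        linarith
    have hεU : ((Λ⁻¹, φ) : ℝ × ℝ) ∈ U :=
      hUmem φ (by simpa using half_pos hδpos) Λ⁻¹ hεpos.le hεδ
    have h0U : (((0:ℝ), φ) : ℝ × ℝ) ∈ U :=
      hUmem φ (by simpa using half_pos hδpos) 0 le_rfl (half_pos hδpos)
    have hev1 : (fun ψ : ℝ => ∑ i ∈ Finset.Icc 1 N,
          z i * ((c0 Λ ψ) ^ (lam i / lam 0) * Real.exp (μbar i - z i * ψ)))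
        =ᶠ[𝓝 φ] (fun ψ => G (Λ⁻¹, ψ)) := by
      filter_upwards [Metric.ball_mem_nhds φ (half_pos hδpos)] with ψ hψ
      have hψφ : |ψ - φ| < δ/2 := by rw [← Real.dist_eq]; exact Metric.mem_ball.mp hψ
      have hψU : ((Λ⁻¹, ψ) : ℝ × ℝ) ∈ U := hUmem ψ hψφ Λ⁻¹ hεpos.le hεδ
      have hCψ : C (Λ⁻¹, ψ) = c0 Λ ψ := by
        have := hidp Λ⁻¹ ψ hεpos (Metric.mem_ball.mp hψU)
        rwa [inv_inv] at this
      rw [hGdef]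
      simp only [hCψ]
    have hev2 : (fun ψ : ℝ => ∑ i ∈ Finset.Icc 1 N,
          z i * ((c0s ψ) ^ (lam i / lam 0) * Real.exp (μbar i - z i * ψ)))
        =ᶠ[𝓝 φ] (fun ψ => G ((0:ℝ), ψ)) := by
      filter_upwards [Metric.ball_mem_nhds φ (half_pos hδpos)] with ψ hψ
      have hψφ : |ψ - φ| < δ/2 := by rw [← Real.dist_eq]; exact Metric.mem_ball.mp hψ
      have hψU : (((0:ℝ), ψ) : ℝ × ℝ) ∈ U := hUmem ψ hψφ 0 le_rfl (half_pos hδpos)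
      have hCψ : C (0, ψ) = c0s ψ := hid0 ψ (Metric.mem_ball.mp hψU)
      rw [hGdef]
      simp only [hCψ]
    have hL1 : iteratedDeriv k (fun ψ : ℝ => ∑ i ∈ Finset.Icc 1 N,
        z i * ((c0 Λ ψ) ^ (lam i / lam 0) * Real.exp (μbar i - z i * ψ))) φ = g (Λ⁻¹, φ) := by
      rw [hev1.iteratedDeriv_eq k]
      exact hgeq (Λ⁻¹, φ) hεU
    have hL2 : iteratedDeriv k (fun ψ : ℝ => ∑ i ∈ Finset.Icc 1 N,
        z i * ((c0s ψ) ^ (lam i / lam 0) * Real.exp (μbar i - z i * ψ))) φ = g (0, φ) := by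
      rw [hev2.iteratedDeriv_eq k]
      exact hgeq ((0:ℝ), φ) h0U
    rw [hL1, hL2]
    exact hgb.le
  -- global assembly
  choose r hr using loc
  obtain ⟨t, hts, hcov⟩ := (isCompact_Icc (a := a) (b := b)).elim_nhds_subcover
    (fun x => Metric.ball x (r x)) (fun x _ => Metric.ball_mem_nhds x (hr x).1)
  haveI : Nonempty (Set.Icc a b) := ⟨⟨a, left_mem_Icc.mpr hab.le⟩⟩
  set T : ℕ → ℝ → ℝ := fun k Λ => ⨆ φ : Set.Icc a b,
      |iteratedDeriv k (fun ψ : ℝ => ∑ i ∈ Finset.Icc 1 N,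
          z i * (((c0 Λ) ψ) ^ (lam i / lam 0) * Real.exp (μbar i - z i * ψ))) ↑φ
        - iteratedDeriv k (fun ψ : ℝ => ∑ i ∈ Finset.Icc 1 N,
          z i * ((c0s ψ) ^ (lam i / lam 0) * Real.exp (μbar i - z i * ψ))) ↑φ| with hT
  have hTk : ∀ k, k ≤ m → Tendsto (fun Λ => T k Λ) atTop (𝓝 0) := by
    intro k hkm
    rw [Metric.tendsto_nhds]
    intro η hη
    have hev : ∀ x ∈ t, ∀ᶠ Λ : ℝ in atTop, ∀ φ : ℝ, |φ - x| ≤ r x →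
        |iteratedDeriv k (fun ψ : ℝ => ∑ i ∈ Finset.Icc 1 N,
            z i * ((c0 Λ ψ) ^ (lam i / lam 0) * Real.exp (μbar i - z i * ψ))) φ
          - iteratedDeriv k (fun ψ : ℝ => ∑ i ∈ Finset.Icc 1 N,
            z i * ((c0s ψ) ^ (lam i / lam 0) * Real.exp (μbar i - z i * ψ))) φ| ≤ η/2 :=
      fun x _ => (hr x).2 k hkm (η/2) (half_pos hη)
    filter_upwards [(Filter.eventually_all_finset t).mpr hev] with Λ hΛ
    have hub : ∀ φ : Set.Icc a b,
        |iteratedDeriv k (fun ψ : ℝ => ∑ i ∈ Finset.Icc 1 N,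
            z i * (((c0 Λ) ψ) ^ (lam i / lam 0) * Real.exp (μbar i - z i * ψ))) ↑φ
          - iteratedDeriv k (fun ψ : ℝ => ∑ i ∈ Finset.Icc 1 N,
            z i * ((c0s ψ) ^ (lam i / lam 0) * Real.exp (μbar i - z i * ψ))) ↑φ| ≤ η/2 := by
      intro φ
      obtain ⟨x, hx, hmem⟩ := Set.mem_iUnion₂.mp (hcov φ.2)
      have hd : |(φ:ℝ) - x| ≤ r x := by
        have h := Metric.mem_ball.mp hmem
        rw [Real.dist_eq] at h
        exact h.le
      exact hΛ x hx φ hd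
    have h1 : T k Λ ≤ η/2 := by rw [hT]; exact ciSup_le hub
    have h2 : (0:ℝ) ≤ T k Λ := by rw [hT]; exact Real.iSup_nonneg fun φ => abs_nonneg _
    rw [Real.dist_eq, sub_zero, abs_of_nonneg h2]
    linarith
  have hsum : Tendsto (fun Λ : ℝ => ∑ k ∈ Finset.range (m+1), T k Λ) atTop
      (𝓝 (∑ k ∈ Finset.range (m+1), (0:ℝ))) :=
    tendsto_finset_sum _ (fun k hk => hTk k (Nat.lt_succ_iff.mp (Finset.mem_range.mp hk)))
  simpa using hsum
end

section
/- The function f^*(φ) = ∑_{i=1}^N z_i c_i^*(φ) is strictly decreasing on ℝ. -/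
open Filter Real Set

lemma aux_sign {k t : ℝ} (hk : 0 < k) : 0 ≤ t * (Real.exp (k * t) - 1) := by
  rcases lt_trichotomy t 0 with h | h | h
  · have h1 : Real.exp (k * t) < 1 := Real.exp_lt_one_iff.2 (by nlinarith)
    nlinarith
  · simp [h]
  · have h1 : 1 < Real.exp (k * t) := Real.one_lt_exp_iff.2 (by nlinarith)
    nlinarith

lemma aux_sign' {k t : ℝ} (hk : 0 < k) (ht : t ≠ 0) :
    0 < t * (Real.exp (k * t) - 1) := by
  rcases lt_trichotomy t 0 with h | h | h
  · have h1 : Real.exp (k * t) < 1 := Real.exp_lt_one_iff.2 (by nlinarith)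
    nlinarith
  · exact absurd h ht
  · have h1 : 1 < Real.exp (k * t) := Real.one_lt_exp_iff.2 (by nlinarith)
    nlinarith

theorem stmt10
    (N : ℕ) (hN : 1 ≤ N)
    (z lam μhat : ℕ → ℝ) (μtilde0 : ℝ)
    (hz0 : z 0 = 0)
    (hzne : ∀ i, 1 ≤ i → i ≤ N → z i ≠ 0)
    (hmix : ∃ i j, 1 ≤ i ∧ i ≤ N ∧ 1 ≤ j ∧ j ≤ N ∧ z i * z j < 0)
    (hlam : ∀ i, i ≤ N → 0 < lam i)
    (hμt : 0 < μtilde0)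
    (hμhat : ∀ i, i ≤ N → 0 < μhat i)
    (μbar : ℕ → ℝ) (hμbar : ∀ i, μbar i = μhat i - lam i / lam 0 * μhat 0)
    (c0s : ℝ → ℝ) (hc0spos : ∀ φ, 0 < c0s φ)
    (hc0seq : ∀ φ : ℝ, ∑ j ∈ Finset.range (N+1),
        lam j * (c0s φ) ^ (lam j / lam 0) * Real.exp (μbar j - z j * φ) = μtilde0)
    :
    StrictAnti (fun φ : ℝ => ∑ i ∈ Finset.Icc 1 N, z i * ((c0s φ) ^ (lam i / lam 0) * Real.exp (μbar i - z i * φ))) := by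
  intro a b hab
  simp only
  have hlam0 : 0 < lam 0 := hlam 0 (Nat.zero_le N)
  have hc1 : 0 < c0s a := hc0spos a
  have hc2 : 0 < c0s b := hc0spos b
  set c1 := c0s a with hc1def
  set c2 := c0s b with hc2def
  set δ : ℝ := b - a with hδdef
  have hδ : 0 < δ := by simp only [hδdef]; linarith
  set u : ℝ := Real.log c2 - Real.log c1 with hu
  have hc2eq : c2 = c1 * Real.exp u := by
    rw [hu, Real.exp_sub, Real.exp_log hc2, Real.exp_log hc1]
    field_simp
  set κ : ℝ := u / (lam 0 * δ) with hκ
  set s : ℕ → ℝ := fun j => lam j / lam 0 * u - z j * δ with hs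
  set P : ℕ → ℝ := fun j => c1 ^ (lam j / lam 0) * Real.exp (μbar j - z j * a) with hP
  have hPpos : ∀ j, 0 < P j := fun j =>
    mul_pos (Real.rpow_pos_of_pos hc1 _) (Real.exp_pos _)
  -- each concentration at b equals the one at a times exp (s j)
  have hcj : ∀ j, c2 ^ (lam j / lam 0) * Real.exp (μbar j - z j * b)
      = P j * Real.exp (s j) := by
    intro j
    rw [hc2eq, Real.mul_rpow hc1.le (Real.exp_pos u).le,
      Real.rpow_def_of_pos (Real.exp_pos u), Real.log_exp, hP, hs]
    simp only
    rw [mul_assoc, mul_assoc, ← Real.exp_add, ← Real.exp_add]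
    congr 2
    simp only [hδdef]
    ring
  -- the constraint difference
  have hsum : ∑ j ∈ Finset.range (N+1), lam j * P j * (Real.exp (s j) - 1) = 0 := by
    have h1 := hc0seq a
    have h2 := hc0seq b
    have h2' : ∑ j ∈ Finset.range (N+1), lam j * (P j * Real.exp (s j)) = μtilde0 := by
      rw [← h2]
      refine Finset.sum_congr rfl fun j _ => ?_
      rw [← hcj j, ← hc2def, mul_assoc]
    have h1' : ∑ j ∈ Finset.range (N+1), lam j * P j = μtilde0 := by
      rw [← h1]
      refine Finset.sum_congr rfl fun j _ => ?_
      rw [hP]; ring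
    have : ∑ j ∈ Finset.range (N+1), lam j * P j * (Real.exp (s j) - 1)
        = (∑ j ∈ Finset.range (N+1), lam j * (P j * Real.exp (s j)))
          - ∑ j ∈ Finset.range (N+1), lam j * P j := by
      rw [← Finset.sum_sub_distrib]
      refine Finset.sum_congr rfl fun j _ => ?_
      ring
    rw [this, h2', h1']
    ring
  -- key identity: s j = (lam j * δ) * (κ - z j / lam j)
  have hsid : ∀ j, j ≤ N → s j = (lam j * δ) * (κ - z j / lam j) := by
    intro j hj
    have hlj : lam j ≠ 0 := (hlam j hj).ne'
    rw [hs, hκ]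
    simp only
    field_simp
  -- termwise sign
  have hterm : ∀ j ∈ Finset.range (N+1),
      (z j / lam j - κ) * (lam j * P j * (Real.exp (s j) - 1)) ≤ 0 := by
    intro j hj
    rw [Finset.mem_range] at hj
    have hjN : j ≤ N := by omega
    have hk : 0 < lam j * δ := mul_pos (hlam j hjN) hδ
    have := aux_sign (t := κ - z j / lam j) hk
    rw [← hsid j hjN] at this
    have hQ : 0 < lam j * P j := mul_pos (hlam j hjN) (hPpos j)
    nlinarith
  -- strict index
  obtain ⟨i0, j0, hi1, hiN, hj1, hjN, hij⟩ := hmix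
  have hmne : ∃ m, m ≤ N ∧ 1 ≤ m ∧ z m / lam m ≠ κ := by
    by_contra h
    push_neg at h
    have h1 := h i0 hiN hi1
    have h2 := h j0 hjN hj1
    have hli : 0 < lam i0 := hlam i0 hiN
    have hlj : 0 < lam j0 := hlam j0 hjN
    have : (z i0 / lam i0) * (z j0 / lam j0) < 0 := by
      rw [div_mul_div_comm]
      exact div_neg_of_neg_of_pos hij (mul_pos hli hlj)
    rw [h1, h2] at this
    nlinarith
  obtain ⟨m, hmN, hm1, hmne⟩ := hmne
  have hmmem : m ∈ Finset.range (N+1) := Finset.mem_range.2 (by omega)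
  have htermm : (z m / lam m - κ) * (lam m * P m * (Real.exp (s m) - 1)) < 0 := by
    have hk : 0 < lam m * δ := mul_pos (hlam m hmN) hδ
    have ht : κ - z m / lam m ≠ 0 := by
      intro h
      apply hmne
      linarith [sub_eq_zero.1 h]
    have := aux_sign' (t := κ - z m / lam m) hk ht
    rw [← hsid m hmN] at this
    have hQ : 0 < lam m * P m := mul_pos (hlam m hmN) (hPpos m)
    nlinarith
  -- the strict sum inequality
  have hlt : ∑ j ∈ Finset.range (N+1),
      (z j / lam j - κ) * (lam j * P j * (Real.exp (s j) - 1)) < 0 := by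
    calc ∑ j ∈ Finset.range (N+1),
        (z j / lam j - κ) * (lam j * P j * (Real.exp (s j) - 1))
        < ∑ _j ∈ Finset.range (N+1), (0:ℝ) :=
          Finset.sum_lt_sum hterm ⟨m, hmmem, htermm⟩
      _ = 0 := by simp
  -- convert to the goal
  have hmain : ∑ j ∈ Finset.range (N+1), z j * P j * (Real.exp (s j) - 1) < 0 := by
    have hexp : ∑ j ∈ Finset.range (N+1), z j * P j * (Real.exp (s j) - 1)
        = (∑ j ∈ Finset.range (N+1),
            (z j / lam j - κ) * (lam j * P j * (Real.exp (s j) - 1)))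
          + κ * ∑ j ∈ Finset.range (N+1), lam j * P j * (Real.exp (s j) - 1) := by
      rw [Finset.mul_sum, ← Finset.sum_add_distrib]
      refine Finset.sum_congr rfl fun j hj => ?_
      rw [Finset.mem_range] at hj
      have hlj : lam j ≠ 0 := (hlam j (by omega)).ne'
      field_simp
      ring
    rw [hexp, hsum]
    linarith
  -- sums over Icc 1 N equal sums over range (N+1) since z 0 = 0
  have hins : Finset.range (N+1) = insert 0 (Finset.Icc 1 N) := by
    ext x
    simp only [Finset.mem_range, Finset.mem_insert, Finset.mem_Icc]
    omega
  have hnot : (0:ℕ) ∉ Finset.Icc 1 N := by simp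
  have hext : ∀ g : ℕ → ℝ, g 0 = 0 →
      ∑ j ∈ Finset.Icc 1 N, g j = ∑ j ∈ Finset.range (N+1), g j := by
    intro g hg
    rw [hins, Finset.sum_insert hnot, hg]
    ring
  have hL : ∑ i ∈ Finset.Icc 1 N, z i * (c2 ^ (lam i / lam 0) * Real.exp (μbar i - z i * b))
      = ∑ j ∈ Finset.range (N+1), z j * P j * Real.exp (s j) := by
    rw [hext (fun i => z i * (c2 ^ (lam i / lam 0) * Real.exp (μbar i - z i * b)))
      (by simp [hz0])]
    refine Finset.sum_congr rfl fun j _ => ?_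
    rw [hcj j]
    ring
  have hR : ∑ i ∈ Finset.Icc 1 N, z i * (c1 ^ (lam i / lam 0) * Real.exp (μbar i - z i * a))
      = ∑ j ∈ Finset.range (N+1), z j * P j := by
    rw [hext (fun i => z i * (c1 ^ (lam i / lam 0) * Real.exp (μbar i - z i * a)))
      (by simp [hz0])]
  rw [hL, hR]
  have : ∑ j ∈ Finset.range (N+1), z j * P j * (Real.exp (s j) - 1)
      = (∑ j ∈ Finset.range (N+1), z j * P j * Real.exp (s j))
        - ∑ j ∈ Finset.range (N+1), z j * P j := by
    rw [← Finset.sum_sub_distrib]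
    refine Finset.sum_congr rfl fun j _ => ?_
    ring
  linarith [this ▸ hmain]
end

section
/- For every φ ∈ ℝ, the derivative of c_0^* satisfies (c_0^*)'(φ) = λ_0 c_0^*(φ) · (∑_{i=1}^N z_i λ_i c_i^*(φ)) / (∑_{i=0}^N λ_i^2 c_i^*(φ)). -/
open Filter Real Set
open Topology

lemma exists_equiv12 (A B : ℝ) (hB : B ≠ 0) :
    ∃ E : (ℝ × ℝ) ≃L[ℝ] (ℝ × ℝ), (∀ p : ℝ × ℝ, E p = (p.1, A * p.1 + B * p.2)) ∧
      E.symm (1, 0) = (1, -A / B) := by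
  refine ⟨LinearEquiv.toContinuousLinearEquiv
    { toFun := fun p => (p.1, A * p.1 + B * p.2)
      invFun := fun q => (q.1, (q.2 - A * q.1) / B)
      map_add' := by intro p q; simp [Prod.ext_iff]; ring
      map_smul' := by intro c p; simp [Prod.ext_iff, smul_eq_mul]; ring
      left_inv := by intro p; simp [Prod.ext_iff]; field_simp
      right_inv := by intro q; simp [Prod.ext_iff]; field_simp; ring }, ?_, ?_⟩
  · intro p; rfl
  · rw [ContinuousLinearEquiv.symm_apply_eq]
    show ((1:ℝ),(0:ℝ)) = ((1:ℝ), A * 1 + B * (-A / B))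
    simp [Prod.ext_iff]; field_simp; ring

theorem stmt12
    (N : ℕ) (hN : 1 ≤ N)
    (z lam μhat : ℕ → ℝ) (μtilde0 : ℝ)
    (hz0 : z 0 = 0)
    (hzne : ∀ i, 1 ≤ i → i ≤ N → z i ≠ 0)
    (hmix : ∃ i j, 1 ≤ i ∧ i ≤ N ∧ 1 ≤ j ∧ j ≤ N ∧ z i * z j < 0)
    (hlam : ∀ i, i ≤ N → 0 < lam i)
    (hμt : 0 < μtilde0)
    (hμhat : ∀ i, i ≤ N → 0 < μhat i)
    (μbar : ℕ → ℝ) (hμbar : ∀ i, μbar i = μhat i - lam i / lam 0 * μhat 0)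
    (c0s : ℝ → ℝ) (hc0spos : ∀ φ, 0 < c0s φ)
    (hc0seq : ∀ φ : ℝ, ∑ j ∈ Finset.range (N+1),
        lam j * (c0s φ) ^ (lam j / lam 0) * Real.exp (μbar j - z j * φ) = μtilde0)
    :
    ∀ φ : ℝ, deriv c0s φ = lam 0 * c0s φ * (∑ i ∈ Finset.Icc 1 N, z i * lam i * ((c0s φ) ^ (lam i / lam 0) * Real.exp (μbar i - z i * φ))) / (∑ i ∈ Finset.range (N+1), lam i ^ 2 * ((c0s φ) ^ (lam i / lam 0) * Real.exp (μbar i - z i * φ))) := by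
  intro φ₀
  have hl0 : 0 < lam 0 := hlam 0 (Nat.zero_le N)
  set x : ℝ → ℝ := fun φ => Real.log (c0s φ) with hxdef
  have hcx : ∀ φ, c0s φ = Real.exp (x φ) := fun φ => (Real.exp_log (hc0spos φ)).symm
  have hrpow : ∀ (φ : ℝ) (j : ℕ), (c0s φ) ^ (lam j / lam 0) = Real.exp (lam j / lam 0 * x φ) := by
    intro φ j
    rw [Real.rpow_def_of_pos (hc0spos φ)]
    ring_nf
    congr 1; simp only [hxdef]; ring
  set F : ℝ → ℝ → ℝ := fun φ t => ∑ j ∈ Finset.range (N+1),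
    lam j * Real.exp (lam j / lam 0 * t - z j * φ + μbar j) with hFdef
  have hFeq : ∀ φ, F φ (x φ) = μtilde0 := by
    intro φ
    rw [← hc0seq φ]
    refine Finset.sum_congr rfl fun j hj => ?_
    rw [hrpow, mul_assoc, ← Real.exp_add]
    congr 1
    ring
  have hinj : ∀ φ : ℝ, StrictMono (F φ) := by
    intro φ s t hst
    refine Finset.sum_lt_sum_of_nonempty (by simp) fun j hj => ?_
    have hjN : j ≤ N := Nat.lt_succ_iff.mp (Finset.mem_range.mp hj)
    have ha : 0 < lam j / lam 0 := div_pos (hlam j hjN) hl0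
    have h1 : lam j / lam 0 * s < lam j / lam 0 * t := by nlinarith
    exact mul_lt_mul_of_pos_left (Real.exp_lt_exp.2 (by linarith)) (hlam j hjN)
  set x₀ : ℝ := x φ₀ with hx₀
  set p₀ : ℝ × ℝ := (φ₀, x₀) with hp₀
  set w : ℕ → ℝ := fun j => Real.exp (lam j / lam 0 * x₀ - z j * φ₀ + μbar j) with hwdef
  have hwpos : ∀ j, 0 < w j := fun j => Real.exp_pos _
  set A : ℝ := ∑ j ∈ Finset.range (N+1), -(z j) * lam j * w j with hAdef
  set B : ℝ := ∑ j ∈ Finset.range (N+1), lam j * (lam j / lam 0) * w j with hBdef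
  have hBpos : 0 < B := by
    refine Finset.sum_pos (fun j hj => ?_) (by simp)
    have hjN : j ≤ N := Nat.lt_succ_iff.mp (Finset.mem_range.mp hj)
    have := hlam j hjN
    have := hwpos j
    positivity
  have hB0 : B ≠ 0 := ne_of_gt hBpos
  -- derivative of G
  set Lj : ℕ → (ℝ × ℝ →L[ℝ] ℝ) := fun j =>
    (lam j / lam 0) • (ContinuousLinearMap.snd ℝ ℝ ℝ) - (z j) • (ContinuousLinearMap.fst ℝ ℝ ℝ)
    with hLjdef
  have hLjapp : ∀ j (p : ℝ × ℝ), Lj j p = lam j / lam 0 * p.2 - z j * p.1 := by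
    intro j p
    simp [hLjdef]
  have hG : HasStrictFDerivAt (fun p : ℝ × ℝ => F p.1 p.2)
      (∑ j ∈ Finset.range (N+1), (lam j * w j) • Lj j) p₀ := by
    apply HasStrictFDerivAt.fun_sum
    intro j hj
    have h1 : HasStrictFDerivAt (fun p : ℝ × ℝ => lam j / lam 0 * p.2 - z j * p.1 + μbar j)
        (Lj j) p₀ := by
      have h := ((Lj j).hasStrictFDerivAt (x := p₀)).add_const (μbar j)
      have heq : (fun p : ℝ × ℝ => (Lj j) p + μbar j)
          = fun p : ℝ × ℝ => lam j / lam 0 * p.2 - z j * p.1 + μbar j := by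
        funext p; rw [hLjapp]
      rwa [heq] at h
    have h2 := (Real.hasStrictDerivAt_exp (lam j / lam 0 * x₀ - z j * φ₀ + μbar j)).comp_hasStrictFDerivAt p₀ h1
    have h3 := h2.const_mul (lam j)
    simpa [smul_smul, hwdef, Function.comp] using h3
  obtain ⟨E', hE'app, hE'symm⟩ := exists_equiv12 A B hB0
  set Φ : ℝ × ℝ → ℝ × ℝ := fun p => (p.1, F p.1 p.2) with hΦdef
  have hDeq : (ContinuousLinearMap.fst ℝ ℝ ℝ).prod (∑ j ∈ Finset.range (N+1), (lam j * w j) • Lj j)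
      = (E' : ℝ × ℝ →L[ℝ] ℝ × ℝ) := by
    refine ContinuousLinearMap.ext fun p => ?_
    rw [ContinuousLinearEquiv.coe_coe E', hE'app p]
    refine Prod.ext (by simp) ?_
    show (∑ j ∈ Finset.range (N+1), (lam j * w j) • Lj j) p = A * p.1 + B * p.2
    rw [ContinuousLinearMap.sum_apply, hAdef, hBdef, Finset.sum_mul, Finset.sum_mul,
      ← Finset.sum_add_distrib]
    refine Finset.sum_congr rfl fun j hj => ?_
    rw [ContinuousLinearMap.smul_apply, hLjapp, smul_eq_mul]
    ring
  have hΦ : HasStrictFDerivAt Φ (E' : ℝ × ℝ →L[ℝ] ℝ × ℝ) p₀ := by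
    rw [← hDeq]
    exact HasStrictFDerivAt.prodMk ((ContinuousLinearMap.fst ℝ ℝ ℝ).hasStrictFDerivAt) hG
  have hΦp₀ : Φ p₀ = (φ₀, μtilde0) := by
    simp only [hΦdef, hp₀]
    exact Prod.ext rfl (hFeq φ₀)
  set ψ : ℝ × ℝ → ℝ × ℝ := hΦ.localInverse Φ E' p₀ with hψdef
  have hright : ∀ᶠ q in 𝓝 (Φ p₀), Φ (ψ q) = q := hΦ.eventually_right_inverse
  have htd : Tendsto (fun φ : ℝ => ((φ, μtilde0) : ℝ × ℝ)) (𝓝 φ₀) (𝓝 (Φ p₀)) := by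
    rw [hΦp₀]
    exact (continuous_id.prodMk continuous_const).tendsto φ₀
  have hev : ∀ᶠ φ in 𝓝 φ₀, (ψ (φ, μtilde0)).2 = x φ := by
    filter_upwards [htd.eventually hright] with φ hφ
    have h1 : (Φ (ψ (φ, μtilde0))).1 = φ := by rw [hφ]
    have h2 : (Φ (ψ (φ, μtilde0))).2 = μtilde0 := by rw [hφ]
    simp only [hΦdef] at h1 h2
    rw [h1] at h2
    exact (hinj φ).injective (h2.trans (hFeq φ).symm)
  have hψd : HasStrictFDerivAt ψ (E'.symm : ℝ × ℝ →L[ℝ] ℝ × ℝ) (Φ p₀) := hΦ.to_localInverse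
  rw [hΦp₀] at hψd
  have hι : HasDerivAt (fun φ : ℝ => ((φ, μtilde0) : ℝ × ℝ)) ((1 : ℝ), (0 : ℝ)) φ₀ :=
    HasDerivAt.prodMk (hasDerivAt_id φ₀) (hasDerivAt_const φ₀ μtilde0)
  have hcomp : HasDerivAt (fun φ : ℝ => ψ (φ, μtilde0)) (E'.symm (1, 0)) φ₀ := by
    have h := hψd.hasFDerivAt.comp_hasDerivAt φ₀ hι
    exact h
  have hx2 : HasDerivAt (fun φ : ℝ => (ψ (φ, μtilde0)).2) (-A / B) φ₀ := by
    have h := (ContinuousLinearMap.snd ℝ ℝ ℝ).hasFDerivAt.comp_hasDerivAt φ₀ hcomp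
    simp [Function.comp, hE'symm] at h; exact h
  have hx : HasDerivAt x (-A / B) φ₀ :=
    hx2.congr_of_eventuallyEq (hev.mono fun φ h => h.symm)
  have hc0 : HasDerivAt c0s (Real.exp x₀ * (-A / B)) φ₀ := by
    have h := hx.exp
    exact h.congr_of_eventuallyEq (Filter.Eventually.of_forall fun φ => hcx φ)
  rw [hc0.deriv]
  -- arithmetic
  have hterm : ∀ i, (c0s φ₀) ^ (lam i / lam 0) * Real.exp (μbar i - z i * φ₀) = w i := by
    intro i
    rw [hrpow, ← Real.exp_add, hwdef]
    congr 1
    ring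
  have hS₁ : (∑ i ∈ Finset.Icc 1 N, z i * lam i * ((c0s φ₀) ^ (lam i / lam 0) * Real.exp (μbar i - z i * φ₀)))
      = -A := by
    have hsplit : Finset.range (N+1) = insert 0 (Finset.Icc 1 N) := by
      ext i
      simp [Nat.lt_succ_iff]
      omega
    rw [hAdef, hsplit, Finset.sum_insert (by simp), hz0]
    simp only [neg_zero, zero_mul, zero_add, neg_neg]
    rw [← Finset.sum_neg_distrib]
    refine Finset.sum_congr rfl fun i hi => ?_
    rw [hterm]
    ring
  have hS₂ : (∑ i ∈ Finset.range (N+1), lam i ^ 2 * ((c0s φ₀) ^ (lam i / lam 0) * Real.exp (μbar i - z i * φ₀)))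
      = lam 0 * B := by
    rw [hBdef, Finset.mul_sum]
    refine Finset.sum_congr rfl fun i hi => ?_
    rw [hterm]
    field_simp
  rw [hS₁, hS₂, ← hcx φ₀, hcx φ₀]
  field_simp
end

section
/- For every φ ∈ ℝ, the derivative of f^* satisfies (f^*)'(φ) = (∑_{i=1}^N z_i λ_i c_i^*(φ))^2 / (∑_{i=0}^N λ_i^2 c_i^*(φ)) − ∑_{i=1}^N z_i^2 c_i^*(φ), and this quantity is strictly negative for every φ ∈ ℝ. -/
open Filter Real Set Topology

theorem aux13 (N : ℕ) (z lam μbar : ℕ → ℝ) (μt : ℝ)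
    (hl : ∀ j, j ≤ N → 0 < lam j)
    (c0s : ℝ → ℝ) (hpos : ∀ φ, 0 < c0s φ)
    (heq : ∀ φ : ℝ, ∑ j ∈ Finset.range (N+1),
      lam j * (c0s φ) ^ (lam j / lam 0) * Real.exp (μbar j - z j * φ) = μt)
    (φ0 : ℝ) :
    HasDerivAt c0s
      ((∑ j ∈ Finset.range (N+1), lam j * z j *
          ((c0s φ0) ^ (lam j / lam 0) * Real.exp (μbar j - z j * φ0))) * (lam 0 * c0s φ0) /
        (∑ j ∈ Finset.range (N+1), lam j ^ 2 *
          ((c0s φ0) ^ (lam j / lam 0) * Real.exp (μbar j - z j * φ0)))) φ0 := by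
  have hl0 : 0 < lam 0 := hl 0 (Nat.zero_le N)
  have hc0pos : 0 < c0s φ0 := hpos φ0
  set c0 : ℝ := c0s φ0 with hc0def
  set F : ℝ × ℝ → ℝ × ℝ := fun p =>
    (p.1, ∑ j ∈ Finset.range (N+1),
      lam j * p.2 ^ (lam j / lam 0) * Real.exp (μbar j - z j * p.1)) with hFdef
  set P : ℝ := ∑ j ∈ Finset.range (N+1),
      (lam j * c0 ^ (lam j / lam 0)) *
        (Real.exp (μbar j - z j * φ0) * -(z j * 1)) with hPdef
  set Q : ℝ := ∑ j ∈ Finset.range (N+1),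
      Real.exp (μbar j - z j * φ0) * (lam j * (lam j / lam 0 * c0 ^ (lam j / lam 0 - 1))) with hQdef
  have hmemN : ∀ j : ℕ, j ∈ Finset.range (N+1) → j ≤ N := fun j hj =>
    Nat.lt_succ_iff.mp (Finset.mem_range.mp hj)
  have hne : (Finset.range (N+1)).Nonempty := ⟨0, by simp⟩
  have hQpos : 0 < Q := by
    refine Finset.sum_pos (fun j hj => ?_) hne
    have hjN := hmemN j hj
    have := hl j hjN
    positivity
  -- the continuous linear equivalence
  set fwd : ℝ × ℝ →L[ℝ] ℝ × ℝ :=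
    (ContinuousLinearMap.fst ℝ ℝ ℝ).prod
      (P • ContinuousLinearMap.fst ℝ ℝ ℝ + Q • ContinuousLinearMap.snd ℝ ℝ ℝ) with hfwd
  set bwd : ℝ × ℝ →L[ℝ] ℝ × ℝ :=
    (ContinuousLinearMap.fst ℝ ℝ ℝ).prod
      (Q⁻¹ • (ContinuousLinearMap.snd ℝ ℝ ℝ - P • ContinuousLinearMap.fst ℝ ℝ ℝ)) with hbwd
  have hleft : Function.LeftInverse bwd fwd := by
    intro x
    refine Prod.ext rfl ?_
    simp only [hfwd, hbwd, ContinuousLinearMap.prod_apply, ContinuousLinearMap.add_apply,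
      ContinuousLinearMap.smul_apply, ContinuousLinearMap.coe_fst', ContinuousLinearMap.coe_snd',
      ContinuousLinearMap.sub_apply, smul_eq_mul]
    field_simp
    ring
  have hright : Function.RightInverse bwd fwd := by
    intro x
    refine Prod.ext rfl ?_
    simp only [hfwd, hbwd, ContinuousLinearMap.prod_apply, ContinuousLinearMap.add_apply,
      ContinuousLinearMap.smul_apply, ContinuousLinearMap.coe_fst', ContinuousLinearMap.coe_snd',
      ContinuousLinearMap.sub_apply, smul_eq_mul]
    field_simp
    ring
  set e : (ℝ × ℝ) ≃L[ℝ] (ℝ × ℝ) := ContinuousLinearEquiv.equivOfInverse fwd bwd hleft hright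
    with hedef
  -- strict differentiability of F
  have hF : HasStrictFDerivAt F (e : (ℝ × ℝ) →L[ℝ] (ℝ × ℝ)) (φ0, c0) := by
    have hsum : HasStrictFDerivAt
        (fun p : ℝ × ℝ => ∑ j ∈ Finset.range (N+1),
          lam j * p.2 ^ (lam j / lam 0) * Real.exp (μbar j - z j * p.1))
        (∑ j ∈ Finset.range (N+1),
          ((lam j * c0 ^ (lam j / lam 0)) •
              (Real.exp (μbar j - z j * φ0) • -(z j • ContinuousLinearMap.fst ℝ ℝ ℝ))
            + Real.exp (μbar j - z j * φ0) •
              (lam j • ((lam j / lam 0 * c0 ^ (lam j / lam 0 - 1)) •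
                  ContinuousLinearMap.snd ℝ ℝ ℝ)))) (φ0, c0) := by
      refine HasStrictFDerivAt.fun_sum (fun j hj => ?_)
      have hA : HasStrictFDerivAt (fun p : ℝ × ℝ => p.2 ^ (lam j / lam 0))
          ((lam j / lam 0 * c0 ^ (lam j / lam 0 - 1)) • ContinuousLinearMap.snd ℝ ℝ ℝ)
          (φ0, c0) := by
        have := (Real.hasStrictDerivAt_rpow_const (p := lam j / lam 0)
          (Or.inl hc0pos.ne')).comp_hasStrictFDerivAt (φ0, c0)
          (hasStrictFDerivAt_snd (𝕜 := ℝ) (E := ℝ) (F := ℝ) (p := ((φ0 : ℝ), (c0 : ℝ))))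
        simpa [Function.comp_def] using this
      have hinner : HasStrictFDerivAt (fun p : ℝ × ℝ => μbar j - z j * p.1)
          (-(z j • ContinuousLinearMap.fst ℝ ℝ ℝ)) (φ0, c0) := by
        have h1 : HasStrictFDerivAt (fun p : ℝ × ℝ => z j * p.1)
            (z j • ContinuousLinearMap.fst ℝ ℝ ℝ) (φ0, c0) :=
          (hasStrictFDerivAt_fst (E := ℝ) (F := ℝ) (𝕜 := ℝ)
            (p := ((φ0 : ℝ), (c0 : ℝ)))).const_mul (z j)
        simpa using h1.const_sub (μbar j)
      have hB : HasStrictFDerivAt (fun p : ℝ × ℝ => Real.exp (μbar j - z j * p.1))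
          (Real.exp (μbar j - z j * φ0) • (-(z j • ContinuousLinearMap.fst ℝ ℝ ℝ)))
          (φ0, c0) := by
        have := (Real.hasStrictDerivAt_exp (μbar j - z j * φ0)).comp_hasStrictFDerivAt
          (φ0, c0) hinner
        simpa [Function.comp_def] using this
      exact (hA.const_mul (lam j)).mul hB
    have hDeq : (∑ j ∈ Finset.range (N+1),
          ((lam j * c0 ^ (lam j / lam 0)) •
              (Real.exp (μbar j - z j * φ0) • -(z j • ContinuousLinearMap.fst ℝ ℝ ℝ))
            + Real.exp (μbar j - z j * φ0) •
              (lam j • ((lam j / lam 0 * c0 ^ (lam j / lam 0 - 1)) •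
                  ContinuousLinearMap.snd ℝ ℝ ℝ))))
        = P • ContinuousLinearMap.fst ℝ ℝ ℝ + Q • ContinuousLinearMap.snd ℝ ℝ ℝ := by
      refine ContinuousLinearMap.ext fun v => ?_
      simp only [ContinuousLinearMap.coe_sum', Finset.sum_apply,
        ContinuousLinearMap.add_apply, ContinuousLinearMap.smul_apply,
        ContinuousLinearMap.neg_apply,
        ContinuousLinearMap.coe_fst', ContinuousLinearMap.coe_snd', smul_eq_mul,
        hPdef, hQdef, Finset.sum_mul]
      rw [← Finset.sum_add_distrib]
      refine Finset.sum_congr rfl fun j hj => by ring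
    have : HasStrictFDerivAt F ((ContinuousLinearMap.fst ℝ ℝ ℝ).prod
        (P • ContinuousLinearMap.fst ℝ ℝ ℝ + Q • ContinuousLinearMap.snd ℝ ℝ ℝ)) (φ0, c0) := by
      rw [← hDeq]
      exact hasStrictFDerivAt_fst.prodMk hsum
    exact this
  have hFval : F (φ0, c0) = (φ0, μt) := Prod.ext rfl (heq φ0)
  set Φ : ℝ × ℝ → ℝ × ℝ := hF.localInverse F _ _ with hΦdef
  set γ : ℝ → ℝ × ℝ := fun ψ => (ψ, μt) with hγdef
  have htend : Tendsto γ (𝓝 φ0) (𝓝 (F (φ0, c0))) := by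
    rw [hFval]
    exact (continuous_id.prodMk continuous_const).continuousAt
  have hri : ∀ᶠ ψ in 𝓝 φ0, F (Φ (γ ψ)) = γ ψ := htend.eventually hF.eventually_right_inverse
  have htend2 : Tendsto (fun ψ => (Φ (γ ψ)).2) (𝓝 φ0) (𝓝 c0) := by
    have h1 : Tendsto Φ (𝓝 (F (φ0, c0))) (𝓝 (φ0, c0)) := by
      have := hF.localInverse_continuousAt
      rwa [ContinuousAt, hF.localInverse_apply_image] at this
    exact Filter.Tendsto.comp (continuousAt_snd (p := ((φ0 : ℝ), (c0 : ℝ)))) (h1.comp htend)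
  have hpos2 : ∀ᶠ ψ in 𝓝 φ0, 0 < (Φ (γ ψ)).2 := htend2.eventually (eventually_gt_nhds hc0pos)
  -- injectivity of the equation in c
  have hinj : ∀ (φ : ℝ) (c1 c2 : ℝ), 0 < c1 → 0 < c2 →
      (∑ j ∈ Finset.range (N+1), lam j * c1 ^ (lam j / lam 0) * Real.exp (μbar j - z j * φ))
      = (∑ j ∈ Finset.range (N+1), lam j * c2 ^ (lam j / lam 0) * Real.exp (μbar j - z j * φ))
      → c1 = c2 := by
    have mono : ∀ (φ : ℝ) (c1 c2 : ℝ), 0 < c1 → c1 < c2 →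
        (∑ j ∈ Finset.range (N+1), lam j * c1 ^ (lam j / lam 0) * Real.exp (μbar j - z j * φ))
        < (∑ j ∈ Finset.range (N+1), lam j * c2 ^ (lam j / lam 0) * Real.exp (μbar j - z j * φ)) := by
      intro φ c1 c2 hc1 hlt
      refine Finset.sum_lt_sum_of_nonempty hne (fun j hj => ?_)
      have hjN := hmemN j hj
      have hrp : c1 ^ (lam j / lam 0) < c2 ^ (lam j / lam 0) :=
        Real.rpow_lt_rpow hc1.le hlt (div_pos (hl j hjN) hl0)
      exact mul_lt_mul_of_pos_right
        (mul_lt_mul_of_pos_left hrp (hl j hjN)) (Real.exp_pos _)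
    intro φ c1 c2 hc1 hc2 hsum
    rcases lt_trichotomy c1 c2 with h | h | h
    · exact absurd hsum (mono φ c1 c2 hc1 h).ne
    · exact h
    · exact absurd hsum.symm (mono φ c2 c1 hc2 h).ne
  -- c0s agrees with the local inverse
  have heqev : c0s =ᶠ[𝓝 φ0] fun ψ => (Φ (γ ψ)).2 := by
    filter_upwards [hri, hpos2] with ψ h1 h2
    have hA : (Φ (γ ψ)).1 = ψ := congrArg Prod.fst h1
    have hB : (∑ j ∈ Finset.range (N+1),
        lam j * (Φ (γ ψ)).2 ^ (lam j / lam 0) * Real.exp (μbar j - z j * (Φ (γ ψ)).1)) = μt :=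
      congrArg Prod.snd h1
    rw [hA] at hB
    exact hinj ψ (c0s ψ) _ (hpos ψ) h2 (by rw [heq ψ, hB])
  -- derivative of the local inverse composed with γ
  have hγd : HasDerivAt γ ((1 : ℝ), (0 : ℝ)) φ0 :=
    (hasDerivAt_id φ0).prodMk (hasDerivAt_const φ0 μt)
  have hΦd : HasFDerivAt Φ ((e.symm : (ℝ × ℝ) →L[ℝ] (ℝ × ℝ))) (γ φ0) := by
    have := hF.to_localInverse.hasFDerivAt
    rwa [hFval] at this
  have hcomp : HasDerivAt (fun ψ => Φ (γ ψ))
      ((e.symm : (ℝ × ℝ) →L[ℝ] (ℝ × ℝ)) ((1 : ℝ), (0 : ℝ))) φ0 :=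
    hΦd.comp_hasDerivAt φ0 hγd
  have hsnd : HasDerivAt (fun ψ => (Φ (γ ψ)).2)
      (((e.symm : (ℝ × ℝ) →L[ℝ] (ℝ × ℝ)) ((1 : ℝ), (0 : ℝ))).2) φ0 :=
    (ContinuousLinearMap.snd ℝ ℝ ℝ).hasFDerivAt.comp_hasDerivAt φ0 hcomp
  have hder : HasDerivAt c0s
      (((e.symm : (ℝ × ℝ) →L[ℝ] (ℝ × ℝ)) ((1 : ℝ), (0 : ℝ))).2) φ0 :=
    hsnd.congr_of_eventuallyEq heqev
  have hval : ((e.symm : (ℝ × ℝ) →L[ℝ] (ℝ × ℝ)) ((1 : ℝ), (0 : ℝ))).2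
      = Q⁻¹ * ((0 : ℝ) - P * 1) := rfl
  rw [hval] at hder
  -- rewrite the derivative value
  have hS2pos : 0 < ∑ j ∈ Finset.range (N+1), lam j ^ 2 *
      (c0 ^ (lam j / lam 0) * Real.exp (μbar j - z j * φ0)) := by
    refine Finset.sum_pos (fun j hj => ?_) hne
    have := hl j (hmemN j hj)
    positivity
  have hQeq : Q * (lam 0 * c0) = ∑ j ∈ Finset.range (N+1), lam j ^ 2 *
      (c0 ^ (lam j / lam 0) * Real.exp (μbar j - z j * φ0)) := by
    rw [hQdef, Finset.sum_mul]
    refine Finset.sum_congr rfl fun j hj => ?_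
    rw [Real.rpow_sub_one hc0pos.ne']
    field_simp
  have hPeq : P = -∑ j ∈ Finset.range (N+1), lam j * z j *
      (c0 ^ (lam j / lam 0) * Real.exp (μbar j - z j * φ0)) := by
    rw [hPdef, ← Finset.sum_neg_distrib]
    exact Finset.sum_congr rfl fun j hj => by ring
  have hfin : Q⁻¹ * ((0 : ℝ) - P * 1)
      = (∑ j ∈ Finset.range (N+1), lam j * z j *
          (c0 ^ (lam j / lam 0) * Real.exp (μbar j - z j * φ0))) * (lam 0 * c0) /
        (∑ j ∈ Finset.range (N+1), lam j ^ 2 *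
          (c0 ^ (lam j / lam 0) * Real.exp (μbar j - z j * φ0))) := by
    rw [← hQeq, hPeq]
    rw [mul_div_mul_right _ _ (by positivity), div_eq_inv_mul]
    ring
  rw [hfin] at hder
  exact hder
theorem stmt13
    (N : ℕ) (hN : 1 ≤ N)
    (z lam μhat : ℕ → ℝ) (μtilde0 : ℝ)
    (hz0 : z 0 = 0)
    (hzne : ∀ i, 1 ≤ i → i ≤ N → z i ≠ 0)
    (hmix : ∃ i j, 1 ≤ i ∧ i ≤ N ∧ 1 ≤ j ∧ j ≤ N ∧ z i * z j < 0)
    (hlam : ∀ i, i ≤ N → 0 < lam i)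
    (hμt : 0 < μtilde0)
    (hμhat : ∀ i, i ≤ N → 0 < μhat i)
    (μbar : ℕ → ℝ) (hμbar : ∀ i, μbar i = μhat i - lam i / lam 0 * μhat 0)
    (c0s : ℝ → ℝ) (hc0spos : ∀ φ, 0 < c0s φ)
    (hc0seq : ∀ φ : ℝ, ∑ j ∈ Finset.range (N+1),
        lam j * (c0s φ) ^ (lam j / lam 0) * Real.exp (μbar j - z j * φ) = μtilde0)
    :
    ∀ φ : ℝ,
      deriv (fun ψ : ℝ => ∑ i ∈ Finset.Icc 1 N, z i * ((c0s ψ) ^ (lam i / lam 0) * Real.exp (μbar i - z i * ψ))) φ = (∑ i ∈ Finset.Icc 1 N, z i * lam i * ((c0s φ) ^ (lam i / lam 0) * Real.exp (μbar i - z i * φ))) ^ 2 / (∑ i ∈ Finset.range (N+1), lam i ^ 2 * ((c0s φ) ^ (lam i / lam 0) * Real.exp (μbar i - z i * φ))) - ∑ i ∈ Finset.Icc 1 N, z i ^ 2 * ((c0s φ) ^ (lam i / lam 0) * Real.exp (μbar i - z i * φ)) ∧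
      (∑ i ∈ Finset.Icc 1 N, z i * lam i * ((c0s φ) ^ (lam i / lam 0) * Real.exp (μbar i - z i * φ))) ^ 2 / (∑ i ∈ Finset.range (N+1), lam i ^ 2 * ((c0s φ) ^ (lam i / lam 0) * Real.exp (μbar i - z i * φ))) - ∑ i ∈ Finset.Icc 1 N, z i ^ 2 * ((c0s φ) ^ (lam i / lam 0) * Real.exp (μbar i - z i * φ)) < 0 := by
  intro φ0
  have hl0 : 0 < lam 0 := hlam 0 (Nat.zero_le N)
  have hc0pos : 0 < c0s φ0 := hc0spos φ0
  have hmemN : ∀ j : ℕ, j ∈ Finset.range (N+1) → j ≤ N := fun j hj =>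
    Nat.lt_succ_iff.mp (Finset.mem_range.mp hj)
  have hrange : Finset.range (N+1) = insert 0 (Finset.Icc 1 N) := by
    ext x
    simp only [Finset.mem_range, Finset.mem_insert, Finset.mem_Icc, Nat.lt_succ_iff]
    omega
  have h0not : (0 : ℕ) ∉ Finset.Icc 1 N := by simp
  -- abbreviations
  set t : ℕ → ℝ := fun i => (c0s φ0) ^ (lam i / lam 0) * Real.exp (μbar i - z i * φ0) with htdef
  have htpos : ∀ i, 0 < t i := fun i => by positivity
  set S1 : ℝ := ∑ i ∈ Finset.Icc 1 N, z i * lam i * t i with hS1def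
  set S2 : ℝ := ∑ i ∈ Finset.range (N+1), lam i ^ 2 * t i with hS2def
  set Sz : ℝ := ∑ i ∈ Finset.Icc 1 N, z i ^ 2 * t i with hSzdef
  have hS2pos : 0 < S2 := by
    refine Finset.sum_pos (fun j hj => ?_) ⟨0, by simp⟩
    have := hlam j (hmemN j hj)
    positivity
  -- derivative of c0s
  have hS1' : (∑ j ∈ Finset.range (N+1), lam j * z j * t j) = S1 := by
    rw [hrange, Finset.sum_insert h0not, hz0, hS1def]
    simp only [mul_zero, zero_mul, zero_add]
    exact Finset.sum_congr rfl fun j hj => by ring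
  have hcder : HasDerivAt c0s (S1 * (lam 0 * c0s φ0) / S2) φ0 := by
    have := aux13 N z lam μbar μtilde0 hlam c0s hc0spos hc0seq φ0
    rwa [hS1'] at this
  -- derivative of f*
  set m : ℝ := S1 * (lam 0 * c0s φ0) / S2 with hmdef
  have hfd : HasDerivAt
      (fun ψ : ℝ => ∑ i ∈ Finset.Icc 1 N,
        z i * ((c0s ψ) ^ (lam i / lam 0) * Real.exp (μbar i - z i * ψ)))
      (∑ i ∈ Finset.Icc 1 N,
        z i * ((m * (lam i / lam 0) * (c0s φ0) ^ (lam i / lam 0 - 1)) *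
            Real.exp (μbar i - z i * φ0)
          + (c0s φ0) ^ (lam i / lam 0) * (Real.exp (μbar i - z i * φ0) * -(z i * 1)))) φ0 := by
    refine HasDerivAt.fun_sum (fun i hi => ?_)
    have hA : HasDerivAt (fun ψ => (c0s ψ) ^ (lam i / lam 0))
        (m * (lam i / lam 0) * (c0s φ0) ^ (lam i / lam 0 - 1)) φ0 :=
      hcder.rpow_const (Or.inl hc0pos.ne')
    have hB : HasDerivAt (fun ψ : ℝ => Real.exp (μbar i - z i * ψ))
        (Real.exp (μbar i - z i * φ0) * -(z i * 1)) φ0 :=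
      (((hasDerivAt_id φ0).const_mul (z i)).const_sub (μbar i)).exp
    exact (hA.mul hB).const_mul (z i)
  have hderiv := hfd.deriv
  -- simplify the derivative value
  have hD0 : (∑ i ∈ Finset.Icc 1 N,
        z i * ((m * (lam i / lam 0) * (c0s φ0) ^ (lam i / lam 0 - 1)) *
            Real.exp (μbar i - z i * φ0)
          + (c0s φ0) ^ (lam i / lam 0) * (Real.exp (μbar i - z i * φ0) * -(z i * 1))))
      = m / (lam 0 * c0s φ0) * S1 - Sz := by
    rw [hS1def, hSzdef, Finset.mul_sum, ← Finset.sum_sub_distrib]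
    refine Finset.sum_congr rfl fun i hi => ?_
    rw [Real.rpow_sub_one hc0pos.ne']
    have h1 : lam 0 ≠ 0 := hl0.ne'
    have h2 : c0s φ0 ≠ 0 := hc0pos.ne'
    field_simp [htdef]
    ring
  have hmval : m / (lam 0 * c0s φ0) * S1 = S1 ^ 2 / S2 := by
    rw [hmdef]
    have h1 : lam 0 ≠ 0 := hl0.ne'
    have h2 : c0s φ0 ≠ 0 := hc0pos.ne'
    have h3 : S2 ≠ 0 := hS2pos.ne'
    field_simp
  rw [hD0, hmval] at hderiv
  refine ⟨hderiv, ?_⟩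
  -- negativity via Cauchy-Schwarz
  have hSzpos : 0 < Sz := by
    refine Finset.sum_pos' (fun i hi => by positivity) ⟨1, Finset.mem_Icc.mpr ⟨le_refl 1, hN⟩, ?_⟩
    have hz1 : z 1 ≠ 0 := hzne 1 (le_refl 1) hN
    positivity
  have hCS : S1 ^ 2 ≤ Sz * (∑ i ∈ Finset.Icc 1 N, lam i ^ 2 * t i) := by
    have hrw : S1 = ∑ i ∈ Finset.Icc 1 N,
        (z i * Real.sqrt (t i)) * (lam i * Real.sqrt (t i)) := by
      rw [hS1def]
      refine Finset.sum_congr rfl fun i hi => ?_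
      have h := Real.mul_self_sqrt (htpos i).le
      linear_combination (-(z i * lam i)) * h
    have hCS0 := Finset.sum_mul_sq_le_sq_mul_sq (Finset.Icc 1 N)
      (fun i => z i * Real.sqrt (t i)) (fun i => lam i * Real.sqrt (t i))
    rw [← hrw] at hCS0
    have hz2 : (∑ i ∈ Finset.Icc 1 N, (z i * Real.sqrt (t i)) ^ 2) = Sz := by
      rw [hSzdef]
      refine Finset.sum_congr rfl fun i hi => ?_
      rw [mul_pow, Real.sq_sqrt (htpos i).le]
    have hl2 : (∑ i ∈ Finset.Icc 1 N, (lam i * Real.sqrt (t i)) ^ 2)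
        = ∑ i ∈ Finset.Icc 1 N, lam i ^ 2 * t i := by
      refine Finset.sum_congr rfl fun i hi => ?_
      rw [mul_pow, Real.sq_sqrt (htpos i).le]
    rwa [hz2, hl2] at hCS0
  have hlt : (∑ i ∈ Finset.Icc 1 N, lam i ^ 2 * t i) < S2 := by
    rw [hS2def, hrange, Finset.sum_insert h0not]
    have : 0 < lam 0 ^ 2 * t 0 := by positivity
    linarith
  have hfinal : S1 ^ 2 < Sz * S2 :=
    lt_of_le_of_lt hCS (by exact mul_lt_mul_of_pos_left hlt hSzpos)
  have : S1 ^ 2 / S2 < Sz := (div_lt_iff₀ hS2pos).mpr (by linarith [hfinal])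
  linarith
end
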